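/- arXiv:2405.11728 — 5 statements merged into one kernel-verified Lean document; each statement's English description precedes it below -/
import Mathlib

section
/- Fix p ∈ (0,1] and a positive integer k. Let G_1, …, G_k be independent geometric random variables with parameter p. Then for all t > 0, P(Σ_{i=1}^k G_i > k/p + t·√(k/p³)) ≤ exp(−t²/(2p + 2t√(p/k))). -/
set_option maxHeartbeats 1000000

open MeasureTheory ProbabilityTheory Real
open scoped ENNReal

lemma lemB (z : ℝ) (h0 : 0 ≤ z) (h1 : z < 1) :
    Real.exp (-(z + z ^ 2 / (2 * (1 - z)))) ≤ 1 - z := by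
  have hz1 : (0:ℝ) < 1 - z := by linarith
  have hu0 : 0 ≤ z + z ^ 2 / (2 * (1 - z)) := by positivity
  generalize hu : z + z ^ 2 / (2 * (1 - z)) = u at *
  have hu' : u * (2 * (1 - z)) = z * (2 - z) := by
    rw [← hu]; field_simp; ring
  have hq := Real.quadratic_le_exp_of_nonneg hu0
  have hpos : (0:ℝ) < 1 + u + u ^ 2 / 2 := by positivity
  have h3 : 4 * u ^ 2 * (1 - z) ^ 2 = z ^ 2 * (2 - z) ^ 2 := by
    linear_combination (u * (2 * (1 - z)) + z * (2 - z)) * hu'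
  have h4 : z ^ 2 ≤ (1 - z) * u ^ 2 := by
    nlinarith [h3, sq_nonneg (z * z), mul_pos hz1 hz1]
  have hkey : 1 ≤ (1 - z) * (1 + u + u ^ 2 / 2) := by nlinarith [h4, hu']
  have h2 : Real.exp (-u) ≤ (1 + u + u ^ 2 / 2)⁻¹ := by
    rw [Real.exp_neg]
    exact inv_anti₀ hpos hq
  refine h2.trans ?_
  rw [inv_le_iff_one_le_mul₀' hpos]
  linarith [hkey]

-- (1-p) * exp s < 1 for 0 < s < p ≤ 1
lemma lemC (p s : ℝ) (hp1 : p ≤ 1) (h0s : 0 < s) (hsp : s < p) :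
    (1 - p) * Real.exp s < 1 := by
  have hs1 : s < 1 := lt_of_lt_of_le hsp hp1
  have h1s : (0:ℝ) < 1 - s := by linarith
  have hes : Real.exp s ≤ 1 / (1 - s) := by
    have h1 : 1 - s ≤ Real.exp (-s) := by
      have := Real.add_one_le_exp (-s); linarith
    calc Real.exp s = 1 / Real.exp (-s) := by rw [Real.exp_neg]; field_simp
    _ ≤ 1 / (1 - s) := one_div_le_one_div_of_le h1s h1
  have hq0 : 0 ≤ 1 - p := by linarith
  calc (1 - p) * Real.exp s ≤ (1 - p) * (1 / (1 - s)) := by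
        exact mul_le_mul_of_nonneg_left hes hq0
  _ = (1 - p) / (1 - s) := by ring
  _ < 1 := by rw [div_lt_one h1s]; linarith

lemma lemA (p s : ℝ) (hp0 : 0 < p) (hp1 : p ≤ 1) (h0s : 0 < s) (hsp : s < p) :
    p * Real.exp s / (1 - (1 - p) * Real.exp s) ≤
      Real.exp (s / p + s ^ 2 / (2 * p * (p - s))) := by
  have hs1 : s < 1 := lt_of_lt_of_le hsp hp1
  have h1s : (0:ℝ) < 1 - s := by linarith
  have hps : (0:ℝ) < p - s := by linarith
  have hq0 : (0:ℝ) ≤ 1 - p := by linarith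
  have hes1 : 1 ≤ Real.exp s := Real.one_le_exp h0s.le
  have hes : Real.exp s ≤ 1 / (1 - s) := by
    have h1 : 1 - s ≤ Real.exp (-s) := by
      have := Real.add_one_le_exp (-s); linarith
    calc Real.exp s = 1 / Real.exp (-s) := by rw [Real.exp_neg]; field_simp
    _ ≤ 1 / (1 - s) := one_div_le_one_div_of_le h1s h1
  set z : ℝ := (1 - p) * (Real.exp s - 1) / p with hzdef
  have hz0 : 0 ≤ z := by
    apply div_nonneg (mul_nonneg hq0 (by linarith)) hp0.le
  have hzb : z ≤ (1 - p) * s / (p * (1 - s)) := by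
    rw [hzdef, div_le_div_iff₀ hp0 (by positivity)]
    have he2 : Real.exp s - 1 ≤ s / (1 - s) := by
      rw [le_div_iff₀ h1s]
      have h5 : Real.exp s * (1 - s) ≤ 1 := by
        have := (le_div_iff₀ h1s).mp hes; linarith
      nlinarith [h5]
    calc (1 - p) * (Real.exp s - 1) * (p * (1 - s))
        = p * (1 - s) * ((1 - p) * (Real.exp s - 1)) := by ring
      _ ≤ p * (1 - s) * ((1 - p) * (s / (1 - s))) := by
          apply mul_le_mul_of_nonneg_left (mul_le_mul_of_nonneg_left ?_ hq0) (by positivity)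
          exact he2
      _ = (1 - p) * s * p := by field_simp
  have hzh1 : (1 - p) * s / (p * (1 - s)) < 1 := by
    rw [div_lt_one (by positivity)]; nlinarith
  have hz1 : z < 1 := lt_of_le_of_lt hzb hzh1
  have hden : 1 - (1 - p) * Real.exp s = p * (1 - z) := by
    rw [hzdef]; field_simp; ring
  have hdpos : (0:ℝ) < 1 - (1 - p) * Real.exp s := by
    rw [hden]; exact mul_pos hp0 (by linarith)
  -- step 1: LHS = exp s / (1 - z) ≤ exp (s + z + z^2/(2(1-z)))
  have hstep1 : p * Real.exp s / (1 - (1 - p) * Real.exp s) ≤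
      Real.exp (s + (z + z ^ 2 / (2 * (1 - z)))) := by
    rw [hden, Real.exp_add]
    have hb := lemB z hz0 hz1
    have h1z : (0:ℝ) < 1 - z := by linarith
    rw [div_le_iff₀ (by positivity)]
    have : Real.exp (-(z + z ^ 2 / (2 * (1 - z)))) * Real.exp (z + z ^ 2 / (2 * (1 - z))) = 1 := by
      rw [← Real.exp_add]; ring_nf
      exact Real.exp_zero
    calc p * Real.exp s = Real.exp s * p * 1 := by ring
      _ ≤ Real.exp s * p * (Real.exp (z + z ^ 2 / (2 * (1 - z))) * (1 - z)) := by
          apply mul_le_mul_of_nonneg_left ?_ (by positivity)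
          nlinarith [hb, Real.exp_pos (z + z ^ 2 / (2 * (1 - z))), this]
      _ = Real.exp s * Real.exp (z + z ^ 2 / (2 * (1 - z))) * (p * (1 - z)) := by ring
  -- step 2: monotonicity in z, with zh := (1-p)*s/(p*(1-s))
  set zh : ℝ := (1 - p) * s / (p * (1 - s)) with hzhdef
  have hzh0 : 0 ≤ zh := by positivity
  have hmono : z + z ^ 2 / (2 * (1 - z)) ≤ zh + zh ^ 2 / (2 * (1 - zh)) := by
    have h1z : (0:ℝ) < 1 - z := by linarith
    have h1zh : (0:ℝ) < 1 - zh := by linarith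
    have : z ^ 2 / (2 * (1 - z)) ≤ zh ^ 2 / (2 * (1 - zh)) := by
      apply div_le_div₀ (by positivity) (pow_le_pow_left₀ hz0 hzb 2) (by positivity) (by linarith)
    linarith [hzb, this]
  -- step 3: rational bound
  have hrat : zh + zh ^ 2 / (2 * (1 - zh)) ≤
      s * (1 - p) / p + s ^ 2 / (2 * p * (p - s)) := by
    have h1zh : 1 - zh = (p - s) / (p * (1 - s)) := by
      rw [hzhdef]; field_simp; ring
    rw [← sub_nonneg]
    have hkey : s * (1 - p) / p + s ^ 2 / (2 * p * (p - s)) - (zh + zh ^ 2 / (2 * (1 - zh)))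
        = s ^ 2 * (p ^ 2 - 2 * p * s + s) / (2 * p * (1 - s) * (p - s)) := by
      rw [h1zh, hzhdef]; field_simp; ring
    rw [hkey]
    apply div_nonneg ?_ (by positivity)
    apply mul_nonneg (sq_nonneg s)
    nlinarith [sq_nonneg (p - s), mul_nonneg h0s.le (by linarith : (0:ℝ) ≤ 1 - s)]
  refine hstep1.trans (Real.exp_le_exp.mpr ?_)
  have : s + s * (1 - p) / p = s / p := by field_simp; ring
  linarith [hmono, hrat, this]

lemma lemD {Ω : Type*} [MeasurableSpace Ω] (μ : Measure Ω) [IsProbabilityMeasure μ]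
    (p : ℝ) (hp0 : 0 < p) (hp1 : p ≤ 1)
    (G : Ω → ℕ) (hG : Measurable G)
    (hgeom : ∀ j : ℕ, 1 ≤ j → μ {ω | G ω = j} = ENNReal.ofReal ((1 - p) ^ (j - 1) * p))
    (s : ℝ) (hc : (1 - p) * Real.exp s < 1) :
    Integrable (fun ω => Real.exp (s * (G ω : ℝ))) μ ∧
      ∫ ω, Real.exp (s * (G ω : ℝ)) ∂μ = p * Real.exp s / (1 - (1 - p) * Real.exp s) := by
  have hq0 : (0:ℝ) ≤ 1 - p := by linarith
  have hc0 : (0:ℝ) ≤ (1 - p) * Real.exp s := by positivity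
  have hA : ∀ j : ℕ, MeasurableSet {ω | G ω = j} := fun j => hG (measurableSet_singleton j)
  have hAj : ∀ j : ℕ, μ {ω | G ω = j + 1} = ENNReal.ofReal ((1 - p) ^ j * p) := by
    intro j; simpa using hgeom (j + 1) (by omega)
  have hsum : ∑' j : ℕ, ENNReal.ofReal ((1 - p) ^ j * p) = 1 := by
    have he : ∀ j : ℕ, ENNReal.ofReal ((1 - p) ^ j * p)
        = ENNReal.ofReal (1 - p) ^ j * ENNReal.ofReal p := by
      intro j
      rw [ENNReal.ofReal_mul (by positivity), ENNReal.ofReal_pow hq0]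
    simp_rw [he]
    rw [ENNReal.tsum_mul_right, ENNReal.tsum_geometric]
    have h1 : (1 : ℝ≥0∞) - ENNReal.ofReal (1 - p) = ENNReal.ofReal p := by
      rw [← ENNReal.ofReal_one, ← ENNReal.ofReal_sub _ hq0]
      norm_num
    rw [h1]
    exact ENNReal.inv_mul_cancel (ENNReal.ofReal_pos.mpr hp0).ne' ENNReal.ofReal_ne_top
  have hdisj : Pairwise (Function.onFun Disjoint fun j : ℕ => {ω | G ω = j}) := by
    intro i j hij
    simp only [Function.onFun, Set.disjoint_left, Set.mem_setOf_eq]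
    intro ω h h'
    exact hij (h ▸ h')
  have htot : ∑' j : ℕ, μ {ω | G ω = j} = 1 := by
    rw [← measure_iUnion hdisj hA]
    have : (⋃ j : ℕ, {ω | G ω = j}) = Set.univ := by
      ext ω; simp
    rw [this, measure_univ]
  have h0 : μ {ω | G ω = 0} = 0 := by
    have h2 : ∑' j : ℕ, μ {ω | G ω = j}
        = μ {ω | G ω = 0} + ∑' j : ℕ, μ {ω | G ω = j + 1} :=
      tsum_eq_zero_add' ENNReal.summable
    simp_rw [hAj, hsum, htot] at h2
    have h3 : (1:ℝ≥0∞) + μ {ω | G ω = 0} = 1 + 0 := by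
      rw [add_comm] at h2; rw [← h2]; ring
    exact (ENNReal.add_right_inj ENNReal.one_ne_top).mp h3
  set c : ℝ := (1 - p) * Real.exp s with hcdef
  have hc1 : (0:ℝ) < 1 - c := by linarith
  have hFmeas : Measurable fun ω => Real.exp (s * (G ω : ℝ)) :=
    (measurable_from_nat (f := fun n : ℕ => Real.exp (s * (n : ℝ)))).comp hG
  have hint : ∫⁻ ω, ENNReal.ofReal (Real.exp (s * (G ω : ℝ))) ∂μ
      = ENNReal.ofReal (p * Real.exp s) * (ENNReal.ofReal (1 - c))⁻¹ := by
    have hmap : ∫⁻ ω, ENNReal.ofReal (Real.exp (s * (G ω : ℝ))) ∂μ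
        = ∫⁻ n, ENNReal.ofReal (Real.exp (s * (n : ℝ))) ∂(μ.map G) :=
      (lintegral_map (f := fun n : ℕ => ENNReal.ofReal (Real.exp (s * (n : ℝ)))) measurable_from_nat hG).symm
    rw [hmap, lintegral_countable']
    have hmapj : ∀ n : ℕ, (μ.map G) {n} = μ {ω | G ω = n} := by
      intro n
      rw [Measure.map_apply hG (measurableSet_singleton n)]
      congr 1
    simp_rw [hmapj]
    rw [tsum_eq_zero_add' ENNReal.summable]
    simp only [h0, mul_zero, zero_add]
    have hterm : ∀ j : ℕ, ENNReal.ofReal (Real.exp (s * ((j + 1 : ℕ) : ℝ))) * μ {ω | G ω = j + 1}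
        = ENNReal.ofReal (p * Real.exp s) * ENNReal.ofReal c ^ j := by
      intro j
      rw [hAj j]
      rw [← ENNReal.ofReal_pow hc0, ← ENNReal.ofReal_mul (by positivity),
        ← ENNReal.ofReal_mul (by positivity)]
      congr 1
      push_cast
      rw [show s * ((j : ℝ) + 1) = s * j + s by ring, Real.exp_add, hcdef]
      rw [mul_pow, ← Real.exp_nat_mul]
      ring_nf
    simp_rw [hterm]
    rw [ENNReal.tsum_mul_left, ENNReal.tsum_geometric]
    congr 1
    rw [← ENNReal.ofReal_one, ← ENNReal.ofReal_sub _ (by positivity : (0:ℝ) ≤ c)]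
  have hfin : ENNReal.ofReal (p * Real.exp s) * (ENNReal.ofReal (1 - c))⁻¹ < ⊤ :=
    ENNReal.mul_lt_top ENNReal.ofReal_lt_top
      (ENNReal.inv_lt_top.mpr (ENNReal.ofReal_pos.mpr hc1))
  have hnn : 0 ≤ᵐ[μ] fun ω => Real.exp (s * (G ω : ℝ)) :=
    Filter.Eventually.of_forall fun ω => (Real.exp_pos _).le
  have hInt : Integrable (fun ω => Real.exp (s * (G ω : ℝ))) μ := by
    refine ⟨hFmeas.aestronglyMeasurable, ?_⟩
    rw [hasFiniteIntegral_iff_ofReal hnn, hint]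
    exact hfin
  refine ⟨hInt, ?_⟩
  rw [integral_eq_lintegral_of_nonneg_ae hnn hFmeas.aestronglyMeasurable, hint,
    ENNReal.toReal_mul, ENNReal.toReal_inv, ENNReal.toReal_ofReal (by positivity),
    ENNReal.toReal_ofReal hc1.le]
  rw [div_eq_mul_inv]

/-- Chernoff-type upper tail bound for a sum of `k` independent geometric random variables
with parameter `p` (taking values in `{1, 2, 3, …}` with `P(G = j) = (1-p)^(j-1) p`). -/
theorem thm3 (p : ℝ) (hp0 : 0 < p) (hp1 : p ≤ 1) (k : ℕ) (hk : 1 ≤ k)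
    {Ω : Type*} [MeasurableSpace Ω] (μ : Measure Ω) [IsProbabilityMeasure μ]
    (G : Fin k → Ω → ℕ) (hmeas : ∀ i, Measurable (G i))
    (hindep : iIndepFun G μ)
    (hgeom : ∀ i : Fin k, ∀ j : ℕ, 1 ≤ j →
      μ {ω | G i ω = j} = ENNReal.ofReal ((1 - p) ^ (j - 1) * p))
    (t : ℝ) (ht : 0 < t) :
    μ {ω | (k : ℝ) / p + t * Real.sqrt (k / p ^ 3) < ∑ i, (G i ω : ℝ)} ≤
      ENNReal.ofReal (Real.exp (-(t ^ 2) / (2 * p + 2 * t * Real.sqrt (p / k)))) := by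
  have hK0 : (0:ℝ) < k := by exact_mod_cast Nat.pos_of_ne_zero (by omega)
  set K : ℝ := (k : ℝ) with hKdef
  set r : ℝ := Real.sqrt (K / p ^ 3) with hrdef
  have hr2 : r ^ 2 = K / p ^ 3 := Real.sq_sqrt (by positivity)
  have hr0 : 0 < r := Real.sqrt_pos.mpr (by positivity)
  have hKr : K = p ^ 3 * r ^ 2 := by rw [hr2]; field_simp
  set x : ℝ := t * r with hxdef
  have hx0 : 0 < x := mul_pos ht hr0
  have hden0 : (0:ℝ) < K + p * x := by positivity
  set s : ℝ := p ^ 2 * x / (K + p * x) with hsdef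
  have hs0 : 0 < s := by positivity
  have hsp : s < p := by
    rw [hsdef, div_lt_iff₀ hden0]; nlinarith
  have hc := lemC p s hp1 hs0 hsp
  have hc1 : (0:ℝ) < 1 - (1 - p) * Real.exp s := by linarith
  set X : Fin k → Ω → ℝ := fun i ω => ((G i ω : ℕ) : ℝ) with hXdef
  have hXmeas : ∀ i, Measurable (X i) := fun i =>
    (measurable_from_nat (f := (Nat.cast : ℕ → ℝ))).comp (hmeas i)
  have hXindep : iIndepFun X μ :=
    hindep.comp (fun _ => (Nat.cast : ℕ → ℝ)) fun _ => measurable_from_nat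
  have hD : ∀ i, Integrable (fun ω => Real.exp (s * X i ω)) μ ∧
      ∫ ω, Real.exp (s * X i ω) ∂μ = p * Real.exp s / (1 - (1 - p) * Real.exp s) :=
    fun i => lemD μ p hp0 hp1 (G i) (hmeas i) (hgeom i) s hc
  set a : ℝ := K / p + x with hadef
  have hIntS : Integrable (fun ω => Real.exp (s * (∑ i, X i) ω)) μ :=
    hXindep.integrable_exp_mul_sum hXmeas fun i _ => (hD i).1
  have chern := measure_ge_le_exp_mul_mgf (X := ∑ i, X i) (μ := μ) a hs0.le hIntS
  set M : ℝ := p * Real.exp s / (1 - (1 - p) * Real.exp s) with hMdef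
  have hM0 : 0 ≤ M := by rw [hMdef]; positivity
  have hmgf : mgf (∑ i, X i) μ s = M ^ k := by
    rw [hXindep.mgf_sum hXmeas Finset.univ]
    have : ∀ i, mgf (X i) μ s = M := fun i => (hD i).2
    simp [this, Finset.prod_const]
  set B : ℝ := s / p + s ^ 2 / (2 * p * (p - s)) with hBdef
  have hMB : M ≤ Real.exp B := lemA p s hp0 hp1 hs0 hsp
  have hMk : M ^ k ≤ Real.exp (K * B) := by
    calc M ^ k ≤ Real.exp B ^ k := pow_le_pow_left₀ hM0 hMB k
    _ = Real.exp (K * B) := by rw [← Real.exp_nat_mul]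
  have hbound : (μ {ω | a ≤ (∑ i, X i) ω}).toReal ≤ Real.exp (-s * a + K * B) := by
    rw [Real.exp_add]
    calc (μ {ω | a ≤ (∑ i, X i) ω}).toReal ≤ Real.exp (-s * a) * mgf (∑ i, X i) μ s := chern
    _ ≤ Real.exp (-s * a) * Real.exp (K * B) := by
        rw [hmgf]; exact mul_le_mul_of_nonneg_left hMk (Real.exp_pos _).le
  -- exponent identity
  have hsq : Real.sqrt (p / K) = 1 / (p * r) := by
    have h1 : p / K = (1 / (p * r)) ^ 2 := by
      rw [hKr]; field_simp
    rw [h1, Real.sqrt_sq (by positivity)]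
  have hexp : -s * a + K * B = -(t ^ 2) / (2 * p + 2 * t * Real.sqrt (p / K)) := by
    rw [hsq, hBdef, hsdef, hadef, hxdef, hKr]
    have hps : (0:ℝ) < p ^ 3 * r ^ 2 + p * (t * r) := by positivity
    have h2 : p - p ^ 2 * (t * r) / (p ^ 3 * r ^ 2 + p * (t * r)) =
        p * (p ^ 3 * r ^ 2) / (p ^ 3 * r ^ 2 + p * (t * r)) := by
      field_simp; ring
    rw [h2]
    have h3 : (0:ℝ) < 2 * p + 2 * t * (1 / (p * r)) := by positivity
    field_simp
    ring
  -- final chaining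
  have hsub : {ω | (k : ℝ) / p + t * Real.sqrt ((k:ℝ) / p ^ 3) < ∑ i, ((G i ω : ℕ) : ℝ)} ⊆
      {ω | a ≤ (∑ i, X i) ω} := by
    intro ω hω
    simp only [Set.mem_setOf_eq] at hω ⊢
    rw [Finset.sum_apply]
    exact le_of_lt hω
  refine le_trans (measure_mono hsub) ?_
  rw [ENNReal.le_ofReal_iff_toReal_le (measure_ne_top μ _) (Real.exp_pos _).le]
  calc (μ {ω | a ≤ (∑ i, X i) ω}).toReal ≤ Real.exp (-s * a + K * B) := hbound
  _ = Real.exp (-(t ^ 2) / (2 * p + 2 * t * Real.sqrt (p / K))) := by rw [hexp]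
end

section
/- Fix p ∈ (0,1] and a positive integer k. Let G_1, …, G_k be independent geometric random variables with parameter p. Then for all t > 0, P(Σ_{i=1}^k G_i < k/p − t·√(k/p³)) ≤ exp(−t²/(2p − t√(p/k))). -/
open MeasureTheory ProbabilityTheory

lemma thm4_log_ineq {x : ℝ} (hx0 : 0 ≤ x) (hx1 : x < 1) :
    Real.log (1 - x) ≤ -(2 * x / (2 - x)) := by
  set f : ℝ → ℝ := fun y => 2 * y / (2 - y) + Real.log (1 - y) with hf
  have hder : ∀ y : ℝ, 0 < y → y < 1 → HasDerivAt f
      ((2 * (2 - y) - 2 * y * (-1)) / (2 - y) ^ 2 + (1 - y)⁻¹ * (-1)) y := by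
    intro y hy0 hy1
    have h2 : (2 : ℝ) - y ≠ 0 := by nlinarith
    have h1 : (1 : ℝ) - y ≠ 0 := by nlinarith
    apply HasDerivAt.add
    · have hc : HasDerivAt (fun z : ℝ => 2 * z) 2 y := by
        simpa using (hasDerivAt_id y).const_mul (2 : ℝ)
      have hdd : HasDerivAt (fun z : ℝ => 2 - z) (-1) y := by
        simpa using (hasDerivAt_id y).const_sub (2 : ℝ)
      exact hc.div hdd h2
    · have hdd : HasDerivAt (fun z : ℝ => 1 - z) (-1) y := by
        simpa using (hasDerivAt_id y).const_sub (1 : ℝ)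
      exact (Real.hasDerivAt_log h1).comp y hdd
  have key : AntitoneOn f (Set.Ico 0 1) := by
    apply antitoneOn_of_deriv_nonpos (convex_Ico 0 1)
    · apply ContinuousOn.add
      · exact (continuousOn_const.mul continuousOn_id).div
          (continuousOn_const.sub continuousOn_id)
          (fun y hy => by
            simp only [Set.mem_Ico, id] at hy ⊢
            intro h; nlinarith [hy.2])
      · apply ContinuousOn.log
        · exact continuousOn_const.sub continuousOn_id
        · intro y hy
          simp only [Set.mem_Ico, id] at hy ⊢
          intro h; nlinarith [hy.2]
    · intro y hy
      rw [interior_Ico] at hy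
      exact ((hder y hy.1 hy.2).differentiableAt).differentiableWithinAt
    · intro y hy
      rw [interior_Ico] at hy
      obtain ⟨hy0, hy1⟩ := hy
      rw [(hder y hy0 hy1).deriv]
      have h2y : (0:ℝ) < 2 - y := by nlinarith
      have hpos2 : (0:ℝ) < (2 - y) ^ 2 := by positivity
      have hpos1 : (0:ℝ) < 1 - y := by nlinarith
      have hnum : (2 * (2 - y) - 2 * y * (-1)) = 4 := by ring
      rw [hnum]
      have hle : 4 / (2 - y) ^ 2 ≤ 1 / (1 - y) := by
        rw [div_le_div_iff₀ hpos2 hpos1]; nlinarith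
      rw [one_div] at hle
      nlinarith [hle]
  have h0m : (0:ℝ) ∈ Set.Ico (0:ℝ) 1 := by constructor <;> norm_num
  have hxm : x ∈ Set.Ico (0:ℝ) 1 := ⟨hx0, hx1⟩
  have := key h0m hxm hx0
  simp only [hf] at this
  rw [mul_zero, zero_div, sub_zero, Real.log_one, zero_add] at this
  linarith

private lemma thm4_alg {p x l e : ℝ} (hstep : x * (1 + l) ≤ 1)
    (h1e : 0 ≤ 1 - e) (hleq : x * (l * (1 - e)) = x * (p * e)) :
    p * x ≤ (1 - e) * (1 - (1 - p) * x) := by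
  have h := mul_le_mul_of_nonneg_right hstep h1e
  rw [one_mul] at h
  nlinarith [h, hleq]

/-- Chernoff-type lower tail bound for a sum of `k` independent geometric random variables
with parameter `p` (taking values in `{1, 2, 3, …}` with `P(G = j) = (1-p)^(j-1) p`). -/
theorem thm4 (p : ℝ) (hp0 : 0 < p) (hp1 : p ≤ 1) (k : ℕ) (hk : 1 ≤ k)
    {Ω : Type*} [MeasurableSpace Ω] (μ : Measure Ω) [IsProbabilityMeasure μ]
    (G : Fin k → Ω → ℕ) (hmeas : ∀ i, Measurable (G i))
    (hindep : iIndepFun G μ)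
    (hgeom : ∀ i : Fin k, ∀ j : ℕ, 1 ≤ j →
      μ {ω | G i ω = j} = ENNReal.ofReal ((1 - p) ^ (j - 1) * p))
    (t : ℝ) (ht : 0 < t) :
    μ {ω | ∑ i, (G i ω : ℝ) < (k : ℝ) / p - t * Real.sqrt (k / p ^ 3)} ≤
      ENNReal.ofReal (Real.exp (-(t ^ 2) / (2 * p - t * Real.sqrt (p / k)))) := by
  have hkpos : (0:ℝ) < (k:ℝ) := by exact_mod_cast hk
  have hkp : (0:ℝ) < (k:ℝ) * p := by positivity
  have hsq : (0:ℝ) < Real.sqrt ((k:ℝ) * p) := Real.sqrt_pos.mpr hkp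
  have hq0 : (0:ℝ) ≤ 1 - p := by linarith
  have hq1 : 1 - p < 1 := by linarith
  -- sqrt identities
  have Id1 : Real.sqrt ((k:ℝ) * p) * Real.sqrt ((k:ℝ) / p ^ 3) = (k:ℝ) / p := by
    rw [← Real.sqrt_mul hkp.le]
    have h : (k:ℝ) * p * ((k:ℝ) / p ^ 3) = ((k:ℝ) / p) ^ 2 := by
      field_simp
    rw [h, Real.sqrt_sq (by positivity)]
  have Id2 : Real.sqrt ((k:ℝ) * p) * Real.sqrt (p / (k:ℝ)) = p := by
    rw [← Real.sqrt_mul hkp.le]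
    have h : (k:ℝ) * p * (p / (k:ℝ)) = p ^ 2 := by field_simp
    rw [h, Real.sqrt_sq hp0.le]
  -- preliminary distribution facts
  have hsets : ∀ (i : Fin k) (n : ℕ), MeasurableSet {ω | G i ω = n} :=
    fun i n => (hmeas i) (measurableSet_singleton n)
  have hsummable : Summable (fun n : ℕ => (1 - p) ^ n * p) :=
    (summable_geometric_of_lt_one hq0 hq1).mul_right p
  have hsum_geo : ∑' n : ℕ, (1 - p) ^ n * p = 1 := by
    rw [tsum_mul_right, tsum_geometric_of_lt_one hq0 hq1]
    field_simp
    rw [sub_sub_cancel, div_self hp0.ne']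
  have hzero : ∀ i, μ {ω | G i ω = 0} = 0 := by
    intro i
    have hU : MeasurableSet (⋃ n : ℕ, {ω | G i ω = n + 1}) :=
      MeasurableSet.iUnion fun n => hsets i (n + 1)
    have hdisj : Pairwise (Function.onFun Disjoint fun n : ℕ => {ω | G i ω = n + 1}) := by
      intro m n hmn
      simp only [Function.onFun, Set.disjoint_left]
      intro ω h1 h2
      simp only [Set.mem_setOf_eq] at h1 h2
      omega
    have hμU : μ (⋃ n : ℕ, {ω | G i ω = n + 1}) = 1 := by
      rw [measure_iUnion hdisj fun n => hsets i (n + 1)]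
      have heq : ∀ n : ℕ, μ {ω | G i ω = n + 1} = ENNReal.ofReal ((1 - p) ^ n * p) := by
        intro n
        rw [hgeom i (n + 1) (Nat.le_add_left 1 n)]
        simp
      rw [tsum_congr heq, ← ENNReal.ofReal_tsum_of_nonneg (fun n => by positivity) hsummable,
        hsum_geo, ENNReal.ofReal_one]
    have hcompl : μ (⋃ n : ℕ, {ω | G i ω = n + 1})ᶜ = 0 := by
      rw [measure_compl hU (measure_ne_top μ _), measure_univ, hμU, tsub_self]
    refine measure_mono_null ?_ hcompl
    intro ω hω
    simp only [Set.mem_setOf_eq] at hω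
    simp only [Set.mem_compl_iff, Set.mem_iUnion, Set.mem_setOf_eq, not_exists]
    omega
  have hae : ∀ᵐ ω ∂μ, ∀ i, 1 ≤ G i ω := by
    rw [ae_all_iff]
    intro i
    rw [ae_iff]
    refine measure_mono_null ?_ (hzero i)
    intro ω hω
    simp only [Set.mem_setOf_eq, not_le] at hω ⊢
    omega
  have hSk : ∀ᵐ ω ∂μ, (k:ℝ) ≤ ∑ i, (G i ω : ℝ) := by
    filter_upwards [hae] with ω hω
    calc (k:ℝ) = ∑ _i : Fin k, (1:ℝ) := by simp
    _ ≤ ∑ i, (G i ω : ℝ) := Finset.sum_le_sum fun i _ => by exact_mod_cast hω i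
  by_cases hcase : Real.sqrt ((k:ℝ) * p) * (1 - p) ≤ t
  · -- trivial case: the event is a.s. empty
    have hthr : (k:ℝ) / p - t * Real.sqrt ((k:ℝ) / p ^ 3) ≤ (k:ℝ) := by
      have h1 : Real.sqrt ((k:ℝ) * p) * (1 - p) * Real.sqrt ((k:ℝ) / p ^ 3)
          ≤ t * Real.sqrt ((k:ℝ) / p ^ 3) :=
        mul_le_mul_of_nonneg_right hcase (Real.sqrt_nonneg _)
      have h2 : Real.sqrt ((k:ℝ) * p) * (1 - p) * Real.sqrt ((k:ℝ) / p ^ 3)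
          = (1 - p) * ((k:ℝ) / p) := by
        rw [mul_right_comm, Id1]; ring
      rw [h2] at h1
      have h3 : (k:ℝ) / p - (1 - p) * ((k:ℝ) / p) = (k:ℝ) := by
        field_simp
        ring
      linarith
    have hnull : μ {ω | ∑ i, (G i ω : ℝ) < (k : ℝ) / p - t * Real.sqrt (k / p ^ 3)} = 0 := by
      rw [measure_eq_zero_iff_ae_notMem]
      filter_upwards [hSk] with ω hω
      simp only [Set.mem_setOf_eq, not_lt]
      linarith
    rw [hnull]
    exact zero_le
  · push_neg at hcase
    have h1p : 0 < 1 - p := by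
      by_contra h
      push_neg at h
      nlinarith [Real.sqrt_nonneg ((k:ℝ) * p)]
    set ε : ℝ := t / Real.sqrt ((k:ℝ) * p) with hεdef
    clear_value ε
    have hε0 : 0 < ε := hεdef ▸ div_pos ht hsq
    have hεlt : ε < 1 - p := by
      rw [hεdef, div_lt_iff₀ hsq]
      linarith [hcase]
    have hε1 : ε < 1 := by linarith
    have h1ε : 0 < 1 - ε := by linarith
    have h2ε : (0:ℝ) < 2 - ε := by linarith
    have ht_eq : t = ε * Real.sqrt ((k:ℝ) * p) := by
      rw [hεdef]; field_simp
    set l : ℝ := p * ε / (1 - ε) with hldef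
    clear_value l
    have hl : 0 < l := by rw [hldef]; positivity
    set x : ℝ := Real.exp (-l) with hxdef
    clear_value x
    have hx0 : 0 < x := hxdef ▸ Real.exp_pos _
    have hx1 : x ≤ 1 := by
      rw [hxdef, Real.exp_le_one_iff]; linarith
    have hqx : (1 - p) * x < 1 := by nlinarith
    have hdenom : 0 < 1 - (1 - p) * x := by linarith
    have hla : l * ((k:ℝ) / p * (1 - ε)) = (k:ℝ) * ε := by
      rw [hldef]
      field_simp
    have hbound : Real.exp (l * ((k:ℝ) / p * (1 - ε))) * (1 - ε) ^ k
        ≤ Real.exp (-((k:ℝ) * ε ^ 2) / (2 - ε)) := by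
      have hlog := thm4_log_ineq hε0.le hε1
      have h1εpow : (1 - ε) ^ k = Real.exp ((k:ℝ) * Real.log (1 - ε)) := by
        rw [Real.exp_nat_mul, Real.exp_log h1ε]
      rw [hla, h1εpow, ← Real.exp_add]
      apply Real.exp_le_exp.mpr
      have hk0 : (0:ℝ) ≤ (k:ℝ) := Nat.cast_nonneg k
      have hmul := mul_le_mul_of_nonneg_left hlog hk0
      have heq : (k:ℝ) * ε + (k:ℝ) * (-(2 * ε / (2 - ε))) = -((k:ℝ) * ε ^ 2) / (2 - ε) := by
        field_simp
        ring
      linarith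
    have hexp_eq : -(t ^ 2) / (2 * p - t * Real.sqrt (p / (k:ℝ)))
        = -((k:ℝ) * ε ^ 2) / (2 - ε) := by
      have h1 : t * Real.sqrt (p / (k:ℝ)) = p * ε := by
        rw [ht_eq, mul_assoc, Id2]; ring
      have h2 : t ^ 2 = (k:ℝ) * p * ε ^ 2 := by
        rw [ht_eq, mul_pow, Real.sq_sqrt hkp.le]; ring
      rw [h1, h2]
      rw [div_eq_div_iff (by nlinarith) (by linarith)]
      ring
    have hthr_eq : (k:ℝ) / p - t * Real.sqrt ((k:ℝ) / p ^ 3) = (k:ℝ) / p * (1 - ε) := by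
      have h1 : t * Real.sqrt ((k:ℝ) / p ^ 3) = ε * ((k:ℝ) / p) := by
        rw [ht_eq, mul_assoc, Id1]
      rw [h1]
      ring
    -- the mgf bound
    have hmgfb : ∀ i : Fin k, mgf (fun ω => (G i ω : ℝ)) μ (-l) ≤ 1 - ε := by
      intro i
      have hprob : IsProbabilityMeasure (μ.map (G i)) :=
        Measure.isProbabilityMeasure_map (hmeas i).aemeasurable
      have hintf : Integrable (fun n : ℕ => Real.exp (-l * n)) (μ.map (G i)) := by
        refine Integrable.mono' (integrable_const 1)
          ((measurable_of_countable _).aestronglyMeasurable) (ae_of_all _ fun n => ?_)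
        rw [Real.norm_eq_abs, abs_of_pos (Real.exp_pos _), Real.exp_le_one_iff]
        have hn : (0:ℝ) ≤ (n:ℝ) := Nat.cast_nonneg n
        exact le_trans (mul_le_mul_of_nonneg_right (neg_nonpos.mpr hl.le) hn) (by simp)
      have hmap : ∀ n : ℕ, (μ.map (G i)) {n} = μ {ω | G i ω = n} := fun n => by
        rw [Measure.map_apply (hmeas i) (measurableSet_singleton n)]
        rfl
      set f : ℕ → ℝ := fun n => ((μ.map (G i)) {n}).toReal * Real.exp (-l * n) with hfdef
      have h1 : mgf (fun ω => (G i ω : ℝ)) μ (-l) = ∑' n : ℕ, f n := by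
        have hmapint := integral_map (μ := μ) (φ := G i) (f := fun n : ℕ => Real.exp (-l * n))
          (hmeas i).aemeasurable ((measurable_of_countable _).aestronglyMeasurable)
        rw [mgf, ← hmapint, integral_countable' hintf]
        simp [hfdef, smul_eq_mul]
        rfl
      have hshift : ∀ n : ℕ, f (n + 1) = (p * x) * ((1 - p) * x) ^ n := by
        intro n
        rw [hfdef]
        simp only
        rw [hmap, hgeom i (n + 1) (Nat.le_add_left 1 n)]
        simp only [Nat.add_sub_cancel]
        rw [ENNReal.toReal_ofReal (by positivity)]
        have hexp : Real.exp (-l * ((n : ℕ) + 1 : ℕ)) = x ^ (n + 1) := by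
          rw [hxdef, ← Real.exp_nat_mul]
          congr 1
          push_cast
          ring
        rw [hexp, mul_pow]
        ring
      have hsummable' : Summable (fun n : ℕ => f (n + 1)) :=
        ((summable_geometric_of_lt_one (by positivity) hqx).mul_left (p * x)).congr
          (fun n => (hshift n).symm)
      have h2 : ∑' n : ℕ, f n = p * x * (1 - (1 - p) * x)⁻¹ := by
        rw [tsum_eq_zero_add' hsummable']
        have hf0 : f 0 = 0 := by
          simp [hfdef, hmap 0, hzero i]
        rw [hf0, zero_add, tsum_congr hshift, tsum_mul_left,
          tsum_geometric_of_lt_one (by positivity) hqx]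
      rw [h1, h2]
      clear hfdef h1 h2 hshift hsummable' hintf hmap hprob
      clear f
      have hkey : x * (1 + l) ≤ 1 := by
        have hexp := Real.add_one_le_exp l
        have hxe : x * Real.exp l = 1 := by
          rw [hxdef, ← Real.exp_add]; simp
        calc x * (1 + l) = x * (l + 1) := by ring
        _ ≤ x * Real.exp l := mul_le_mul_of_nonneg_left hexp hx0.le
        _ = 1 := hxe
      rw [← div_eq_mul_inv, div_le_iff₀ hdenom]
      have hleq : x * (l * (1 - ε)) = x * (p * ε) := by
        rw [hldef]; field_simp
      exact thm4_alg hkey h1ε.le hleq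
    -- Chernoff
    set X : Fin k → Ω → ℝ := fun i ω => (G i ω : ℝ) with hXdef
    clear_value X
    have hmgfbX : ∀ i : Fin k, mgf (X i) μ (-l) ≤ 1 - ε := by
      rw [hXdef]; exact hmgfb
    have hXmeas : ∀ i, Measurable (X i) := fun i => by
      rw [hXdef]; exact (measurable_of_countable _).comp (hmeas i)
    have hindepX : iIndepFun X μ :=
      hXdef ▸ hindep.comp (fun _ => ((↑) : ℕ → ℝ)) (fun _ => measurable_of_countable _)
    have hintS : Integrable (fun ω => Real.exp (-l * (∑ i, X i) ω)) μ := by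
      simp only [Finset.sum_apply]
      refine Integrable.mono' (integrable_const 1) ?_ (ae_of_all _ fun ω => ?_)
      · exact (((Finset.measurable_sum Finset.univ fun i _ => hXmeas i).const_mul
          (-l)).exp).aestronglyMeasurable
      · rw [Real.norm_eq_abs, abs_of_pos (Real.exp_pos _), Real.exp_le_one_iff]
        have hnn : (0:ℝ) ≤ ∑ i, X i ω := by
          rw [hXdef]
          exact Finset.sum_nonneg fun i _ => Nat.cast_nonneg _
        exact le_trans (mul_le_mul_of_nonneg_right (neg_nonpos.mpr hl.le) hnn) (by simp)
    have hchern := measure_le_le_exp_mul_mgf (μ := μ) (X := ∑ i, X i)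
      ((k:ℝ) / p * (1 - ε)) (neg_nonpos.mpr hl.le) hintS
    rw [hindepX.mgf_sum hXmeas Finset.univ] at hchern
    have hprod : ∏ i, mgf (X i) μ (-l) ≤ (1 - ε) ^ k := by
      calc ∏ i, mgf (X i) μ (-l) ≤ ∏ _i : Fin k, (1 - ε) :=
            Finset.prod_le_prod (fun i _ => mgf_nonneg) (fun i _ => hmgfbX i)
      _ = (1 - ε) ^ k := by simp
    calc μ {ω | ∑ i, (G i ω : ℝ) < (k : ℝ) / p - t * Real.sqrt (k / p ^ 3)}
        ≤ μ {ω | (∑ i, X i) ω ≤ (k:ℝ) / p * (1 - ε)} := by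
          apply measure_mono
          intro ω hω
          simp only [Set.mem_setOf_eq, Finset.sum_apply, hXdef] at hω ⊢
          rw [← hthr_eq]
          exact le_of_lt hω
      _ = ENNReal.ofReal ((μ {ω | (∑ i, X i) ω ≤ (k:ℝ) / p * (1 - ε)}).toReal) :=
          (ENNReal.ofReal_toReal (measure_ne_top _ _)).symm
      _ ≤ ENNReal.ofReal (Real.exp (-(t ^ 2) / (2 * p - t * Real.sqrt (p / (k:ℝ))))) := by
          apply ENNReal.ofReal_le_ofReal
          rw [hexp_eq]
          calc (μ {ω | (∑ i, X i) ω ≤ (k:ℝ) / p * (1 - ε)}).toReal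
              ≤ Real.exp (-(-l) * ((k:ℝ) / p * (1 - ε))) * ∏ i, mgf (X i) μ (-l) := hchern
            _ = Real.exp (l * ((k:ℝ) / p * (1 - ε))) * ∏ i, mgf (X i) μ (-l) := by rw [neg_neg]
            _ ≤ Real.exp (l * ((k:ℝ) / p * (1 - ε))) * (1 - ε) ^ k :=
                mul_le_mul_of_nonneg_left hprod (Real.exp_pos _).le
            _ ≤ Real.exp (-((k:ℝ) * ε ^ 2) / (2 - ε)) := hbound
end

section
/- There exists an absolute constant c with 0 < c ≤ 1/2 such that for all positive integers m and n, the hitting time τ_m of the simple symmetric random walk on ℤ satisfies P(τ_m ≥ n²) ≥ 1 − e^{−c·m/n}. -/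
open Finset

namespace Thm5Aux

def v (b : Bool) : ℤ := if b then 1 else -1

variable {T : ℕ}

def stepv (f : Fin T → Bool) (i : ℕ) : ℤ := if h : i < T then v (f ⟨i, h⟩) else 1

def psum (f : Fin T → Bool) (t : ℕ) : ℤ := ∑ i ∈ Finset.range t, stepv f i

def ends (f : Fin T → Bool) : ℤ := psum f T

def ct (f : Fin T → Bool) : ℕ := (Finset.univ.filter (fun i => f i = true)).card

lemma stepv_le (f : Fin T → Bool) (i : ℕ) : stepv f i ≤ 1 := by
  unfold stepv v; split
  · split <;> omega
  · omega

lemma psum_le (f : Fin T → Bool) (t : ℕ) : psum f t ≤ t := by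
  calc psum f t ≤ ∑ _i ∈ Finset.range t, (1:ℤ) := Finset.sum_le_sum (fun i _ => stepv_le f i)
  _ = t := by simp

lemma ends_eq (f : Fin T → Bool) : ends f = 2 * (ct f : ℤ) - T := by
  have h1 : ends f = ∑ i : Fin T, v (f i) := by
    rw [ends, psum, ← Fin.sum_univ_eq_sum_range (fun i => stepv f i) T]
    apply Finset.sum_congr rfl
    intro i _
    simp [stepv, i.isLt]
  have h2 : ∀ b : Bool, v b = 2 * (if b = true then (1:ℤ) else 0) - 1 := by decide
  rw [h1]
  simp_rw [h2]
  rw [Finset.sum_sub_distrib, ← Finset.mul_sum, Finset.sum_boole]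
  simp [ct]

lemma ct_le (f : Fin T → Bool) : ct f ≤ T := by
  simpa [ct] using (Finset.card_filter_le Finset.univ (fun i => f i = true))

def Hits (m : ℕ) (f : Fin T → Bool) : Prop := ∃ t, 1 ≤ t ∧ t ≤ T ∧ psum f t = (m:ℤ)

instance (m : ℕ) : DecidablePred (Hits (T:=T) m) := fun f => by
  have h : Hits m f ↔ ∃ t ∈ Finset.Icc 1 T, psum f t = (m:ℤ) := by
    simp [Hits, and_assoc]
  rw [h]; infer_instance

def fh (m : ℕ) (f : Fin T → Bool) : ℕ := if h : Hits m f then Nat.find h else 0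

variable {m : ℕ} {f : Fin T → Bool}

lemma fh_spec (hf : Hits m f) :
    1 ≤ fh m f ∧ fh m f ≤ T ∧ psum f (fh m f) = (m:ℤ) := by
  rw [fh, dif_pos hf]
  exact Nat.find_spec hf

lemma fh_min (hf : Hits m f) {t : ℕ} (h1 : 1 ≤ t) (h2 : t < fh m f) : psum f t ≠ (m:ℤ) := by
  rw [fh, dif_pos hf] at h2
  have := Nat.find_min hf h2
  intro hc
  exact this ⟨h1, le_trans (le_of_lt h2) ((fh_spec hf).2.1.trans_eq' (by rw [fh, dif_pos hf])), hc⟩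

def refl (m : ℕ) (f : Fin T → Bool) : Fin T → Bool :=
  fun i => if (i:ℕ) < fh m f then f i else !(f i)

lemma stepv_refl_lt {i : ℕ} (hi : i < fh m f) : stepv (refl m f) i = stepv f i := by
  unfold stepv
  split
  · simp [refl, hi]
  · rfl

lemma stepv_refl_ge {i : ℕ} (hi : fh m f ≤ i) (hiT : i < T) :
    stepv (refl m f) i = - stepv f i := by
  unfold stepv
  rw [dif_pos hiT, dif_pos hiT]
  have : refl m f ⟨i, hiT⟩ = !(f ⟨i, hiT⟩) := by simp [refl, Nat.not_lt.mpr hi]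
  rw [this]
  cases f ⟨i, hiT⟩ <;> simp [v]

lemma psum_refl_le {t : ℕ} (ht : t ≤ fh m f) : psum (refl m f) t = psum f t := by
  apply Finset.sum_congr rfl
  intro i hi
  rw [Finset.mem_range] at hi
  exact stepv_refl_lt (lt_of_lt_of_le hi ht)

lemma psum_refl_ge (hf : Hits m f) {t : ℕ} (ht : fh m f ≤ t) (htT : t ≤ T) :
    psum (refl m f) t = 2 * m - psum f t := by
  obtain ⟨h1, h2, h3⟩ := fh_spec hf
  have key : ∀ g : Fin T → Bool, psum g t = psum g (fh m f) + ∑ i ∈ Finset.Ico (fh m f) t, stepv g i := by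
    intro g
    rw [psum, psum, Finset.range_eq_Ico,
      ← Finset.sum_Ico_consecutive _ (Nat.zero_le _) ht, ← Finset.range_eq_Ico]
  rw [key, key, psum_refl_le (le_refl _), h3]
  have : ∑ i ∈ Finset.Ico (fh m f) t, stepv (refl m f) i
      = - ∑ i ∈ Finset.Ico (fh m f) t, stepv f i := by
    rw [← Finset.sum_neg_distrib]
    apply Finset.sum_congr rfl
    intro i hi
    rw [Finset.mem_Ico] at hi
    exact stepv_refl_ge hi.1 (lt_of_lt_of_le hi.2 htT)
  rw [this]
  ring

lemma hits_refl (hf : Hits m f) : Hits m (refl m f) := by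
  obtain ⟨h1, h2, h3⟩ := fh_spec hf
  exact ⟨fh m f, h1, h2, by rw [psum_refl_le (le_refl _)]; exact h3⟩

lemma fh_refl (hf : Hits m f) : fh m (refl m f) = fh m f := by
  obtain ⟨h1, h2, h3⟩ := fh_spec hf
  have hr := hits_refl hf
  obtain ⟨g1, g2, g3⟩ := fh_spec hr
  rcases lt_trichotomy (fh m (refl m f)) (fh m f) with h | h | h
  · exfalso
    exact fh_min hf g1 h (by rw [← psum_refl_le (le_of_lt h)]; exact g3)
  · exact h
  · exfalso
    exact fh_min hr h1 h (by rw [psum_refl_le (le_refl _)]; exact h3)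

lemma refl_refl (hf : Hits m f) : refl m (refl m f) = f := by
  funext i
  rw [refl, fh_refl hf, refl]
  by_cases h : (i:ℕ) < fh m f <;> simp [h]

lemma ends_refl (hf : Hits m f) : ends (refl m f) = 2 * m - ends f :=
  psum_refl_ge hf (fh_spec hf).2.1 (le_refl _)


-- new layer
lemma card_univ_fun : (Finset.univ : Finset (Fin T → Bool)).card = 2 ^ T := by
  simp [Finset.card_univ]

lemma ends_not (f : Fin T → Bool) : ends (fun i => !(f i)) = - ends f := by
  rw [ends, ends, psum, psum, ← Finset.sum_neg_distrib]
  apply Finset.sum_congr rfl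
  intro i hi
  rw [Finset.mem_range] at hi
  simp only [stepv, dif_pos hi]
  cases f ⟨i, hi⟩ <;> simp [v]

lemma card_ends_neg (p : ℤ → Prop) [DecidablePred p] :
    (univ.filter fun f : Fin T → Bool => p (ends f)).card
      = (univ.filter fun f : Fin T → Bool => p (-ends f)).card := by
  apply Finset.card_nbij' (i := fun f => fun j => !(f j)) (j := fun f => fun j => !(f j)) <;>
    intro f hf <;> simp only [Finset.mem_coe, Finset.mem_filter, Finset.mem_univ, true_and] at *
  · rw [ends_not]; simpa using hf
  · rw [ends_not]; simpa using hf
  · funext j; simp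
  · funext j; simp

lemma card_ct_eq (k : ℕ) :
    (univ.filter fun f : Fin T → Bool => ct f = k).card = T.choose k := by
  have hpc : (Finset.powersetCard k (Finset.univ : Finset (Fin T))).card = T.choose k := by
    simp [Finset.card_powersetCard]
  rw [← hpc]
  apply Finset.card_nbij' (i := fun f => Finset.univ.filter (fun j => f j = true))
    (j := fun s => fun j => decide (j ∈ s))
  · intro f hf
    simp only [Finset.mem_coe, Finset.mem_filter, Finset.mem_univ, true_and] at *
    rw [Finset.mem_powersetCard_univ]
    exact hf
  · intro s hs
    simp only [Finset.mem_coe, Finset.mem_powersetCard_univ, Finset.mem_filter,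
      Finset.mem_univ, true_and] at *
    rw [← hs, ct]
    congr 1
    simp
  · intro f hf
    funext j
    simp
  · intro s hs
    ext j
    simp

lemma card_filter_ends_eq (p : ℤ → Prop) [DecidablePred p] :
    (univ.filter fun f : Fin T → Bool => p (ends f)).card
      = ∑ k ∈ Finset.range (T+1), if p (2*(k:ℤ) - T) then T.choose k else 0 := by
  rw [Finset.card_eq_sum_card_fiberwise
    (f := ct) (t := Finset.range (T+1))
    (fun f _ => Finset.mem_range.mpr (Nat.lt_succ_of_le (ct_le f)))]
  apply Finset.sum_congr rfl
  intro k _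
  by_cases hk : p (2*(k:ℤ) - T)
  · rw [if_pos hk, ← card_ct_eq k]
    congr 1
    rw [Finset.filter_filter]
    apply Finset.filter_congr
    intro f _
    constructor
    · rintro ⟨_, h2⟩; exact h2
    · intro h2
      refine ⟨?_, h2⟩
      rwa [ends_eq, h2]
  · rw [if_neg hk]
    simp only [Finset.card_eq_zero, Finset.filter_filter]
    rw [Finset.filter_eq_empty_iff]
    intro f _
    rintro ⟨h1, h2⟩
    rw [ends_eq, h2] at h1
    exact hk h1


lemma ends_eq_sum (f : Fin T → Bool) : ends f = ∑ i : Fin T, v (f i) := by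
  rw [ends, psum, ← Fin.sum_univ_eq_sum_range (fun i => stepv f i) T]
  apply Finset.sum_congr rfl
  intro i _
  simp [stepv, i.isLt]

lemma choose_mono_left {j k : ℕ} (hjk : j ≤ k) (hk : 2*k ≤ T) : T.choose j ≤ T.choose k := by
  induction k, hjk using Nat.le_induction with
  | base => exact le_refl _
  | succ k hjk ih =>
    refine le_trans (ih (by omega)) (Nat.choose_le_succ_of_lt_half_left ?_)
    omega

lemma choose_anti {j k : ℕ} (hj : j ≤ T) (h : min k (T-k) ≤ min j (T-j)) :
    T.choose k ≤ T.choose j := by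
  by_cases hk : k ≤ T
  · have ej : T.choose j = T.choose (min j (T-j)) := by
      rcases le_total j (T-j) with h' | h'
      · rw [min_eq_left h']
      · rw [min_eq_right h', ← Nat.choose_symm hj]
    have ek : T.choose k = T.choose (min k (T-k)) := by
      rcases le_total k (T-k) with h' | h'
      · rw [min_eq_left h']
      · rw [min_eq_right h', ← Nat.choose_symm hk]
    rw [ej, ek]
    exact choose_mono_left h (by omega)
  · rw [Nat.choose_eq_zero_of_lt (by omega)]
    exact Nat.zero_le _

lemma sum_exp_ends (lam : ℝ) :
    ∑ f : (Fin T → Bool), Real.exp (lam * (ends f : ℝ))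
      = (Real.exp lam + Real.exp (-lam))^T := by
  have h1 : ∀ f : Fin T → Bool, Real.exp (lam * (ends f : ℝ))
      = ∏ i : Fin T, Real.exp (lam * (v (f i) : ℝ)) := by
    intro f
    rw [← Real.exp_sum, ends_eq_sum]
    push_cast
    rw [Finset.mul_sum]
  simp_rw [h1]
  have h2 := Finset.sum_prod_piFinset (Finset.univ : Finset Bool)
    (fun (_ : Fin T) (b : Bool) => Real.exp (lam * (v b : ℝ)))
  rw [Fintype.piFinset_univ] at h2
  rw [h2]
  have h3 : ∑ b : Bool, Real.exp (lam * (v b : ℝ)) = Real.exp lam + Real.exp (-lam) := by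
    simp [v]
  rw [Finset.prod_const, Finset.card_univ, Fintype.card_fin, ← h3]

lemma chernoff (hT : 1 ≤ T) (M : ℕ) (hM : 1 ≤ M) :
    ((univ.filter fun f : Fin T → Bool => (M:ℤ) ≤ ends f).card : ℝ)
      ≤ 2^T * Real.exp (-(M:ℝ)^2/(2*T)) := by
  have hT0 : (0:ℝ) < T := by exact_mod_cast hT
  set lam : ℝ := (M:ℝ)/T with hlam
  have hlam0 : 0 ≤ lam := by positivity
  have key : ((univ.filter fun f : Fin T → Bool => (M:ℤ) ≤ ends f).card : ℝ)
      * Real.exp (lam * M) ≤ ∑ f : (Fin T → Bool), Real.exp (lam * (ends f : ℝ)) := by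
    calc ((univ.filter fun f : Fin T → Bool => (M:ℤ) ≤ ends f).card : ℝ) * Real.exp (lam * M)
        = ∑ _f ∈ (univ.filter fun f : Fin T → Bool => (M:ℤ) ≤ ends f), Real.exp (lam * M) := by
          rw [Finset.sum_const, nsmul_eq_mul]
      _ ≤ ∑ f ∈ (univ.filter fun f : Fin T → Bool => (M:ℤ) ≤ ends f),
            Real.exp (lam * (ends f : ℝ)) := by
          apply Finset.sum_le_sum
          intro f hf
          rw [Finset.mem_filter] at hf
          have : (M:ℝ) ≤ (ends f : ℝ) := by exact_mod_cast hf.2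
          exact Real.exp_le_exp.mpr (by nlinarith)
      _ ≤ ∑ f : (Fin T → Bool), Real.exp (lam * (ends f : ℝ)) := by
          apply Finset.sum_le_sum_of_subset_of_nonneg (Finset.filter_subset _ _)
          intro f _ _
          positivity
  rw [sum_exp_ends] at key
  have hcosh : Real.exp lam + Real.exp (-lam) ≤ 2 * Real.exp (lam^2/2) := by
    have := Real.cosh_le_exp_half_sq lam
    rw [Real.cosh_eq] at this
    linarith
  have hpow : (Real.exp lam + Real.exp (-lam))^T ≤ (2 * Real.exp (lam^2/2))^T := by
    apply pow_le_pow_left₀ (by positivity) hcosh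
  have h2 : (2 * Real.exp (lam^2/2))^T = 2^T * Real.exp (T * (lam^2/2)) := by
    rw [mul_pow, ← Real.exp_nat_mul]
  have hexp : (T:ℝ) * (lam^2/2) - lam * M = -(M:ℝ)^2/(2*T) := by
    rw [hlam]
    field_simp
    ring
  have hfinal : ((univ.filter fun f : Fin T → Bool => (M:ℤ) ≤ ends f).card : ℝ)
      ≤ 2^T * Real.exp ((T:ℝ) * (lam^2/2)) * Real.exp (-(lam * M)) := by
    have hepos : 0 < Real.exp (lam * M) := Real.exp_pos _
    rw [Real.exp_neg, ← div_eq_mul_inv, le_div_iff₀ hepos]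
    calc ((univ.filter fun f : Fin T → Bool => (M:ℤ) ≤ ends f).card : ℝ) * Real.exp (lam * M)
        ≤ (Real.exp lam + Real.exp (-lam))^T := key
      _ ≤ 2^T * Real.exp ((T:ℝ) * (lam^2/2)) := by rw [← h2]; exact hpow
  calc ((univ.filter fun f : Fin T → Bool => (M:ℤ) ≤ ends f).card : ℝ)
      ≤ 2^T * Real.exp ((T:ℝ) * (lam^2/2)) * Real.exp (-(lam * M)) := hfinal
    _ = 2^T * Real.exp ((T:ℝ) * (lam^2/2) - lam * M) := by
        rw [mul_assoc, ← Real.exp_add]; ring_nf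
    _ = 2^T * Real.exp (-(M:ℝ)^2/(2*T)) := by rw [hexp]


lemma card_hits_le {m : ℕ} :
    (univ.filter (Hits (T:=T) m)).card
      ≤ (univ.filter fun f : Fin T → Bool => (m:ℤ) ≤ ends f).card
        + (univ.filter fun f : Fin T → Bool => (m:ℤ) < ends f).card := by
  have hsplit : ((univ.filter (Hits (T:=T) m)).filter
        (fun f => (m:ℤ) ≤ ends f)).card
      + ((univ.filter (Hits (T:=T) m)).filter
        (fun f => ¬ ((m:ℤ) ≤ ends f))).card
      = (univ.filter (Hits (T:=T) m)).card :=
    Finset.card_filter_add_card_filter_not _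
  rw [← hsplit]
  apply Nat.add_le_add
  · apply Finset.card_le_card
    intro f hf
    simp only [Finset.mem_filter, Finset.mem_univ, true_and] at *
    exact hf.2
  · apply Finset.card_le_card_of_injOn (fun f => refl m f)
    · intro f hf
      simp only [Finset.coe_filter, Finset.mem_filter, Finset.mem_univ, true_and,
        Set.mem_setOf_eq, not_le] at *
      obtain ⟨hh, hlt⟩ := hf
      rw [ends_refl hh]
      omega
    · intro f hf g hg hfg
      simp only [Finset.coe_filter, Finset.mem_filter, Finset.mem_univ, true_and,
        Set.mem_setOf_eq, not_le] at hf hg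
      have hfg' : refl m f = refl m g := hfg
      have : refl m (refl m f) = refl m (refl m g) := by rw [hfg']
      rwa [refl_refl hf.1, refl_refl hg.1] at this

def good (T m : ℕ) : Finset (Fin T → Bool) := univ.filter (fun f => ¬ Hits m f)

lemma good_card_add (T m : ℕ) :
    (univ.filter (Hits (T:=T) m)).card + (good T m).card = 2 ^ T := by
  rw [good, ← card_univ_fun (T := T)]
  exact Finset.card_filter_add_card_filter_not _

lemma exp_tail_bound (n T : ℕ) (hT1 : 1 ≤ T) (hTn : T ≤ n^2) :
    Real.exp (-((2*n:ℕ):ℝ)^2/(2*(T:ℝ))) ≤ 3/20 := by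
  have hTpos : (0:ℝ) < T := by exact_mod_cast hT1
  have hTn2 : (T:ℝ) ≤ (n:ℝ)^2 := by exact_mod_cast hTn
  have h1 : Real.exp (-((2*n:ℕ):ℝ)^2/(2*(T:ℝ))) ≤ Real.exp (-2) := by
    apply Real.exp_le_exp.mpr
    rw [neg_div, neg_le_neg_iff, le_div_iff₀ (by positivity)]
    push_cast
    nlinarith
  have h2 : (20:ℝ)/3 ≤ Real.exp 2 := by
    have he := Real.exp_one_gt_d9
    rw [show (2:ℝ) = 1+1 by norm_num, Real.exp_add]
    nlinarith
  have hmul : Real.exp (-2) * Real.exp 2 = 1 := by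
    rw [← Real.exp_add]; norm_num
  nlinarith [Real.exp_pos (-2), h1, h2, hmul]

theorem main_count (m n : ℕ) (hm : 1 ≤ m) (hn : 1 ≤ n) :
    (1 - Real.exp (-((m:ℝ)/(8*n)))) * 2^(n^2-1) ≤ ((good (n^2-1) m).card : ℝ) := by
  set T := n^2 - 1 with hT
  have hTn : T + 1 = n^2 := by
    rw [hT]; have : 1 ≤ n^2 := Nat.one_le_pow _ _ hn; omega
  have hn0 : (0:ℝ) < n := by exact_mod_cast hn
  have hm0 : (0:ℝ) < m := by exact_mod_cast hm
  have hexp_le : (1 - Real.exp (-((m:ℝ)/(8*n)))) ≤ (m:ℝ)/(8*n) := by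
    have := Real.add_one_le_exp (-((m:ℝ)/(8*n)))
    linarith
  have hpow2 : (0:ℝ) < 2^T := by positivity
  by_cases hmT : T < m
  · -- trivial case: the walk cannot reach m in ≤ T steps
    have hgood : good T m = univ := by
      rw [good, Finset.filter_eq_self]
      intro f _
      rintro ⟨t, ht1, ht2, ht3⟩
      have := psum_le f t
      rw [ht3] at this
      have : m ≤ t := by exact_mod_cast this
      omega
    rw [hgood, card_univ_fun]
    have h1 : (1 - Real.exp (-((m:ℝ)/(8*n)))) ≤ 1 := by
      have := Real.exp_pos (-((m:ℝ)/(8*n))); linarith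
    calc (1 - Real.exp (-((m:ℝ)/(8*n)))) * 2^T ≤ 1 * 2^T := by
          apply mul_le_mul_of_nonneg_right h1 (le_of_lt hpow2)
      _ = ((2^T : ℕ) : ℝ) := by push_cast; ring
  · push_neg at hmT   -- m ≤ T
    have hT1 : 1 ≤ T := le_trans hm hmT
    -- basic cards
    set c1 := (univ.filter fun f : Fin T → Bool => (m:ℤ) ≤ ends f).card with hc1
    set c2 := (univ.filter fun f : Fin T → Bool => (m:ℤ) < ends f).card with hc2
    set B := (univ.filter (Hits (T:=T) m)).card with hB
    set G := (good T m).card with hG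
    have hGB : B + G = 2^T := good_card_add T m
    have hBle : B ≤ c1 + c2 := card_hits_le
    have hc2c1 : c2 ≤ c1 := by
      apply Finset.card_le_card
      intro f hf
      simp only [Finset.mem_filter, Finset.mem_univ, true_and] at *
      omega
    have hchern := chernoff (T := T) hT1 m hm
    rw [← hc1] at hchern
    by_cases hm2n : 2*n < m
    · -- large m case
      have hGge : (2:ℝ)^T - 2*c1 ≤ G := by
        have : (B:ℝ) + G = 2^T := by exact_mod_cast hGB
        have h2 : (B:ℝ) ≤ 2*c1 := by
          have : B ≤ 2*c1 := by omega
          exact_mod_cast this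
        linarith
      have hTpos : (0:ℝ) < T := by exact_mod_cast hT1
      have hTn2 : (T:ℝ) ≤ (n:ℝ)^2 := by
        have : T ≤ n^2 := by omega
        exact_mod_cast this
      have h2nm : 2*(n:ℝ) ≤ m := by exact_mod_cast (le_of_lt hm2n)
      set A := (m:ℝ)^2/(2*(T:ℝ)) with hA
      set Bq := (m:ℝ)/(8*(n:ℝ)) with hBq
      rw [neg_div] at hchern
      have hfrac : (m:ℝ)/(n:ℝ) ≤ A := by
        rw [hA, div_le_div_iff₀ hn0 (by positivity)]
        have e1 : 2*(m:ℝ)*T ≤ 2*m*(n^2) := by nlinarith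
        have e2 : (2*(n:ℝ))*(m*n) ≤ m*(m*n) := by
          apply mul_le_mul_of_nonneg_right h2nm (by positivity)
        nlinarith [e1, e2]
      have hge2 : (2:ℝ) ≤ (m:ℝ)/(n:ℝ) := by
        rw [le_div_iff₀ hn0]; linarith
      have hBr : Bq = ((m:ℝ)/(n:ℝ))/8 := by rw [hBq]; ring
      have hAB1 : 1 ≤ A - Bq := by
        rw [hBr]
        set r := (m:ℝ)/(n:ℝ)
        linarith
      have hkey : 2 * Real.exp (-A) ≤ Real.exp (-Bq) := by
        have h1 : (2:ℝ) ≤ Real.exp (A - Bq) := by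
          have := Real.add_one_le_exp (A - Bq)
          linarith
        calc 2 * Real.exp (-A) ≤ Real.exp (A - Bq) * Real.exp (-A) := by
              apply mul_le_mul_of_nonneg_right h1 (Real.exp_pos _).le
          _ = Real.exp (-Bq) := by rw [← Real.exp_add]; ring_nf
      have hstep : (1 - Real.exp (-Bq)) * 2^T
          ≤ (1 - 2 * Real.exp (-A)) * 2^T := by
        apply mul_le_mul_of_nonneg_right _ (le_of_lt hpow2)
        linarith
      calc (1 - Real.exp (-Bq)) * 2^T
          ≤ (1 - 2 * Real.exp (-A)) * 2^T := hstep
        _ = 2^T - 2 * (2^T * Real.exp (-A)) := by ring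
        _ ≤ 2^T - 2 * c1 := by linarith
        _ ≤ G := hGge
    · -- small m case : m ≤ 2n
      push_neg at hm2n
      set a := (T - m + 1)/2 with ha
      set b := (T + m + 1)/2 with hb
      set bb := min ((T + 2*n + 1)/2) (T+1) with hbb
      set W := (univ.filter fun f : Fin T → Bool =>
        -(m:ℤ) ≤ ends f ∧ ends f < m).card with hW
      set SL := (univ.filter fun f : Fin T → Bool =>
        ((m:ℕ):ℤ) ≤ ends f ∧ ends f < ((2*n : ℕ):ℤ)).card with hSL
      set mid := (univ.filter fun f : Fin T → Bool =>
        -(((2*n:ℕ)):ℤ) < ends f ∧ ends f < ((2*n:ℕ):ℤ)).card with hmid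
      -- Step 1 : W ≤ G
      have hWG : W ≤ G := by
        have h1 : c1 + (univ.filter fun f : Fin T → Bool => ends f < m).card = 2^T := by
          rw [← card_univ_fun (T := T), hc1]
          rw [show (univ.filter fun f : Fin T → Bool => ends f < m)
            = univ.filter (fun f : Fin T → Bool => ¬ ((m:ℤ) ≤ ends f)) from by
              apply Finset.filter_congr; intro f _; simp]
          exact Finset.card_filter_add_card_filter_not _
        have h2 : c2 = (univ.filter fun f : Fin T → Bool => ends f < -(m:ℤ)).card := by
          rw [hc2, card_ends_neg (fun x => (m:ℤ) < x)]
          congr 1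
          apply Finset.filter_congr; intro f _; constructor <;> intro <;> omega
        have h3 : W + (univ.filter fun f : Fin T → Bool => ends f < -(m:ℤ)).card
            = (univ.filter fun f : Fin T → Bool => ends f < m).card := by
          have hsplit := Finset.card_filter_add_card_filter_not
            (s := univ.filter fun f : Fin T → Bool => ends f < (m:ℤ))
            (p := fun f => -(m:ℤ) ≤ ends f)
          rw [Finset.filter_filter, Finset.filter_filter] at hsplit
          rw [show (univ.filter fun f : Fin T → Bool => ends f < -(m:ℤ))
            = univ.filter (fun f : Fin T → Bool => ends f < (m:ℤ) ∧ ¬ (-(m:ℤ) ≤ ends f)) from by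
              apply Finset.filter_congr; intro f _; simp; intro h; omega]
          rw [hW, show (univ.filter fun f : Fin T → Bool => -(m:ℤ) ≤ ends f ∧ ends f < m)
            = univ.filter (fun f : Fin T → Bool => ends f < (m:ℤ) ∧ -(m:ℤ) ≤ ends f) from by
              apply Finset.filter_congr; intro f _; exact and_comm]
          exact hsplit
        omega
      -- Step 2 : W as a sum of binomials
      have hWsum : W = ∑ k ∈ Finset.Ico a b, T.choose k := by
        rw [hW, card_filter_ends_eq (fun x => -(m:ℤ) ≤ x ∧ x < m), ← Finset.sum_filter]
        congr 1
        ext k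
        simp only [Finset.mem_filter, Finset.mem_range, Finset.mem_Ico]
        omega
      have hcardab : (Finset.Ico a b).card = m := by
        rw [Nat.card_Ico]; omega
      -- Step 3 : SL as a sum of binomials
      have hSLsum : SL = ∑ k ∈ Finset.Ico b bb, T.choose k := by
        rw [hSL, card_filter_ends_eq (fun x => ((m:ℕ):ℤ) ≤ x ∧ x < ((2*n : ℕ):ℤ)),
          ← Finset.sum_filter]
        congr 1
        ext k
        simp only [Finset.mem_filter, Finset.mem_range, Finset.mem_Ico]
        omega
      -- Step 4 : m * SL ≤ n * W
      have hmSL : m * SL ≤ n * W := by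
        have hpt : ∀ k ∈ Finset.Ico b bb, m * T.choose k ≤ W := by
          intro k hk
          rw [Finset.mem_Ico] at hk
          rw [hWsum, ← hcardab, ← Finset.sum_const_nat (m := T.choose k) (fun j _ => rfl)]
          apply Finset.sum_le_sum
          intro j hj
          rw [Finset.mem_Ico] at hj
          apply choose_anti
          · omega
          · omega
        calc m * SL = ∑ k ∈ Finset.Ico b bb, m * T.choose k := by
              rw [hSLsum, Finset.mul_sum]
          _ ≤ ∑ _k ∈ Finset.Ico b bb, W := Finset.sum_le_sum hpt
          _ = (bb - b) * W := by rw [Finset.sum_const, Nat.card_Ico, smul_eq_mul]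
          _ ≤ n * W := Nat.mul_le_mul_right W (by omega)
      -- Step 5 : mid ≤ W + 2 * SL
      have hmidle : mid ≤ W + 2 * SL := by
        have hC : (univ.filter fun f : Fin T → Bool =>
            -(((2*n:ℕ)):ℤ) < ends f ∧ ends f < -(m:ℤ)).card ≤ SL := by
          rw [card_ends_neg (fun x => -(((2*n:ℕ)):ℤ) < x ∧ x < -(m:ℤ))]
          apply Finset.card_le_card
          intro f hf
          simp only [Finset.mem_filter, Finset.mem_univ, true_and] at *
          omega
        have hsub : (univ.filter fun f : Fin T → Bool =>
              -(((2*n:ℕ)):ℤ) < ends f ∧ ends f < ((2*n:ℕ):ℤ))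
            ⊆ ((univ.filter fun f : Fin T → Bool => -(m:ℤ) ≤ ends f ∧ ends f < m)
              ∪ (univ.filter fun f : Fin T → Bool =>
                  ((m:ℕ):ℤ) ≤ ends f ∧ ends f < ((2*n : ℕ):ℤ)))
              ∪ (univ.filter fun f : Fin T → Bool =>
                  -(((2*n:ℕ)):ℤ) < ends f ∧ ends f < -(m:ℤ)) := by
          intro f hf
          simp only [Finset.mem_union, Finset.mem_filter, Finset.mem_univ, true_and] at *
          omega
        calc mid ≤ (((univ.filter fun f : Fin T → Bool => -(m:ℤ) ≤ ends f ∧ ends f < m)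
              ∪ (univ.filter fun f : Fin T → Bool =>
                  ((m:ℕ):ℤ) ≤ ends f ∧ ends f < ((2*n : ℕ):ℤ)))
              ∪ (univ.filter fun f : Fin T → Bool =>
                  -(((2*n:ℕ)):ℤ) < ends f ∧ ends f < -(m:ℤ))).card := Finset.card_le_card hsub
          _ ≤ ((univ.filter fun f : Fin T → Bool => -(m:ℤ) ≤ ends f ∧ ends f < m)
              ∪ (univ.filter fun f : Fin T → Bool =>
                  ((m:ℕ):ℤ) ≤ ends f ∧ ends f < ((2*n : ℕ):ℤ))).card
              + (univ.filter fun f : Fin T → Bool =>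
                  -(((2*n:ℕ)):ℤ) < ends f ∧ ends f < -(m:ℤ)).card := Finset.card_union_le _ _
          _ ≤ W + SL + SL := by
              have := Finset.card_union_le
                (univ.filter fun f : Fin T → Bool => -(m:ℤ) ≤ ends f ∧ ends f < m)
                (univ.filter fun f : Fin T → Bool =>
                  ((m:ℕ):ℤ) ≤ ends f ∧ ends f < ((2*n : ℕ):ℤ))
              omega
          _ = W + 2 * SL := by omega
      -- Step 6 : (7/10) * 2^T ≤ mid  (over ℝ)
      have htail := chernoff (T := T) hT1 (2*n) (by omega)
      have htaileq : (univ.filter fun f : Fin T → Bool => ends f ≤ -(((2*n:ℕ)):ℤ)).card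
          = (univ.filter fun f : Fin T → Bool => ((2*n:ℕ):ℤ) ≤ ends f).card := by
        rw [card_ends_neg (fun x => x ≤ -(((2*n:ℕ)):ℤ))]
        congr 1
        apply Finset.filter_congr; intro f _; constructor <;> intro <;> omega
      have hnotmid : (univ.filter fun f : Fin T → Bool =>
          ¬ (-(((2*n:ℕ)):ℤ) < ends f ∧ ends f < ((2*n:ℕ):ℤ))).card
          ≤ (univ.filter fun f : Fin T → Bool => ends f ≤ -(((2*n:ℕ)):ℤ)).card
            + (univ.filter fun f : Fin T → Bool => ((2*n:ℕ):ℤ) ≤ ends f).card := by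
        refine le_trans (Finset.card_le_card ?_) (Finset.card_union_le _ _)
        intro f hf
        simp only [Finset.mem_union, Finset.mem_filter, Finset.mem_univ, true_and] at *
        by_contra hc
        push_neg at hc
        omega
      have hmidsplit : mid + (univ.filter fun f : Fin T → Bool =>
          ¬ (-(((2*n:ℕ)):ℤ) < ends f ∧ ends f < ((2*n:ℕ):ℤ))).card = 2^T := by
        rw [hmid, ← card_univ_fun (T := T)]
        exact Finset.card_filter_add_card_filter_not _
      have hexptail : Real.exp (-((2*n:ℕ):ℝ)^2/(2*(T:ℝ))) ≤ 3/20 :=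
        exp_tail_bound n T hT1 (by omega)
      have hmidge : (7/10) * (2:ℝ)^T ≤ (mid : ℝ) := by
        have e1 : ((mid:ℝ)) + ((univ.filter fun f : Fin T → Bool =>
            ¬ (-(((2*n:ℕ)):ℤ) < ends f ∧ ends f < ((2*n:ℕ):ℤ))).card : ℝ) = 2^T := by
          exact_mod_cast hmidsplit
        have e2 : ((univ.filter fun f : Fin T → Bool =>
            ¬ (-(((2*n:ℕ)):ℤ) < ends f ∧ ends f < ((2*n:ℕ):ℤ))).card : ℝ)
            ≤ 2 * (2^T * Real.exp (-((2*n:ℕ):ℝ)^2/(2*(T:ℝ)))) := by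
          have c1' : ((univ.filter fun f : Fin T → Bool => ((2*n:ℕ):ℤ) ≤ ends f).card : ℝ)
              ≤ 2^T * Real.exp (-((2*n:ℕ):ℝ)^2/(2*(T:ℝ))) := htail
          have : ((univ.filter fun f : Fin T → Bool =>
              ¬ (-(((2*n:ℕ)):ℤ) < ends f ∧ ends f < ((2*n:ℕ):ℤ))).card : ℝ)
              ≤ 2 * ((univ.filter fun f : Fin T → Bool => ((2*n:ℕ):ℤ) ≤ ends f).card : ℝ) := by
            have := hnotmid
            rw [htaileq] at this
            exact_mod_cast (by omega : (univ.filter fun f : Fin T → Bool =>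
              ¬ (-(((2*n:ℕ)):ℤ) < ends f ∧ ends f < ((2*n:ℕ):ℤ))).card
              ≤ 2 * (univ.filter fun f : Fin T → Bool => ((2*n:ℕ):ℤ) ≤ ends f).card)
          linarith
        have e3 : (2:ℝ)^T * Real.exp (-((2*n:ℕ):ℝ)^2/(2*(T:ℝ))) ≤ (3/20) * 2^T := by
          calc (2:ℝ)^T * Real.exp (-((2*n:ℕ):ℝ)^2/(2*(T:ℝ))) ≤ 2^T * (3/20) := by
                apply mul_le_mul_of_nonneg_left hexptail (le_of_lt hpow2)
            _ = (3/20) * 2^T := by ring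
        linarith
      -- Final combination
      have hcast1 : ((m:ℝ)) * mid ≤ 4 * (n:ℝ) * W := by
        have h1 : m * mid ≤ (m + 2*n) * W := by
          calc m * mid ≤ m * (W + 2 * SL) := Nat.mul_le_mul_left m hmidle
            _ = m * W + 2 * (m * SL) := by ring
            _ ≤ m * W + 2 * (n * W) := by
                have := hmSL; omega
            _ = (m + 2*n) * W := by ring
        have h2 : (m:ℝ) * mid ≤ ((m + 2*n) : ℕ) * W := by exact_mod_cast h1
        have h3 : (((m + 2*n) : ℕ) : ℝ) ≤ 4 * n := by
          push_cast; have : (m:ℝ) ≤ 2*n := by exact_mod_cast hm2n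
          linarith
        calc (m:ℝ) * mid ≤ (((m + 2*n) : ℕ) : ℝ) * W := h2
          _ ≤ (4 * n) * W := by
              apply mul_le_mul_of_nonneg_right h3 (Nat.cast_nonneg W)
          _ = 4 * (n:ℝ) * W := by ring
      have hWge : (m:ℝ) * ((7/10) * 2^T) ≤ 4 * (n:ℝ) * W := by
        calc (m:ℝ) * ((7/10) * 2^T) ≤ (m:ℝ) * mid := by
              apply mul_le_mul_of_nonneg_left hmidge (le_of_lt hm0)
          _ ≤ 4 * (n:ℝ) * W := hcast1
      have hWGr : (W:ℝ) ≤ G := by exact_mod_cast hWG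
      calc (1 - Real.exp (-((m:ℝ)/(8*n)))) * 2^T ≤ ((m:ℝ)/(8*n)) * 2^T := by
            apply mul_le_mul_of_nonneg_right hexp_le (le_of_lt hpow2)
        _ ≤ (W:ℝ) := by
            rw [div_mul_eq_mul_div, div_le_iff₀ (by positivity : (0:ℝ) < 8*n)]
            have hnn : (0:ℝ) ≤ (m:ℝ) * 2^T := by positivity
            linarith [hWge, hnn]
        _ ≤ G := hWGr

end Thm5Aux

open MeasureTheory ProbabilityTheory

/-- There is an absolute constant `0 < c ≤ 1/2` such that for all positive integers `m` and
`n`, the hitting time `τ_m` of `m` by the simple symmetric random walk on `ℤ` satisfies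
`P(τ_m ≥ n²) ≥ 1 - exp(-c m / n)`.  The event `τ_m ≥ n²` is expressed as: the walk does not
hit `m` at any positive time `t < n²`. -/
theorem thm5 :
    ∃ c : ℝ, 0 < c ∧ c ≤ 1 / 2 ∧
      ∀ {Ω : Type} [MeasurableSpace Ω] (μ : Measure Ω), ∀ _ : IsProbabilityMeasure μ,
        ∀ X : ℕ → Ω → ℤ, (∀ i, Measurable (X i)) →
          iIndepFun X μ →
          (∀ i, μ {ω | X i ω = 1} = ENNReal.ofReal (1 / 2) ∧
                μ {ω | X i ω = -1} = ENNReal.ofReal (1 / 2)) →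
          ∀ m n : ℕ, 1 ≤ m → 1 ≤ n →
            ENNReal.ofReal (1 - Real.exp (-(c * m) / n)) ≤
              μ {ω | ∀ t : ℕ, 1 ≤ t → t < n ^ 2 →
                  (∑ i ∈ Finset.range t, X i ω) ≠ (m : ℤ)} := by
  refine ⟨1/8, by norm_num, by norm_num, ?_⟩
  intro Ω _ μ hμ X hX hind hdist m n hm hn
  classical
  set T := n^2 - 1 with hT
  have hTn : T + 1 = n^2 := by
    rw [hT]; have : 1 ≤ n^2 := Nat.one_le_pow _ _ hn; omega
  -- the elementary events
  set A : (Fin T → Bool) → Set Ω :=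
    fun f => ⋂ i ∈ Finset.range T, X i ⁻¹' {Thm5Aux.stepv f i} with hA
  have hAmeas : ∀ f, MeasurableSet (A f) := by
    intro f
    apply MeasurableSet.biInter (Set.to_countable _)
    intro i _
    exact (hX i) (measurableSet_singleton _)
  have hhalf : ∀ i (c : ℤ), c = 1 ∨ c = -1 →
      μ (X i ⁻¹' {c}) = ENNReal.ofReal (1/2) := by
    intro i c hc
    have h1 : X i ⁻¹' {c} = {ω | X i ω = c} := by
      ext ω; simp
    rcases hc with h | h <;> rw [h1, h]
    · exact (hdist i).1
    · exact (hdist i).2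
  have hAf : ∀ f, μ (A f) = (ENNReal.ofReal (1/2))^T := by
    intro f
    rw [hA]
    have := hind.measure_inter_preimage_eq_mul (Finset.range T)
      (sets := fun i => {Thm5Aux.stepv f i})
      (fun i _ => measurableSet_singleton _)
    rw [this]
    rw [Finset.prod_congr rfl (fun i hi => hhalf i (Thm5Aux.stepv f i) ?_)]
    · rw [Finset.prod_const, Finset.card_range]
    · rw [Finset.mem_range] at hi
      simp only [Thm5Aux.stepv, dif_pos hi, Thm5Aux.v]
      split <;> simp
  -- events are inside the target set
  set E := {ω : Ω | ∀ t : ℕ, 1 ≤ t → t < n ^ 2 →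
      (∑ i ∈ Finset.range t, X i ω) ≠ (m : ℤ)} with hE
  have hsub : ∀ f ∈ Thm5Aux.good T m, A f ⊆ E := by
    intro f hf ω hω
    simp only [hA, Set.mem_iInter, Set.mem_preimage, Set.mem_singleton_iff] at hω
    intro t ht1 ht2
    have htT : t ≤ T := by omega
    have hsum : (∑ i ∈ Finset.range t, X i ω) = Thm5Aux.psum f t := by
      rw [Thm5Aux.psum]
      apply Finset.sum_congr rfl
      intro i hi
      rw [Finset.mem_range] at hi
      exact hω i (Finset.mem_range.mpr (by omega))
    rw [hsum]
    rw [Thm5Aux.good, Finset.mem_filter] at hf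
    intro hc
    exact hf.2 ⟨t, ht1, htT, hc⟩
  -- disjointness
  have hdisj : (↑(Thm5Aux.good T m) : Set (Fin T → Bool)).PairwiseDisjoint A := by
    intro f _ g _ hfg
    rw [Function.onFun, Set.disjoint_left]
    intro ω hωf hωg
    have : ∃ i : Fin T, f i ≠ g i := by
      by_contra hc
      push_neg at hc
      exact hfg (funext hc)
    obtain ⟨i, hi⟩ := this
    simp only [hA, Set.mem_iInter, Set.mem_preimage, Set.mem_singleton_iff] at hωf hωg
    have h1 := hωf i (Finset.mem_range.mpr i.isLt)
    have h2 := hωg i (Finset.mem_range.mpr i.isLt)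
    rw [h1] at h2
    simp only [Thm5Aux.stepv, dif_pos i.isLt, Fin.eta] at h2
    apply hi
    cases hf1 : f i <;> cases hg1 : g i <;> rw [hf1, hg1] at h2 <;>
      simp [Thm5Aux.v] at h2 <;> simp
  -- lower bound on the measure
  have hlow : ((Thm5Aux.good T m).card : ENNReal) * (ENNReal.ofReal (1/2))^T ≤ μ E := by
    calc ((Thm5Aux.good T m).card : ENNReal) * (ENNReal.ofReal (1/2))^T
        = ∑ f ∈ Thm5Aux.good T m, μ (A f) := by
          rw [Finset.sum_congr rfl (fun f _ => hAf f), Finset.sum_const, nsmul_eq_mul]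
      _ = μ (⋃ f ∈ Thm5Aux.good T m, A f) :=
          (measure_biUnion_finset hdisj (fun f _ => hAmeas f)).symm
      _ ≤ μ E := by
          apply measure_mono
          intro ω hω
          simp only [Set.mem_iUnion] at hω
          obtain ⟨f, hf, hωf⟩ := hω
          exact hsub f hf hωf
  -- convert to the stated bound
  have hmain := Thm5Aux.main_count m n hm hn
  rw [← hT] at hmain
  have hcast : ((Thm5Aux.good T m).card : ENNReal) * (ENNReal.ofReal (1/2))^T
      = ENNReal.ofReal (((Thm5Aux.good T m).card : ℝ) * (1/2)^T) := by
    rw [ENNReal.ofReal_mul (by positivity), ENNReal.ofReal_pow (by norm_num)]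
    congr 1
    simp
  have hexp_eq : -((1/8 : ℝ) * m) / n = -((m:ℝ)/(8*n)) := by ring
  rw [hexp_eq]
  refine le_trans ?_ hlow
  rw [hcast]
  apply ENNReal.ofReal_le_ofReal
  have hpow : (0:ℝ) < 2^T := by positivity
  rw [one_div, inv_pow, ← div_eq_mul_inv, le_div_iff₀ hpow]
  exact hmain
end

section
/- There exists an absolute constant c with 0 < c ≤ 1/2 such that for all q ∈ (0, 1/2), all positive integers m, and all integers n > 1, the hitting time τ'_m of the lazy simple random walk on ℤ with parameter q satisfies P(τ'_m ≥ n²) ≥ 1 − e^{−c·m/n}. -/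
open MeasureTheory ProbabilityTheory Finset

namespace T6

open scoped Classical

/-- step weight -/
noncomputable def w (q : ℝ) (x : ℤ) : ℝ :=
  if x = 1 then q else if x = -1 then q else if x = 0 then 1 - 2*q else 0

def steps : Finset ℤ := {-1, 0, 1}

noncomputable def pi (T : ℕ) : Finset (Fin T → ℤ) := Fintype.piFinset fun _ => steps

noncomputable def W (q : ℝ) {T : ℕ} (v : Fin T → ℤ) : ℝ := ∏ i, w q (v i)

def ext {T : ℕ} (v : Fin T → ℤ) (i : ℕ) : ℤ := if h : i < T then v ⟨i, h⟩ else 0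

def S {T : ℕ} (v : Fin T → ℤ) (t : ℕ) : ℤ := ∑ i ∈ range t, ext v i

variable {q : ℝ} {T : ℕ}

lemma w_nonneg (hq0 : 0 ≤ q) (hq2 : q ≤ 1/2) (x : ℤ) : 0 ≤ w q x := by
  unfold w; split_ifs <;> linarith

lemma w_neg (x : ℤ) : w q (-x) = w q x := by
  unfold w
  split_ifs <;> first | rfl | omega

lemma sum_w : ∑ x ∈ steps, w q x = 1 := by
  show ∑ x ∈ ({-1, 0, 1} : Finset ℤ), w q x = 1
  rw [show ({-1, 0, 1} : Finset ℤ) = insert (-1) (insert 0 {1}) from rfl]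
  rw [Finset.sum_insert (by decide), Finset.sum_insert (by decide), Finset.sum_singleton]
  norm_num [w]
  ring

lemma mem_steps {x : ℤ} : x ∈ steps ↔ x = -1 ∨ x = 0 ∨ x = 1 := by
  simp [steps]

lemma mem_pi {v : Fin T → ℤ} : v ∈ pi T ↔ ∀ i, v i ∈ steps := Fintype.mem_piFinset

lemma W_nonneg (hq0 : 0 ≤ q) (hq2 : q ≤ 1/2) (v : Fin T → ℤ) : 0 ≤ W q v :=
  Finset.prod_nonneg fun i _ => w_nonneg hq0 hq2 _

lemma sum_W_pi : ∑ v ∈ pi T, W q v = 1 := by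
  have : ∑ v ∈ pi T, W q v = ∏ _i : Fin T, ∑ x ∈ steps, w q x := by
    rw [Finset.prod_univ_sum]; rfl
  rw [this]
  simp [sum_w]

lemma ext_mem {v : Fin T → ℤ} (hv : v ∈ pi T) (i : ℕ) : ext v i = 0 ∨ ext v i ∈ steps := by
  unfold ext
  split_ifs with h
  · exact Or.inr (mem_pi.1 hv _)
  · exact Or.inl rfl

lemma abs_ext_le {v : Fin T → ℤ} (hv : v ∈ pi T) (i : ℕ) : |ext v i| ≤ 1 := by
  rcases ext_mem hv i with h | h
  · simp [h]
  · rcases mem_steps.1 h with h | h | h <;> simp [h]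

lemma S_zero (v : Fin T → ℤ) : S v 0 = 0 := by simp [S]

lemma S_succ (v : Fin T → ℤ) (t : ℕ) : S v (t+1) = S v t + ext v t := by
  simp [S, Finset.sum_range_succ]

lemma abs_S_le {v : Fin T → ℤ} (hv : v ∈ pi T) (t : ℕ) : |S v t| ≤ t := by
  calc |S v t| ≤ ∑ i ∈ range t, |ext v i| := Finset.abs_sum_le_sum_abs _ _
  _ ≤ ∑ _i ∈ range t, 1 := Finset.sum_le_sum fun i _ => abs_ext_le hv i
  _ = t := by simp

lemma S_top (v : Fin T → ℤ) : S v T = ∑ i, v i := by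
  rw [S, ← Fin.sum_univ_eq_sum_range (fun i => ext v i) T]
  exact Finset.sum_congr rfl fun i _ => by simp [ext, i.isLt]

lemma S_ge (v : Fin T → ℤ) {t : ℕ} (ht : T ≤ t) : S v t = S v T := by
  unfold S
  rw [← Finset.sum_range_add_sum_Ico _ ht]
  have : ∑ i ∈ Finset.Ico T t, ext v i = 0 :=
    Finset.sum_eq_zero fun i hi => by
      simp [ext, Nat.not_lt.2 (Finset.mem_Ico.1 hi).1]
  omega



/-- discrete intermediate value: if the walk ends at or above `m ≥ 1`, it hits `m`. -/
lemma ivt {v : Fin T → ℤ} (hv : v ∈ pi T) {m : ℤ} (hm : 1 ≤ m) (h : m ≤ S v T) :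
    ∃ t, 1 ≤ t ∧ t ≤ T ∧ S v t = m := by
  have hex : ∃ t, m ≤ S v t := ⟨T, h⟩
  classical
  let t0 := Nat.find hex
  have ht0 : m ≤ S v t0 := Nat.find_spec hex
  have ht0T : t0 ≤ T := Nat.find_min' hex h
  have ht0pos : 1 ≤ t0 := by
    rcases Nat.eq_zero_or_pos t0 with h0 | h0
    · exfalso; rw [h0, S_zero] at ht0; omega
    · exact h0
  refine ⟨t0, ht0pos, ht0T, ?_⟩
  have hprev : ¬ m ≤ S v (t0 - 1) := Nat.find_min hex (by omega)
  have hstep : S v t0 = S v (t0 - 1) + ext v (t0 - 1) := by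
    have h' := S_succ v (t0 - 1)
    have : t0 - 1 + 1 = t0 := by omega
    rwa [this] at h'
  have habs := abs_le.1 (abs_ext_le hv (t0 - 1))
  omega

/-- the hitting event -/
def Hit (m : ℤ) {T : ℕ} (v : Fin T → ℤ) : Prop := ∃ t, 1 ≤ t ∧ t ≤ T ∧ S v t = m

noncomputable def tau (m : ℤ) {T : ℕ} (v : Fin T → ℤ) (h : Hit m v) : ℕ := Nat.find h

lemma tau_spec (m : ℤ) {v : Fin T → ℤ} (h : Hit m v) :
    1 ≤ tau m v h ∧ tau m v h ≤ T ∧ S v (tau m v h) = m := Nat.find_spec h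

lemma tau_min (m : ℤ) {v : Fin T → ℤ} (h : Hit m v) {t : ℕ}
    (ht : t < tau m v h) : ¬ (1 ≤ t ∧ t ≤ T ∧ S v t = m) := Nat.find_min h ht

/-- the reflection map -/
noncomputable def R (m : ℤ) {T : ℕ} (v : Fin T → ℤ) : Fin T → ℤ :=
  if h : Hit m v then (fun i => if (i : ℕ) < tau m v h then v i else - v i) else v

lemma ext_R (m : ℤ) {v : Fin T → ℤ} (h : Hit m v) (i : ℕ) :
    ext (R m v) i = if i < tau m v h then ext v i else - ext v i := by
  rw [R, dif_pos h]
  unfold ext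
  split_ifs <;> simp_all

lemma S_R_le (m : ℤ) {v : Fin T → ℤ} (h : Hit m v) {t : ℕ} (ht : t ≤ tau m v h) :
    S (R m v) t = S v t := by
  unfold S
  refine Finset.sum_congr rfl fun i hi => ?_
  rw [ext_R m h, if_pos]
  have := Finset.mem_range.1 hi
  omega

lemma S_R_ge (m : ℤ) {v : Fin T → ℤ} (h : Hit m v) {t : ℕ} (ht : tau m v h ≤ t) :
    S (R m v) t = 2 * m - S v t := by
  obtain ⟨h1, h2, h3⟩ := tau_spec m h
  set τ := tau m v h with hτ
  have key : ∀ u, S (R m v) (τ + u) = 2 * m - S v (τ + u) := by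
    intro u
    induction u with
    | zero =>
      have h' := S_R_le m h (le_refl τ)
      rw [Nat.add_zero, h', h3]
      ring
    | succ u ih =>
      rw [show τ + (u+1) = (τ + u) + 1 from rfl, S_succ, S_succ, ih,
        ext_R m h, if_neg (by omega)]
      ring
  have : t = τ + (t - τ) := by omega
  rw [this, key]

lemma hit_R (m : ℤ) {v : Fin T → ℤ} (h : Hit m v) : Hit m (R m v) := by
  obtain ⟨h1, h2, h3⟩ := tau_spec m h
  exact ⟨tau m v h, h1, h2, by rw [S_R_le m h (le_refl _)]; exact h3⟩

lemma tau_R (m : ℤ) {v : Fin T → ℤ} (h : Hit m v) :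
    tau m (R m v) (hit_R m h) = tau m v h := by
  rw [tau]; refine (Nat.find_eq_iff _).2 ?_
  obtain ⟨h1, h2, h3⟩ := tau_spec m h
  refine ⟨⟨h1, h2, by rw [S_R_le m h (le_refl _)]; exact h3⟩, fun t ht => ?_⟩
  intro ⟨ht1, ht2, ht3⟩
  rw [S_R_le m h (le_of_lt ht)] at ht3
  exact tau_min m h ht ⟨ht1, ht2, ht3⟩

lemma R_involutive (m : ℤ) {v : Fin T → ℤ} (h : Hit m v) : R m (R m v) = v := by
  have hR := hit_R m h
  funext i
  rw [R, dif_pos hR]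
  simp only [tau_R m h]
  rw [R, dif_pos h]
  split_ifs <;> simp

lemma R_mem_pi (m : ℤ) {v : Fin T → ℤ} (hv : v ∈ pi T) : R m v ∈ pi T := by
  rw [mem_pi]
  intro i
  by_cases h : Hit m v
  · rw [R, dif_pos h]
    split_ifs
    · exact mem_pi.1 hv i
    · rcases mem_steps.1 (mem_pi.1 hv i) with h' | h' | h' <;> simp [mem_steps, h']
  · rw [R, dif_neg h]; exact mem_pi.1 hv i

lemma W_R (m : ℤ) (v : Fin T → ℤ) : W q (R m v) = W q v := by
  unfold W
  refine Finset.prod_congr rfl fun i _ => ?_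
  by_cases h : Hit m v
  · rw [R, dif_pos h]
    split_ifs
    · rfl
    · exact w_neg _
  · rw [R, dif_neg h]



lemma reflection_bij (q : ℝ) (m : ℤ) (hm : 1 ≤ m) :
    ∑ v ∈ (pi T).filter (fun v => Hit m v ∧ S v T ≤ m - 1), W q v
      = ∑ v ∈ (pi T).filter (fun v => m + 1 ≤ S v T), W q v := by
  refine Finset.sum_nbij' (R m) (R m) ?_ ?_ ?_ ?_ ?_
  · intro v hv
    rw [Finset.mem_filter] at hv ⊢
    obtain ⟨hvpi, hhit, hle⟩ := hv
    obtain ⟨h1, h2, h3⟩ := tau_spec m hhit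
    refine ⟨R_mem_pi m hvpi, ?_⟩
    rw [S_R_ge m hhit h2]
    omega
  · intro u hu
    rw [Finset.mem_filter] at hu ⊢
    obtain ⟨hupi, hge⟩ := hu
    have hhit : Hit m u := ivt hupi hm (by omega)
    obtain ⟨h1, h2, h3⟩ := tau_spec m hhit
    refine ⟨R_mem_pi m hupi, hit_R m hhit, ?_⟩
    rw [S_R_ge m hhit h2]
    omega
  · intro v hv
    rw [Finset.mem_filter] at hv
    exact R_involutive m hv.2.1
  · intro u hu
    rw [Finset.mem_filter] at hu
    exact R_involutive m (ivt hu.1 hm (by omega))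
  · intro v _
    exact (W_R m v).symm

/-- reflection identity: the hitting probability splits into two tail probabilities. -/
lemma reflection_identity (q : ℝ) (m : ℤ) (hm : 1 ≤ m) :
    ∑ v ∈ (pi T).filter (fun v => Hit m v), W q v
      = ∑ v ∈ (pi T).filter (fun v => m ≤ S v T), W q v
        + ∑ v ∈ (pi T).filter (fun v => m + 1 ≤ S v T), W q v := by
  classical
  rw [← Finset.sum_filter_add_sum_filter_not ((pi T).filter (fun v => Hit m v))
    (fun v => m ≤ S v T), Finset.filter_filter, Finset.filter_filter]
  congr 1
  · apply Finset.sum_congr _ (fun _ _ => rfl)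
    apply Finset.filter_congr
    intro v hv
    constructor
    · exact fun h => h.2
    · intro h
      exact ⟨ivt hv hm h, h⟩
  · rw [← reflection_bij q m hm]
    apply Finset.sum_congr _ (fun _ _ => rfl)
    apply Finset.filter_congr
    intro v hv
    constructor
    · rintro ⟨h1, h2⟩
      exact ⟨h1, by omega⟩
    · rintro ⟨h1, h2⟩
      exact ⟨h1, by omega⟩



lemma ext_neg (v : Fin T → ℤ) (i : ℕ) : ext (fun j => - v j) i = - ext v i := by
  unfold ext; split_ifs <;> simp

lemma S_neg (v : Fin T → ℤ) (t : ℕ) : S (fun j => - v j) t = - S v t := by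
  unfold S
  rw [← Finset.sum_neg_distrib]
  exact Finset.sum_congr rfl fun i _ => ext_neg v i

lemma neg_mem_pi {v : Fin T → ℤ} (hv : v ∈ pi T) : (fun j => - v j) ∈ pi T := by
  rw [mem_pi]
  intro i
  rcases mem_steps.1 (mem_pi.1 hv i) with h | h | h <;> simp [mem_steps, h]

lemma W_neg_fn (q : ℝ) (v : Fin T → ℤ) : W q (fun j => - v j) = W q v :=
  Finset.prod_congr rfl fun i _ => w_neg _

/-- negation symmetry for end-point events -/
lemma neg_symm (q : ℝ) (p : ℤ → Prop) [DecidablePred p] :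
    ∑ v ∈ (pi T).filter (fun v => p (S v T)), W q v
      = ∑ v ∈ (pi T).filter (fun v => p (- S v T)), W q v := by
  classical
  refine Finset.sum_nbij' (fun v => fun j => - v j) (fun v => fun j => - v j) ?_ ?_ ?_ ?_ ?_
  · intro v hv
    rw [Finset.mem_filter] at hv ⊢
    refine ⟨neg_mem_pi hv.1, ?_⟩
    rw [S_neg, neg_neg]
    exact hv.2
  · intro v hv
    rw [Finset.mem_filter] at hv ⊢
    refine ⟨neg_mem_pi hv.1, ?_⟩
    rw [S_neg]
    exact hv.2
  · intro v _; funext j; simp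
  · intro v _; funext j; simp
  · intro v _; exact (W_neg_fn q v).symm

lemma exp_quad {x : ℝ} (h : |x| ≤ 1) : Real.exp x ≤ 1 + x + 3/4 * x^2 := by
  have h2 := Real.exp_bound h (by norm_num : (0:ℕ) < 2)
  have hs : ∑ m ∈ Finset.range 2, x ^ m / m.factorial = 1 + x := by
    rw [Finset.sum_range_succ, Finset.sum_range_one]
    simp [Nat.factorial]
  rw [hs] at h2
  have h3 := (abs_sub_le_iff.1 h2).1
  have h4 : |x| ^ 2 = x ^ 2 := sq_abs x
  have h5 : ((2:ℕ).succ / ((2:ℕ).factorial * (2:ℕ)) : ℝ) = 3 / 4 := by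
    norm_num [Nat.factorial]
  rw [h4, h5] at h3
  linarith

lemma mgf_eq (q lam : ℝ) :
    ∑ v ∈ pi T, W q v * Real.exp (lam * ((S v T : ℤ) : ℝ))
      = (∑ x ∈ steps, w q x * Real.exp (lam * (x : ℝ))) ^ T := by
  have h1 : ∀ v ∈ pi T, W q v * Real.exp (lam * ((S v T : ℤ) : ℝ))
      = ∏ i, (w q (v i) * Real.exp (lam * ((v i : ℤ) : ℝ))) := by
    intro v _
    rw [S_top]
    push_cast
    rw [Finset.mul_sum, Real.exp_sum, W, Finset.prod_mul_distrib]
  rw [Finset.sum_congr rfl h1]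
  have h2 := Finset.prod_univ_sum (fun _ : Fin T => steps)
    (fun _ x => w q x * Real.exp (lam * (x:ℝ)))
  rw [pi, ← h2, Finset.prod_const, Finset.card_univ, Fintype.card_fin]

lemma base_le (hq0 : 0 ≤ q) (hq2 : q ≤ 1/2) {lam : ℝ} (h0 : 0 ≤ lam) (h1 : lam ≤ 1) :
    ∑ x ∈ steps, w q x * Real.exp (lam * (x : ℝ)) ≤ Real.exp (lam ^ 2) := by
  have hsum : ∑ x ∈ steps, w q x * Real.exp (lam * (x:ℝ))
      = q * Real.exp (-lam) + (1 - 2*q) * 1 + q * Real.exp lam := by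
    show ∑ x ∈ ({-1, 0, 1} : Finset ℤ), w q x * Real.exp (lam * (x:ℝ)) = _
    rw [show ({-1, 0, 1} : Finset ℤ) = insert (-1) (insert 0 {1}) from rfl]
    rw [Finset.sum_insert (by decide), Finset.sum_insert (by decide), Finset.sum_singleton]
    norm_num [w]
    ring
  have e1 : Real.exp lam ≤ 1 + lam + 3/4 * lam^2 := exp_quad (by rw [abs_of_nonneg h0]; exact h1)
  have e2 : Real.exp (-lam) ≤ 1 - lam + 3/4 * lam^2 := by
    have := exp_quad (x := -lam) (by rw [abs_neg, abs_of_nonneg h0]; exact h1)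
    calc Real.exp (-lam) ≤ 1 + (-lam) + 3/4 * (-lam)^2 := this
    _ = 1 - lam + 3/4 * lam^2 := by ring
  have hb : q * Real.exp (-lam) + (1 - 2*q) * 1 + q * Real.exp lam ≤ 1 + 3/4 * lam^2 := by
    nlinarith [sq_nonneg lam]
  have hc : (1 : ℝ) + 3/4 * lam^2 ≤ Real.exp (lam^2) := by
    have := Real.add_one_le_exp (lam^2)
    nlinarith [sq_nonneg lam]
  rw [hsum]
  linarith

/-- Chernoff/Hoeffding tail bound -/
lemma hoeffding (hq0 : 0 ≤ q) (hq2 : q ≤ 1/2) {lam : ℝ} (h0 : 0 ≤ lam) (h1 : lam ≤ 1)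
    (m : ℤ) :
    ∑ v ∈ (pi T).filter (fun v => m ≤ S v T), W q v
      ≤ Real.exp (T * lam ^ 2 - lam * m) := by
  have key : ∑ v ∈ (pi T).filter (fun v => m ≤ S v T), W q v
      ≤ ∑ v ∈ pi T, W q v * Real.exp (lam * ((S v T : ℤ) : ℝ)) * Real.exp (- lam * m) := by
    rw [← Finset.sum_filter_add_sum_filter_not (pi T) (fun v => m ≤ S v T)
      (fun v => W q v * Real.exp (lam * ((S v T : ℤ) : ℝ)) * Real.exp (- lam * m))]
    have hA : ∑ v ∈ (pi T).filter (fun v => m ≤ S v T), W q v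
        ≤ ∑ v ∈ (pi T).filter (fun v => m ≤ S v T),
            W q v * Real.exp (lam * ((S v T : ℤ) : ℝ)) * Real.exp (- lam * m) := by
      apply Finset.sum_le_sum
      intro v hv
      rw [Finset.mem_filter] at hv
      have hW := W_nonneg hq0 hq2 v
      have : (1:ℝ) ≤ Real.exp (lam * ((S v T : ℤ) : ℝ)) * Real.exp (- lam * m) := by
        rw [← Real.exp_add, ← Real.exp_zero]
        apply Real.exp_le_exp.2
        have : (m : ℝ) ≤ ((S v T : ℤ) : ℝ) := by exact_mod_cast hv.2
        nlinarith
      nlinarith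
    have hB : (0:ℝ) ≤ ∑ v ∈ (pi T).filter (fun v => ¬ m ≤ S v T),
        W q v * Real.exp (lam * ((S v T : ℤ) : ℝ)) * Real.exp (- lam * m) := by
      apply Finset.sum_nonneg
      intro v hv
      have hW := W_nonneg hq0 hq2 v
      positivity
    linarith
  calc ∑ v ∈ (pi T).filter (fun v => m ≤ S v T), W q v
      ≤ ∑ v ∈ pi T, W q v * Real.exp (lam * ((S v T : ℤ) : ℝ)) * Real.exp (- lam * m) := key
    _ = (∑ v ∈ pi T, W q v * Real.exp (lam * ((S v T : ℤ) : ℝ))) * Real.exp (- lam * m) := by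
        rw [Finset.sum_mul]
    _ ≤ Real.exp (lam ^ 2) ^ T * Real.exp (- lam * m) := by
        apply mul_le_mul_of_nonneg_right _ (Real.exp_nonneg _)
        rw [mgf_eq]
        apply pow_le_pow_left₀ _ (base_le hq0 hq2 h0 h1)
        apply Finset.sum_nonneg
        intro x _
        have := w_nonneg hq0 hq2 x
        positivity
    _ = Real.exp (T * lam ^ 2 - lam * m) := by
        rw [← Real.exp_nat_mul, ← Real.exp_add]
        ring_nf



lemma sum_w_id (q : ℝ) : ∑ x ∈ steps, w q x * (x : ℝ) = 0 := by
  show ∑ x ∈ ({-1, 0, 1} : Finset ℤ), w q x * (x:ℝ) = 0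
  rw [show ({-1, 0, 1} : Finset ℤ) = insert (-1) (insert 0 {1}) from rfl]
  rw [Finset.sum_insert (by decide), Finset.sum_insert (by decide), Finset.sum_singleton]
  norm_num [w]

lemma sum_w_sq (q : ℝ) : ∑ x ∈ steps, w q x * ((x : ℝ))^2 = 2*q := by
  show ∑ x ∈ ({-1, 0, 1} : Finset ℤ), w q x * ((x:ℝ))^2 = 2*q
  rw [show ({-1, 0, 1} : Finset ℤ) = insert (-1) (insert 0 {1}) from rfl]
  rw [Finset.sum_insert (by decide), Finset.sum_insert (by decide), Finset.sum_singleton]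
  norm_num [w]
  ring

lemma cross_term (q : ℝ) (i j : Fin T) :
    ∑ v ∈ pi T, W q v * ((v i : ℤ) : ℝ) * ((v j : ℤ) : ℝ)
      = if i = j then 2*q else 0 := by
  classical
  have hprod : ∀ v : Fin T → ℤ, W q v * ((v i : ℤ) : ℝ) * ((v j : ℤ) : ℝ)
      = ∏ k, (w q (v k) * (if k = i then ((v k : ℤ):ℝ) else 1)
          * (if k = j then ((v k : ℤ):ℝ) else 1)) := by
    intro v
    rw [Finset.prod_mul_distrib, Finset.prod_mul_distrib]
    rw [Finset.prod_ite_eq' Finset.univ i (fun k => ((v k : ℤ):ℝ)),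
        Finset.prod_ite_eq' Finset.univ j (fun k => ((v k : ℤ):ℝ))]
    simp [W]
  rw [Finset.sum_congr rfl (fun v _ => hprod v)]
  have h2 := Finset.prod_univ_sum (fun _ : Fin T => steps)
    (fun k x => w q x * (if k = i then ((x : ℤ):ℝ) else 1) * (if k = j then ((x : ℤ):ℝ) else 1))
  rw [pi, ← h2]
  by_cases hij : i = j
  · subst hij
    rw [if_pos rfl]
    rw [Finset.prod_eq_single i]
    · simp only [if_pos rfl]
      rw [← sum_w_sq q]
      exact Finset.sum_congr rfl fun x _ => by simp; ring
    · intro k _ hk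
      simp only [if_neg hk]
      simpa using sum_w (q := q)
    · intro h; exact absurd (Finset.mem_univ i) h
  · rw [if_neg hij]
    apply Finset.prod_eq_zero (Finset.mem_univ i)
    simp only [if_pos rfl, if_neg hij]
    rw [← sum_w_id q]
    exact Finset.sum_congr rfl fun x _ => by simp

lemma second_moment (q : ℝ) :
    ∑ v ∈ pi T, W q v * (((S v T : ℤ) : ℝ))^2 = 2*q*T := by
  have expand : ∀ v : Fin T → ℤ, W q v * (((S v T : ℤ) : ℝ))^2
      = ∑ i, ∑ j, W q v * ((v i : ℤ):ℝ) * ((v j : ℤ):ℝ) := by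
    intro v
    rw [S_top]
    push_cast
    rw [sq, Finset.sum_mul_sum]
    rw [Finset.mul_sum]
    refine Finset.sum_congr rfl fun i _ => ?_
    rw [Finset.mul_sum]
    exact Finset.sum_congr rfl fun j _ => by ring
  rw [Finset.sum_congr rfl (fun v _ => expand v)]
  rw [Finset.sum_comm]
  have : ∀ i : Fin T, ∑ v ∈ pi T, ∑ j, W q v * ((v i : ℤ):ℝ) * ((v j : ℤ):ℝ)
      = ∑ j, ∑ v ∈ pi T, W q v * ((v i : ℤ):ℝ) * ((v j : ℤ):ℝ) := fun i => Finset.sum_comm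

  rw [Finset.sum_congr rfl (fun i _ => this i)]
  rw [Finset.sum_congr rfl (fun i _ => Finset.sum_congr rfl (fun j _ => cross_term q i j))]
  simp [Finset.sum_ite_eq]
  ring

/-- Chebyshev tail bound -/
lemma chebyshev (hq0 : 0 ≤ q) (hq2 : q ≤ 1/2) (L : ℕ) :
    ∑ v ∈ (pi T).filter (fun v => ¬ |S v T| ≤ (L:ℤ)), W q v
      ≤ 2*q*T / ((L:ℝ)+1)^2 := by
  have key : ∀ v ∈ (pi T).filter (fun v => ¬ |S v T| ≤ (L:ℤ)),
      W q v ≤ W q v * (((S v T : ℤ) : ℝ))^2 / ((L:ℝ)+1)^2 := by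
    intro v hv
    rw [Finset.mem_filter] at hv
    have h1 : ((L:ℤ)+1) ≤ |S v T| := by omega
    have h2 : ((L:ℝ)+1)^2 ≤ (((S v T : ℤ) : ℝ))^2 := by
      have := sq_abs ((S v T : ℤ) : ℝ)
      have habs : ((L:ℝ)+1) ≤ |((S v T : ℤ) : ℝ)| := by
        rw [← Int.cast_abs]
        exact_mod_cast h1
      nlinarith [abs_nonneg (((S v T : ℤ) : ℝ))]
    have hW := W_nonneg hq0 hq2 v
    have hpos : (0:ℝ) < ((L:ℝ)+1)^2 := by positivity
    rw [le_div_iff₀ hpos]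
    nlinarith
  calc ∑ v ∈ (pi T).filter (fun v => ¬ |S v T| ≤ (L:ℤ)), W q v
      ≤ ∑ v ∈ (pi T).filter (fun v => ¬ |S v T| ≤ (L:ℤ)),
          W q v * (((S v T : ℤ) : ℝ))^2 / ((L:ℝ)+1)^2 := Finset.sum_le_sum key
    _ ≤ ∑ v ∈ pi T, W q v * (((S v T : ℤ) : ℝ))^2 / ((L:ℝ)+1)^2 := by
        apply Finset.sum_le_sum_of_subset_of_nonneg (Finset.filter_subset _ _)
        intro v hv _
        have hW := W_nonneg hq0 hq2 v
        positivity
    _ = 2*q*T / ((L:ℝ)+1)^2 := by rw [← Finset.sum_div, second_moment]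

/-- splitting a walk of length `T₁ + T₂` into independent halves -/
lemma split_sum (q : ℝ) (T₁ T₂ : ℕ) (F : ℤ → ℤ → ℝ) :
    ∑ v ∈ pi (T₁ + T₂), W q v * F (S v T₁) (S v (T₁ + T₂) - S v T₁)
      = ∑ a ∈ pi T₁, ∑ b ∈ pi T₂, W q a * W q b * F (S a T₁) (S b T₂) := by
  classical
  rw [← Finset.sum_product']
  have hSl : ∀ v : Fin (T₁ + T₂) → ℤ,
      S (fun i : Fin T₁ => v (Fin.castAdd T₂ i)) T₁ = S v T₁ := by
    intro v
    unfold S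
    refine Finset.sum_congr rfl fun i hi => ?_
    have hi1 : i < T₁ := Finset.mem_range.1 hi
    have hi2 : i < T₁ + T₂ := by omega
    simp only [ext, dif_pos hi1, dif_pos hi2]
    congr 1
  have hStot : ∀ v : Fin (T₁ + T₂) → ℤ,
      S v (T₁ + T₂) = S (fun i : Fin T₁ => v (Fin.castAdd T₂ i)) T₁
        + S (fun i : Fin T₂ => v (Fin.natAdd T₁ i)) T₂ := by
    intro v
    rw [S_top, S_top, S_top]
    exact Fin.sum_univ_add (fun i => v i)
  have hW : ∀ v : Fin (T₁ + T₂) → ℤ,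
      W q v = W q (fun i : Fin T₁ => v (Fin.castAdd T₂ i))
        * W q (fun i : Fin T₂ => v (Fin.natAdd T₁ i)) := by
    intro v
    exact Fin.prod_univ_add (fun i => w q (v i))
  refine Finset.sum_nbij'
    (fun v => (fun i => v (Fin.castAdd T₂ i), fun i => v (Fin.natAdd T₁ i)))
    (fun p => Fin.append p.1 p.2) ?_ ?_ ?_ ?_ ?_
  · intro v hv
    rw [Finset.mem_product]
    constructor <;> (rw [mem_pi]; intro i; exact mem_pi.1 hv _)
  · intro p hp
    rw [Finset.mem_product] at hp
    rw [mem_pi]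
    intro i
    refine Fin.addCases (fun i => ?_) (fun i => ?_) i
    · show Fin.append p.1 p.2 (Fin.castAdd T₂ i) ∈ steps
      rw [Fin.append_left]; exact mem_pi.1 hp.1 i
    · show Fin.append p.1 p.2 (Fin.natAdd T₁ i) ∈ steps
      rw [Fin.append_right]; exact mem_pi.1 hp.2 i
  · intro v _
    exact Fin.append_castAdd_natAdd
  · intro p _
    have h1 : (fun i => Fin.append p.1 p.2 (Fin.castAdd T₂ i)) = p.1 :=
      funext fun i => Fin.append_left _ _ i
    have h2 : (fun i => Fin.append p.1 p.2 (Fin.natAdd T₁ i)) = p.2 :=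
      funext fun i => Fin.append_right _ _ i
    obtain ⟨p1, p2⟩ := p
    simp only at h1 h2 ⊢
    rw [h1, h2]
  · intro v _
    rw [hW v, hStot v, ← hSl v]
    have : S (fun i : Fin T₁ => v (Fin.castAdd T₂ i)) T₁
        + S (fun i : Fin T₂ => v (Fin.natAdd T₁ i)) T₂
        - S (fun i : Fin T₁ => v (Fin.castAdd T₂ i)) T₁
        = S (fun i : Fin T₂ => v (Fin.natAdd T₁ i)) T₂ := by ring
    rw [this]



lemma same_block {m x y : ℤ} (hm : 1 ≤ m) (h : x / m = y / m) : |x - y| ≤ m - 1 := by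
  have hx := Int.mul_ediv_add_emod x m
  have hy := Int.mul_ediv_add_emod y m
  have hx1 := Int.emod_nonneg x (by omega : m ≠ 0)
  have hx2 := Int.emod_lt_of_pos x (by omega : 0 < m)
  have hy1 := Int.emod_nonneg y (by omega : m ≠ 0)
  have hy2 := Int.emod_lt_of_pos y (by omega : 0 < m)
  have hmm : m * (x / m) = m * (y / m) := by rw [h]
  have hxy : x - y = x % m - y % m := by linarith
  rw [abs_le]
  omega

lemma block_cover {m x L : ℤ} (hm : 1 ≤ m) (h : |x| ≤ L) :
    x / m ∈ Finset.Icc (-(L / m + 1)) (L / m) := by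
  rw [Finset.mem_Icc]
  have habs := abs_le.1 h
  constructor
  · rw [Int.le_ediv_iff_mul_le (by omega : (0:ℤ) < m)]
    have h1 := Int.mul_ediv_add_emod L m
    have h2 := Int.emod_nonneg L (by omega : m ≠ 0)
    have h3 := Int.emod_lt_of_pos L (by omega : 0 < m)
    have heq : -(L / m + 1) * m = -(m * (L / m)) - m := by ring
    rw [heq]
    linarith
  · exact Int.ediv_le_ediv (by omega) habs.2

noncomputable def PB (q : ℝ) (N : ℕ) (m i : ℤ) : ℝ :=
  ∑ v ∈ (pi N).filter (fun v => S v N / m = i), W q v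

lemma PB_nonneg (hq0 : 0 ≤ q) (hq2 : q ≤ 1/2) (N : ℕ) (m i : ℤ) : 0 ≤ PB q N m i :=
  Finset.sum_nonneg fun v _ => W_nonneg hq0 hq2 v

/-- the key anti-concentration step -/
lemma blocks_lower (hq0 : 0 ≤ q) (hq2 : q ≤ 1/2) (N : ℕ) {m : ℤ} (hm : 1 ≤ m) (K : ℤ) :
    ∑ i ∈ Finset.Icc (-K) K, (PB q N m i) ^ 2
      ≤ ∑ v ∈ (pi (N + N)).filter (fun v => |S v (N + N)| ≤ m - 1), W q v := by
  classical
  set F : ℤ → ℤ → ℝ := fun k l => if |k + l| ≤ m - 1 then (1:ℝ) else 0 with hF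
  have hRHS : ∑ v ∈ (pi (N + N)).filter (fun v => |S v (N + N)| ≤ m - 1), W q v
      = ∑ v ∈ pi (N + N), W q v * F (S v N) (S v (N + N) - S v N) := by
    rw [Finset.sum_filter]
    refine Finset.sum_congr rfl fun v _ => ?_
    have : S v N + (S v (N + N) - S v N) = S v (N + N) := by ring
    rw [hF]
    simp only [this]
    split_ifs <;> ring
  set fa : ℤ → Finset (Fin N → ℤ) := fun i => (pi N).filter (fun v => S v N / m = i) with hfa
  set fb : ℤ → Finset (Fin N → ℤ) := fun i => (pi N).filter (fun v => (- S v N) / m = i) with hfb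
  have hPBb : ∀ i, PB q N m i = ∑ v ∈ fb i, W q v := by
    intro i
    rw [PB, hfb]
    have h := neg_symm (T := N) q (fun s => s / m = i)
    convert h using 3 <;> apply Subsingleton.elim
  set U : Finset ((Fin N → ℤ) × (Fin N → ℤ)) :=
    (Finset.Icc (-K) K).biUnion (fun i => fa i ×ˢ fb i) with hU
  have hdisj : (↑(Finset.Icc (-K) K) : Set ℤ).PairwiseDisjoint (fun i => fa i ×ˢ fb i) := by
    intro i _ j _ hij
    simp only [Function.onFun]
    rw [Finset.disjoint_left]
    intro p hp1 hp2
    rw [Finset.mem_product] at hp1 hp2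
    have e1 : S p.1 N / m = i := (Finset.mem_filter.1 hp1.1).2
    have e2 : S p.1 N / m = j := (Finset.mem_filter.1 hp2.1).2
    exact hij (e1 ▸ e2)
  have hsumU : ∑ p ∈ U, W q p.1 * W q p.2 = ∑ i ∈ Finset.Icc (-K) K, (PB q N m i) ^ 2 := by
    rw [hU, Finset.sum_biUnion hdisj]
    refine Finset.sum_congr rfl fun i _ => ?_
    rw [Finset.sum_product' (fa i) (fb i) (fun a b => W q a * W q b),
      ← Finset.sum_mul_sum, ← hPBb, PB, sq]
  have hUsub : U ⊆ (pi N) ×ˢ (pi N) := by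
    intro p hp
    rw [hU, Finset.mem_biUnion] at hp
    obtain ⟨i, _, hp⟩ := hp
    rw [Finset.mem_product] at hp ⊢
    exact ⟨Finset.filter_subset _ _ hp.1, Finset.filter_subset _ _ hp.2⟩
  have hFone : ∀ p ∈ U, W q p.1 * W q p.2 = W q p.1 * W q p.2 * F (S p.1 N) (S p.2 N) := by
    intro p hp
    rw [hU, Finset.mem_biUnion] at hp
    obtain ⟨i, _, hp⟩ := hp
    rw [Finset.mem_product] at hp
    have e1 : S p.1 N / m = i := (Finset.mem_filter.1 hp.1).2
    have e2 : (- S p.2 N) / m = i := (Finset.mem_filter.1 hp.2).2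
    have hblock := same_block hm (e1.trans e2.symm)
    have : |S p.1 N + S p.2 N| ≤ m - 1 := by
      have : S p.1 N - (- S p.2 N) = S p.1 N + S p.2 N := by ring
      rwa [this] at hblock
    rw [hF]
    simp only [this, if_pos]
    ring
  calc ∑ i ∈ Finset.Icc (-K) K, (PB q N m i) ^ 2
      = ∑ p ∈ U, W q p.1 * W q p.2 := hsumU.symm
    _ = ∑ p ∈ U, W q p.1 * W q p.2 * F (S p.1 N) (S p.2 N) := Finset.sum_congr rfl hFone
    _ ≤ ∑ p ∈ (pi N) ×ˢ (pi N), W q p.1 * W q p.2 * F (S p.1 N) (S p.2 N) := by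
        apply Finset.sum_le_sum_of_subset_of_nonneg hUsub
        intro p _ _
        have h1 := W_nonneg hq0 hq2 p.1
        have h2 := W_nonneg hq0 hq2 p.2
        rw [hF]
        dsimp only
        split_ifs <;> nlinarith
    _ = ∑ a ∈ pi N, ∑ b ∈ pi N, W q a * W q b * F (S a N) (S b N) :=
        Finset.sum_product' (pi N) (pi N) (fun a b => W q a * W q b * F (S a N) (S b N))
    _ = ∑ v ∈ pi (N + N), W q v * F (S v N) (S v (N + N) - S v N) := (split_sum q N N F).symm
    _ = ∑ v ∈ (pi (N + N)).filter (fun v => |S v (N + N)| ≤ m - 1), W q v := hRHS.symm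

/-- the mass captured by blocks covering `[-L, L]` -/
lemma blocks_mass (q : ℝ) (N : ℕ) (m K : ℤ) :
    ∑ i ∈ Finset.Icc (-K) K, PB q N m i
      = ∑ v ∈ (pi N).filter (fun v => S v N / m ∈ Finset.Icc (-K) K), W q v := by
  classical
  have hdisj : (↑(Finset.Icc (-K) K) : Set ℤ).PairwiseDisjoint
      (fun i => (pi N).filter (fun v => S v N / m = i)) := by
    intro i _ j _ hij
    simp only [Function.onFun]
    rw [Finset.disjoint_left]
    intro v hv1 hv2
    have e1 : S v N / m = i := (Finset.mem_filter.1 hv1).2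
    have e2 : S v N / m = j := (Finset.mem_filter.1 hv2).2
    exact hij (e1 ▸ e2)
  simp only [PB]
  rw [← Finset.sum_biUnion hdisj]
  apply Finset.sum_congr _ (fun _ _ => rfl)
  ext v
  rw [Finset.mem_biUnion]
  constructor
  · rintro ⟨i, hi, hv⟩
    rw [Finset.mem_filter] at hv ⊢
    exact ⟨hv.1, hv.2 ▸ hi⟩
  · intro hv
    rw [Finset.mem_filter] at hv
    exact ⟨S v N / m, hv.2, Finset.mem_filter.2 ⟨hv.1, rfl⟩⟩



lemma S_one (b : Fin 1 → ℤ) : S b 1 = b 0 := by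
  rw [S, Finset.sum_range_one]
  rfl

lemma W_one (q : ℝ) (b : Fin 1 → ℤ) : W q b = w q (b 0) := Fin.prod_univ_one _

lemma sum_pi_one (q : ℝ) (g : ℤ → ℝ) :
    ∑ b ∈ pi 1, W q b * g (S b 1) = ∑ x ∈ steps, w q x * g x := by
  classical
  refine Finset.sum_nbij' (fun b => b 0) (fun x => fun _ => x) ?_ ?_ ?_ ?_ ?_
  · intro b hb; exact mem_pi.1 hb 0
  · intro x hx; exact mem_pi.2 fun _ => hx
  · intro b _
    funext i
    have : i = 0 := Subsingleton.elim i 0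
    rw [this]
  · intro x _; rfl
  · intro b _
    rw [W_one, S_one]

lemma sum_pi_zero (q : ℝ) (g : ℤ → ℝ) :
    ∑ b ∈ pi 0, W q b * g (S b 0) = g 0 := by
  have h1 : ∀ b ∈ pi 0, W q b * g (S b 0) = g 0 := by
    intro b _
    rw [S_zero, W]
    simp
  rw [Finset.sum_congr rfl h1, Finset.sum_const]
  have : (pi 0).card = 1 := by
    rw [pi, Fintype.card_piFinset]
    simp
  rw [this, one_smul]

/-- second factor for the parity-fixing step -/
lemma step_factor (hq0 : 0 < q) (hq2 : q < 1/2) {r : ℕ} (hr : r ≤ 1) :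
    (1/2 : ℝ) ≤ ∑ b ∈ pi r, W q b * (if S b r = 0 ∨ S b r = -1 then (1:ℝ) else 0) := by
  interval_cases r
  · rw [sum_pi_zero q (fun s => if s = 0 ∨ s = -1 then (1:ℝ) else 0)]
    norm_num
  · rw [sum_pi_one q (fun s => if s = 0 ∨ s = -1 then (1:ℝ) else 0)]
    show (1/2:ℝ) ≤ ∑ x ∈ ({-1, 0, 1} : Finset ℤ), w q x * (if x = 0 ∨ x = -1 then (1:ℝ) else 0)
    rw [show ({-1, 0, 1} : Finset ℤ) = insert (-1) (insert 0 {1}) from rfl]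
    rw [Finset.sum_insert (by decide), Finset.sum_insert (by decide), Finset.sum_singleton]
    norm_num [w]
    linarith

/-- main anti-concentration estimate -/
lemma caseC (hq0 : 0 < q) (hq2 : q < 1/2) (N r : ℕ) (hr : r ≤ 1) {m : ℤ} (hm : 1 ≤ m)
    (L : ℕ)
    (hcheb : (7:ℝ)/8 ≤ ∑ v ∈ (pi N).filter (fun v => |S v N| ≤ (L:ℤ)), W q v) :
    (49/128 : ℝ) / (2*((((L:ℤ)/m + 1) : ℤ) : ℝ)+1)
      ≤ ∑ v ∈ (pi (N+N+r)).filter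
          (fun v => -m ≤ S v (N+N+r) ∧ S v (N+N+r) ≤ m - 1), W q v := by
  classical
  have hq0' : 0 ≤ q := le_of_lt hq0
  have hq2' : q ≤ 1/2 := le_of_lt hq2
  set K : ℤ := (L:ℤ)/m + 1 with hK
  have hKpos : 1 ≤ K := by
    have : 0 ≤ (L:ℤ)/m := Int.ediv_nonneg (by positivity) (by omega)
    omega
  -- mass of blocks
  have hmass : (7:ℝ)/8 ≤ ∑ i ∈ Finset.Icc (-K) K, PB q N m i := by
    rw [blocks_mass]
    refine le_trans hcheb (Finset.sum_le_sum_of_subset_of_nonneg ?_ ?_)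
    · intro v hv
      rw [Finset.mem_filter] at hv ⊢
      refine ⟨hv.1, ?_⟩
      have hc := block_cover hm hv.2
      rw [Finset.mem_Icc] at hc ⊢
      omega
    · intro v _ _; exact W_nonneg hq0' hq2' v
  -- Cauchy-Schwarz
  have hcard : ((Finset.Icc (-K) K).card : ℝ) = 2*(K:ℝ)+1 := by
    rw [Int.card_Icc]
    have h2 : K + 1 - -K = 2*K + 1 := by ring
    rw [h2]
    have h3 : ((2*K+1).toNat : ℤ) = 2*K+1 := Int.toNat_of_nonneg (by omega)
    have h4 : (((2*K+1).toNat : ℤ) : ℝ) = ((2*K+1 : ℤ) : ℝ) := by exact_mod_cast h3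
    push_cast at h4 ⊢
    linarith
  have hcardpos : (0:ℝ) < 2*(K:ℝ)+1 := by
    have : (1:ℝ) ≤ (K:ℝ) := by exact_mod_cast hKpos
    linarith
  have hCS : ((7:ℝ)/8)^2 / (2*(K:ℝ)+1) ≤ ∑ i ∈ Finset.Icc (-K) K, (PB q N m i)^2 := by
    have h1 : (∑ i ∈ Finset.Icc (-K) K, PB q N m i)^2
        ≤ (2*(K:ℝ)+1) * ∑ i ∈ Finset.Icc (-K) K, (PB q N m i)^2 := by
      rw [← hcard]
      exact sq_sum_le_card_mul_sum_sq
    have h2 : ((7:ℝ)/8)^2 ≤ (∑ i ∈ Finset.Icc (-K) K, PB q N m i)^2 := by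
      apply pow_le_pow_left₀ (by norm_num) hmass
    rw [div_le_iff₀ hcardpos]
    nlinarith
  -- blocks lower bound
  have hblocks := blocks_lower hq0' hq2' N hm K
  -- parity-fixing extension
  set T2 := N + N with hT2
  set F : ℤ → ℤ → ℝ := fun k l => if -m ≤ k + l ∧ k + l ≤ m - 1 then (1:ℝ) else 0 with hF
  have hsplit := split_sum q T2 r F
  have hLHS : ∑ v ∈ pi (T2 + r), W q v * F (S v T2) (S v (T2 + r) - S v T2)
      = ∑ v ∈ (pi (T2+r)).filter
          (fun v => -m ≤ S v (T2+r) ∧ S v (T2+r) ≤ m - 1), W q v := by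
    rw [Finset.sum_filter]
    refine Finset.sum_congr rfl fun v _ => ?_
    have he : S v T2 + (S v (T2 + r) - S v T2) = S v (T2+r) := by ring
    rw [hF]
    simp only [he]
    split_ifs <;> ring
  set G : ℤ → ℤ → ℝ := fun k l =>
    (if |k| ≤ m - 1 then (1:ℝ) else 0) * (if l = 0 ∨ l = -1 then (1:ℝ) else 0) with hG
  have hGF : ∀ a ∈ pi T2, ∀ b ∈ pi r,
      W q a * W q b * G (S a T2) (S b r) ≤ W q a * W q b * F (S a T2) (S b r) := by
    intro a _ b _
    have hWa := W_nonneg hq0' hq2' a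
    have hWb := W_nonneg hq0' hq2' b
    have hF0 : (0:ℝ) ≤ F (S a T2) (S b r) := by
      rw [hF]; dsimp only; split_ifs <;> norm_num
    by_cases hg : |S a T2| ≤ m - 1 ∧ (S b r = 0 ∨ S b r = -1)
    · have hf : -m ≤ S a T2 + S b r ∧ S a T2 + S b r ≤ m - 1 := by
        obtain ⟨h1, h2⟩ := hg
        have h3 := abs_le.1 h1
        rcases h2 with h2 | h2 <;> omega
      have e1 : G (S a T2) (S b r) = 1 := by
        rw [hG]; dsimp only; rw [if_pos hg.1, if_pos hg.2]; ring
      have e2 : F (S a T2) (S b r) = 1 := by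
        rw [hF]; dsimp only; rw [if_pos hf]
      rw [e1, e2]
    · have e1 : G (S a T2) (S b r) = 0 := by
        rw [hG]; dsimp only
        rcases not_and_or.1 hg with h | h
        · rw [if_neg h]; ring
        · rw [if_neg h]; ring
      rw [e1]
      nlinarith [mul_nonneg hWa hWb, mul_nonneg (mul_nonneg hWa hWb) hF0]
  have hGsum : ∑ a ∈ pi T2, ∑ b ∈ pi r, W q a * W q b * G (S a T2) (S b r)
      = (∑ a ∈ (pi T2).filter (fun a => |S a T2| ≤ m - 1), W q a)
        * (∑ b ∈ pi r, W q b * (if S b r = 0 ∨ S b r = -1 then (1:ℝ) else 0)) := by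
    rw [Finset.sum_mul_sum, Finset.sum_filter]
    refine Finset.sum_congr rfl fun a _ => ?_
    by_cases h : |S a T2| ≤ m - 1
    · rw [if_pos h]
      refine Finset.sum_congr rfl fun b _ => ?_
      rw [hG]; dsimp only; rw [if_pos h]; ring
    · rw [if_neg h]
      apply Finset.sum_eq_zero
      intro b _
      rw [hG]; dsimp only; rw [if_neg h]; ring
  have hPos2N : (0:ℝ) ≤ ∑ a ∈ (pi T2).filter (fun a => |S a T2| ≤ m - 1), W q a :=
    Finset.sum_nonneg fun a _ => W_nonneg hq0' hq2' a
  have hchain : (1/2 : ℝ) * ∑ a ∈ (pi T2).filter (fun a => |S a T2| ≤ m - 1), W q a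
      ≤ ∑ v ∈ (pi (T2+r)).filter
          (fun v => -m ≤ S v (T2+r) ∧ S v (T2+r) ≤ m - 1), W q v := by
    rw [← hLHS, hsplit]
    calc (1/2 : ℝ) * ∑ a ∈ (pi T2).filter (fun a => |S a T2| ≤ m - 1), W q a
        ≤ (∑ a ∈ (pi T2).filter (fun a => |S a T2| ≤ m - 1), W q a)
          * (∑ b ∈ pi r, W q b * (if S b r = 0 ∨ S b r = -1 then (1:ℝ) else 0)) := by
          rw [mul_comm (1/2 : ℝ) _]
          exact mul_le_mul_of_nonneg_left (step_factor hq0 hq2 hr) hPos2N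
      _ = ∑ a ∈ pi T2, ∑ b ∈ pi r, W q a * W q b * G (S a T2) (S b r) := hGsum.symm
      _ ≤ ∑ a ∈ pi T2, ∑ b ∈ pi r, W q a * W q b * F (S a T2) (S b r) :=
          Finset.sum_le_sum fun a ha => Finset.sum_le_sum fun b hb => hGF a ha b hb
  -- combine everything
  have hfinal : (49/128 : ℝ) / (2*(K:ℝ)+1)
      ≤ (1/2 : ℝ) * ∑ a ∈ (pi T2).filter (fun a => |S a T2| ≤ m - 1), W q a := by
    have h1 : ((7:ℝ)/8)^2 / (2*(K:ℝ)+1)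
        ≤ ∑ a ∈ (pi T2).filter (fun a => |S a T2| ≤ m - 1), W q a :=
      le_trans hCS hblocks
    have h2 : (49/128 : ℝ) / (2*(K:ℝ)+1) = (1/2) * (((7:ℝ)/8)^2 / (2*(K:ℝ)+1)) := by
      field_simp
      ring
    rw [h2]
    linarith
  exact le_trans hfinal hchain



lemma good_eq (q : ℝ) {m : ℤ} (hm : 1 ≤ m) :
    ∑ v ∈ (pi T).filter (fun v => ¬ Hit m v), W q v
      = ∑ v ∈ (pi T).filter (fun v => -m ≤ S v T ∧ S v T ≤ m - 1), W q v := by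
  classical
  have htot : ∑ v ∈ (pi T).filter (fun v => Hit m v), W q v
      + ∑ v ∈ (pi T).filter (fun v => ¬ Hit m v), W q v = 1 := by
    rw [Finset.sum_filter_add_sum_filter_not, sum_W_pi]
  have hrefl := reflection_identity (T := T) q m hm
  have hpart1 : ∑ v ∈ (pi T).filter (fun v => m ≤ S v T), W q v
      + ∑ v ∈ (pi T).filter (fun v => ¬ (m ≤ S v T)), W q v = 1 := by
    rw [Finset.sum_filter_add_sum_filter_not, sum_W_pi]
  have hpart2 : ∑ v ∈ (pi T).filter (fun v => ¬ (m ≤ S v T)), W q v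
      = ∑ v ∈ (pi T).filter (fun v => -m ≤ S v T ∧ S v T ≤ m - 1), W q v
        + ∑ v ∈ (pi T).filter (fun v => S v T ≤ -m-1), W q v := by
    rw [← Finset.sum_filter_add_sum_filter_not ((pi T).filter (fun v => ¬ (m ≤ S v T)))
      (fun v => -m ≤ S v T), Finset.filter_filter, Finset.filter_filter]
    congr 1
    · apply Finset.sum_congr _ (fun _ _ => rfl)
      apply Finset.filter_congr
      intro v _
      omega
    · apply Finset.sum_congr _ (fun _ _ => rfl)
      apply Finset.filter_congr
      intro v _
      omega
  have hneg : ∑ v ∈ (pi T).filter (fun v => S v T ≤ -m-1), W q v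
      = ∑ v ∈ (pi T).filter (fun v => m+1 ≤ S v T), W q v := by
    have h := neg_symm (T := T) q (fun s => s ≤ -m-1)
    rw [h]
    apply Finset.sum_congr _ (fun _ _ => rfl)
    apply Finset.filter_congr
    intro v _
    omega
  linarith

/-- the master combinatorial bound -/
theorem main_comb (hq0 : 0 < q) (hq2 : q < 1/2) (m n : ℕ) (hm : 1 ≤ m) (hn : 1 < n) :
    1 - Real.exp (-(m:ℝ) / (72 * (n:ℝ))) ≤
      ∑ v ∈ (pi (n^2 - 1)).filter (fun v => ¬ Hit (m:ℤ) v), W q v := by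
  classical
  have hq0' : 0 ≤ q := le_of_lt hq0
  have hq2' : q ≤ 1/2 := le_of_lt hq2
  have hn0 : (0:ℝ) < (n:ℝ) := by positivity
  have hTbig : 3 ≤ n^2 - 1 := by
    have h2n : 2 ≤ n := hn
    have h4 : 2*2 ≤ n*n := Nat.mul_le_mul h2n h2n
    have hsq : n^2 = n*n := sq n
    omega
  set T : ℕ := n^2 - 1 with hT
  by_cases hcase : n^2 ≤ m
  -- trivial regime: the walk cannot reach m at all
  · have hfull : (pi T).filter (fun v => ¬ Hit (m:ℤ) v) = pi T := by
      apply Finset.filter_eq_self.2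
      intro v hv
      rintro ⟨t, ht1, ht2, ht3⟩
      have habs := abs_le.1 (abs_S_le hv t)
      have : (t:ℤ) ≤ (T:ℤ) := by exact_mod_cast ht2
      have hmn : (n:ℤ)^2 ≤ (m:ℤ) := by exact_mod_cast hcase
      have hTn : (T:ℤ) = (n:ℤ)^2 - 1 := by
        rw [hT]
        push_cast [Nat.cast_sub (by nlinarith : 1 ≤ n^2)]
        ring
      omega
    rw [hfull, sum_W_pi]
    have := Real.exp_nonneg (-(m:ℝ) / (72 * (n:ℝ)))
    linarith
  · push_neg at hcase
    have htot : ∑ v ∈ (pi T).filter (fun v => Hit (m:ℤ) v), W q v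
        + ∑ v ∈ (pi T).filter (fun v => ¬ Hit (m:ℤ) v), W q v = 1 := by
      rw [Finset.sum_filter_add_sum_filter_not, sum_W_pi]
    by_cases hbig : 4 * n ≤ m
    -- Hoeffding regime
    · have hrefl := reflection_identity (T := T) q (m:ℤ) (by exact_mod_cast hm)
      have hlam0 : (0:ℝ) ≤ 1 / (n:ℝ) := by positivity
      have hlam1 : 1 / (n:ℝ) ≤ 1 := by
        rw [div_le_one hn0]
        exact_mod_cast hn.le
      have hbd1 := hoeffding (T := T) hq0' hq2' hlam0 hlam1 (m:ℤ)
      push_cast at hbd1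
      have hsub : ∑ v ∈ (pi T).filter (fun v => (m:ℤ)+1 ≤ S v T), W q v
          ≤ ∑ v ∈ (pi T).filter (fun v => (m:ℤ) ≤ S v T), W q v := by
        apply Finset.sum_le_sum_of_subset_of_nonneg
        · intro v hv
          rw [Finset.mem_filter] at hv ⊢
          exact ⟨hv.1, by omega⟩
        · intro v _ _; exact W_nonneg hq0' hq2' v
      -- numeric work
      have hTr : (T:ℝ) ≤ (n:ℝ)^2 := by
        have : (T:ℕ) ≤ n^2 := by omega
        exact_mod_cast this
      have hm4 : 4 * (n:ℝ) ≤ (m:ℝ) := by exact_mod_cast hbig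
      have harg : (T:ℝ) * (1/(n:ℝ))^2 - (1/(n:ℝ)) * (m:ℝ) ≤ 1 - (m:ℝ)/(n:ℝ) := by
        have h1 : (T:ℝ) * (1/(n:ℝ))^2 ≤ 1 := by
          calc (T:ℝ) * (1/(n:ℝ))^2 ≤ (n:ℝ)^2 * (1/(n:ℝ))^2 :=
                mul_le_mul_of_nonneg_right hTr (by positivity)
            _ = 1 := by field_simp
        have h2 : (1/(n:ℝ)) * (m:ℝ) = (m:ℝ)/(n:ℝ) := by ring
        linarith
      set x := (m:ℝ) with hx
      set nn := (n:ℝ) with hnn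
      have hxn : (4:ℝ) ≤ x / nn := by
        rw [le_div_iff₀ hn0]
        linarith
      have hexp1 : ∑ v ∈ (pi T).filter (fun v => (m:ℤ) ≤ S v T), W q v
          ≤ Real.exp (1 - x/nn) := by
        refine le_trans hbd1 (Real.exp_le_exp.2 ?_)
        have h2 : (1/nn) * x = x/nn := by ring
        linarith [harg]
      have hkey : 2 * Real.exp (1 - x/nn) ≤ Real.exp (-x / (72 * nn)) := by
        have hfrac : x / (72*nn) = (x/nn)/72 := by
          rw [div_div, mul_comm]
        have harg2 : (1:ℝ) ≤ (-x / (72*nn)) - (1 - x/nn) := by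
          rw [neg_div, hfrac]
          linarith [hxn]
        have e := Real.add_one_le_exp ((-x / (72*nn)) - (1 - x/nn))
        have h2 : 2 ≤ Real.exp ((-x / (72*nn)) - (1 - x/nn)) := by linarith
        calc 2 * Real.exp (1 - x/nn)
            ≤ Real.exp ((-x / (72*nn)) - (1 - x/nn)) * Real.exp (1 - x/nn) :=
              mul_le_mul_of_nonneg_right h2 (Real.exp_nonneg _)
          _ = Real.exp (-x / (72*nn)) := by rw [← Real.exp_add]; ring_nf
      have hHit : ∑ v ∈ (pi T).filter (fun v => Hit (m:ℤ) v), W q v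
          ≤ Real.exp (-x/(72*nn)) := by
        rw [hrefl]
        linarith [hsub, hexp1]
      linarith [htot, hHit]
    · push_neg at hbig
      obtain ⟨N, r, hr, hNT, hN2⟩ : ∃ N r, r ≤ 1 ∧ T = N + N + r ∧ 2*N ≤ n^2 := by
        refine ⟨T/2, T % 2, by omega, by omega, by omega⟩
      set x := (m:ℝ) with hx
      set nn := (n:ℝ) with hnn
      have hxpos : (0:ℝ) < x := by
        rw [hx]
        have : (1:ℝ) ≤ (m:ℝ) := by exact_mod_cast hm
        linarith
      -- Chebyshev at half length
      have hcheb : (7:ℝ)/8 ≤ ∑ v ∈ (pi N).filter (fun v => |S v N| ≤ ((2*n : ℕ):ℤ)), W q v := by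
        have htail := chebyshev (T := N) hq0' hq2' (2*n)
        have htotN : ∑ v ∈ (pi N).filter (fun v => |S v N| ≤ ((2*n:ℕ):ℤ)), W q v
            + ∑ v ∈ (pi N).filter (fun v => ¬ |S v N| ≤ ((2*n:ℕ):ℤ)), W q v = 1 := by
          rw [Finset.sum_filter_add_sum_filter_not, sum_W_pi]
        have hnum : 2*q*(N:ℝ) / (((2*n:ℕ):ℝ)+1)^2 ≤ 1/8 := by
          have hNn : 2*(N:ℝ) ≤ nn^2 := by
            have h' : ((2*N : ℕ):ℝ) ≤ ((n^2 : ℕ):ℝ) := by exact_mod_cast hN2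
            push_cast at h'
            linarith
          have hNpos : (0:ℝ) ≤ (N:ℝ) := by positivity
          rw [div_le_iff₀ (by positivity)]
          push_cast
          nlinarith [hn0, sq_nonneg nn]
        linarith
      have hKey := caseC hq0 hq2 N r hr (show (1:ℤ) ≤ (m:ℤ) by exact_mod_cast hm) (2*n) hcheb
      have hgood := good_eq (T := T) q (show (1:ℤ) ≤ (m:ℤ) by exact_mod_cast hm)
      rw [hgood, hNT]
      refine le_trans ?_ hKey
      -- final arithmetic
      set d : ℤ := ((2*n : ℕ):ℤ) / (m:ℤ) with hd
      have hd0 : 0 ≤ d := Int.ediv_nonneg (by positivity) (by exact_mod_cast Nat.zero_le m)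
      have hdx : (d:ℝ) * x ≤ 2*nn := by
        have h' := Int.ediv_mul_le ((2*n : ℕ):ℤ) (show (m:ℤ) ≠ 0 by
          have : (1:ℤ) ≤ (m:ℤ) := by exact_mod_cast hm
          omega)
        have h'' : ((d:ℝ)) * ((m:ℕ):ℝ) ≤ ((2*n:ℕ):ℝ) := by
          rw [hd]
          exact_mod_cast h'
        push_cast at h''
        rw [hx, hnn]
        linarith
      have hdR : (0:ℝ) ≤ (d:ℝ) := by exact_mod_cast hd0
      have hKpos : (0:ℝ) < 2*(((d + 1 : ℤ)):ℝ)+1 := by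
        push_cast
        linarith
      have hyx : 1 - Real.exp (-x / (72 * nn)) ≤ x / (72*nn) := by
        have h1 := Real.add_one_le_exp (-(x / (72*nn)))
        have h2 : -(x / (72*nn)) = -x / (72*nn) := by ring
        rw [h2] at h1
        linarith
      refine le_trans hyx ?_
      rw [div_le_div_iff₀ (by positivity) hKpos]
      push_cast
      have hx4 : x < 4*nn := by
        have : (m:ℝ) < ((4*n : ℕ):ℝ) := by exact_mod_cast hbig
        push_cast at this
        linarith
      nlinarith [hdx, hxpos, hn0]



lemma ofReal_prod {α : Type*} (s : Finset α) (f : α → ℝ) :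
    (∀ i ∈ s, 0 ≤ f i) →
      ∏ i ∈ s, ENNReal.ofReal (f i) = ENNReal.ofReal (∏ i ∈ s, f i) := by
  classical
  induction s using Finset.induction_on with
  | empty => intro _; simp
  | insert a s' hx ih =>
    intro h
    rw [Finset.prod_insert hx, Finset.prod_insert hx,
      ih (fun i hi => h i (Finset.mem_insert_of_mem hi)),
      ← ENNReal.ofReal_mul (h a (Finset.mem_insert_self a s'))]

lemma W_eq_range (q : ℝ) {T : ℕ} (v : Fin T → ℤ) :
    W q v = ∏ i ∈ Finset.range T, w q (ext v i) := by
  rw [W, ← Fin.prod_univ_eq_prod_range (fun i => w q (ext v i)) T]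
  refine Finset.prod_congr rfl fun i _ => ?_
  simp [ext, i.isLt]

end T6

/-- There is an absolute constant `0 < c ≤ 1/2` such that for every `q ∈ (0, 1/2)`, every
positive integer `m` and every integer `n > 1`, the hitting time `τ'_m` of `m` by the lazy
simple random walk on `ℤ` with parameter `q` satisfies `P(τ'_m ≥ n²) ≥ 1 - exp(-c m / n)`.
The event `τ'_m ≥ n²` is expressed as: the walk does not hit `m` at any positive time
`t < n²`. -/
theorem thm6 :
    ∃ c : ℝ, 0 < c ∧ c ≤ 1 / 2 ∧
      ∀ q : ℝ, 0 < q → q < 1 / 2 →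
        ∀ {Ω : Type} [MeasurableSpace Ω] (μ : Measure Ω), ∀ _ : IsProbabilityMeasure μ,
          ∀ Y : ℕ → Ω → ℤ, (∀ i, Measurable (Y i)) →
            iIndepFun Y μ →
            (∀ i, μ {ω | Y i ω = 1} = ENNReal.ofReal q ∧
                  μ {ω | Y i ω = -1} = ENNReal.ofReal q ∧
                  μ {ω | Y i ω = 0} = ENNReal.ofReal (1 - 2 * q)) →
            ∀ m : ℕ, 1 ≤ m → ∀ n : ℕ, 1 < n →
              ENNReal.ofReal (1 - Real.exp (-(c * m) / n)) ≤
                μ {ω | ∀ t : ℕ, 1 ≤ t → t < n ^ 2 →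
                    (∑ i ∈ Finset.range t, Y i ω) ≠ (m : ℤ)} := by
  classical
  refine ⟨1/72, by norm_num, by norm_num, ?_⟩
  intro q hq0 hq2 Ω _ μ _ Y hYmeas hYindep hYlaw m hm n hn
  set T : ℕ := n^2 - 1 with hT
  set C : (Fin T → ℤ) → Set Ω := fun v => ⋂ i ∈ Finset.range T, Y i ⁻¹' {T6.ext v i} with hC
  have hCmeas : ∀ v, MeasurableSet (C v) := by
    intro v
    rw [hC]
    exact MeasurableSet.biInter (Set.to_countable _)
      (fun i _ => hYmeas i (measurableSet_singleton _))
  have hlaw : ∀ (i : ℕ) (x : ℤ), x ∈ T6.steps →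
      μ (Y i ⁻¹' {x}) = ENNReal.ofReal (T6.w q x) := by
    intro i x hx
    obtain ⟨h1, h2, h3⟩ := hYlaw i
    have hpre : ∀ z : ℤ, Y i ⁻¹' {z} = {ω | Y i ω = z} := by
      intro z
      ext ω
      simp [Set.mem_preimage]
    rcases T6.mem_steps.1 hx with h | h | h <;> subst h
    · rw [hpre, h2]
      norm_num [T6.w]
    · rw [hpre, h3]
      norm_num [T6.w]
    · rw [hpre, h1]
      norm_num [T6.w]
  have hCmes : ∀ v ∈ T6.pi T, μ (C v) = ENNReal.ofReal (T6.W q v) := by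
    intro v hv
    rw [hC]
    rw [hYindep.measure_inter_preimage_eq_mul (Finset.range T)
      (fun i _ => measurableSet_singleton _)]
    have h1 : ∀ i ∈ Finset.range T, μ (Y i ⁻¹' {T6.ext v i})
        = ENNReal.ofReal (T6.w q (T6.ext v i)) := by
      intro i _
      apply hlaw
      rcases T6.ext_mem hv i with h | h
      · rw [h]; exact T6.mem_steps.2 (Or.inr (Or.inl rfl))
      · exact h
    rw [Finset.prod_congr rfl h1,
      T6.ofReal_prod _ _ (fun i _ => T6.w_nonneg hq0.le hq2.le _), ← T6.W_eq_range]
  set G : Finset (Fin T → ℤ) := (T6.pi T).filter (fun v => ¬ T6.Hit (m:ℤ) v) with hG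
  have hmemC : ∀ v (ω : Ω), ω ∈ C v → ∀ i : ℕ, i < T → Y i ω = T6.ext v i := by
    intro v ω hω i hi
    rw [hC] at hω
    have := Set.mem_iInter₂.1 hω i (Finset.mem_range.2 hi)
    simpa using this
  have hdisj : (↑G : Set (Fin T → ℤ)).PairwiseDisjoint C := by
    intro v1 _ v2 _ hvne
    simp only [Function.onFun]
    rw [Set.disjoint_left]
    intro ω hω1 hω2
    apply hvne
    funext i
    have h1 := hmemC v1 ω hω1 (i:ℕ) i.isLt
    have h2 := hmemC v2 ω hω2 (i:ℕ) i.isLt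
    have e1 : T6.ext v1 (i:ℕ) = v1 i := by simp [T6.ext, i.isLt]
    have e2 : T6.ext v2 (i:ℕ) = v2 i := by simp [T6.ext, i.isLt]
    rw [← e1, ← e2, ← h1, ← h2]
  have hsub : (⋃ v ∈ G, C v) ⊆ {ω | ∀ t : ℕ, 1 ≤ t → t < n ^ 2 →
      (∑ i ∈ Finset.range t, Y i ω) ≠ (m : ℤ)} := by
    intro ω hω
    rw [Set.mem_iUnion₂] at hω
    obtain ⟨v, hvG, hωv⟩ := hω
    rw [hG, Finset.mem_filter] at hvG
    obtain ⟨hvpi, hnhit⟩ := hvG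
    intro t ht1 ht2
    have htT : t ≤ T := by
      rw [hT]; omega
    have hsum : ∑ i ∈ Finset.range t, Y i ω = T6.S v t := by
      rw [T6.S]
      refine Finset.sum_congr rfl fun i hi => ?_
      have hiT : i < T := by
        have := Finset.mem_range.1 hi
        omega
      exact hmemC v ω hωv i hiT
    rw [hsum]
    intro hcontra
    exact hnhit ⟨t, ht1, htT, hcontra⟩
  have hmain := T6.main_comb hq0 hq2 m n hm hn
  rw [← hT] at hmain
  calc ENNReal.ofReal (1 - Real.exp (-(1/72 * (m:ℝ))/(n:ℝ)))
      ≤ ENNReal.ofReal (∑ v ∈ G, T6.W q v) := by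
        apply ENNReal.ofReal_le_ofReal
        have hexp : -((1:ℝ)/72 * (m:ℝ))/(n:ℝ) = -(m:ℝ)/(72*(n:ℝ)) := by ring
        rw [hexp]
        exact hmain
    _ = ∑ v ∈ G, ENNReal.ofReal (T6.W q v) :=
        ENNReal.ofReal_sum_of_nonneg (fun v _ => T6.W_nonneg hq0.le hq2.le v)
    _ = ∑ v ∈ G, μ (C v) := by
        refine Finset.sum_congr rfl (fun v hv => ?_)
        have hvpi : v ∈ T6.pi T := (Finset.mem_filter.1 (by rwa [hG] at hv)).1
        exact (hCmes v hvpi).symm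
    _ = μ (⋃ v ∈ G, C v) := (measure_biUnion_finset hdisj (fun v _ => hCmeas v)).symm
    _ ≤ μ {ω | ∀ t : ℕ, 1 ≤ t → t < n ^ 2 →
          (∑ i ∈ Finset.range t, Y i ω) ≠ (m : ℤ)} := measure_mono hsub
end

section
/- Let P be a finite poset and p ∈ (0,1]. Run the Ungarian Markov chain with parameter p on the lattice J(P) of order ideals of P, started at the maximum element P, and let T(J(P)) be the number of steps until the chain reaches the empty ideal ∅. Then T(J(P)) is equal in distribution to max_{C ∈ MC(P)} Σ_{x ∈ C} G_x, where MC(P) is the set of maximal chains of P and (G_x)_{x ∈ P} are i.i.d. geometric random variables with parameter p. -/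
open scoped Classical ENNReal

noncomputable section

namespace Ungarian

variable {L : Type*} [Fintype L]

/-- `y` is covered by `x` with respect to the order relation `le`. -/
def CovRel (le : L → L → Prop) (x y : L) : Prop :=
  le y x ∧ y ≠ x ∧ ∀ z, le y z → le z x → z = y ∨ z = x

/-- The finset of elements covered by `x`. -/
def covFinset (le : L → L → Prop) (x : L) : Finset L :=
  Finset.univ.filter fun y => CovRel le x y

/-- `m` is a greatest lower bound of `S` with respect to `le`. -/
def IsMeetOf (le : L → L → Prop) (S : Set L) (m : L) : Prop :=
  (∀ s ∈ S, le m s) ∧ ∀ z, (∀ s ∈ S, le z s) → le z m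

/-- The meet of `{x} ∪ T`. -/
def meetOf (le : L → L → Prop) (x : L) (T : Finset L) : L :=
  if h : ∃ m, IsMeetOf le (insert x (T : Set L)) m then h.choose else x

/-- One-step transition probabilities of the Ungarian Markov chain with parameter `p`:
from `x`, a random subset `T` of the set of elements covered by `x` is chosen, each element
independently with probability `p`, and the chain moves to the meet of `{x} ∪ T`. -/
def stepProb (p : ℝ) (le : L → L → Prop) (x y : L) : ℝ≥0∞ :=
  ∑ T ∈ (covFinset le x).powerset,
    if meetOf le x T = y then
      ENNReal.ofReal (p ^ T.card * (1 - p) ^ ((covFinset le x).card - T.card))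
    else 0

/-- Distribution after `t` steps started from `x`. -/
def walk (p : ℝ) (le : L → L → Prop) (x : L) : ℕ → L → ℝ≥0∞
  | 0 => fun y => if y = x then 1 else 0
  | t + 1 => fun y => ∑ z : L, walk p le x t z * stepProb p le z y

/-- Probability that the chain started at `x` lies in `S` after `t` steps. -/
def probIn (p : ℝ) (le : L → L → Prop) (x : L) (t : ℕ) (S : Set L) : ℝ≥0∞ :=
  ∑ y ∈ Finset.univ.filter (· ∈ S), walk p le x t y

/-- Expected number of steps until absorption at `bot`, computed as `∑_t P(X_t ≠ bot)`. -/
def expAbsorb (p : ℝ) (le : L → L → Prop) (x bot : L) : ℝ≥0∞ :=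
  ∑' t : ℕ, probIn p le x t {y | y ≠ bot}

end Ungarian

/-- The order ideals (downward closed subsets) of a finite poset `P`. -/
def OrderIdeals (P : Type*) [Fintype P] [PartialOrder P] : Type _ :=
  {S : Finset P // ∀ x ∈ S, ∀ y, y ≤ x → y ∈ S}

noncomputable instance (P : Type*) [Fintype P] [PartialOrder P] : Fintype (OrderIdeals P) :=
  @Subtype.fintype _ _ (Classical.decPred _) _

/-- The maximal order ideal: all of `P`. -/
def topIdeal (P : Type*) [Fintype P] [PartialOrder P] : OrderIdeals P :=
  ⟨Finset.univ, fun _ _ y _ => Finset.mem_univ y⟩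

/-- The minimal order ideal: the empty ideal. -/
def botIdeal (P : Type*) [Fintype P] [PartialOrder P] : OrderIdeals P :=
  ⟨∅, fun x hx => absurd hx (Finset.notMem_empty x)⟩

/-- The mass of a geometric random variable with parameter `p` at `j ∈ {1, 2, 3, …}`. -/
def geomMass (p : ℝ) (j : ℕ) : ℝ≥0∞ :=
  if 1 ≤ j then ENNReal.ofReal ((1 - p) ^ (j - 1) * p) else 0

/-- The finset of maximal chains of a finite poset `P`. -/
def maxChains (P : Type*) [Fintype P] [PartialOrder P] : Finset (Finset P) :=
  Finset.univ.filter fun C : Finset P => IsMaxChain (· ≤ ·) (C : Set P)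

set_option linter.unusedSectionVars false
set_option linter.unusedVariables false
set_option maxHeartbeats 2000000

namespace Thm7Aux
open Finset Ungarian

variable {P : Type} [Fintype P] [PartialOrder P]

/-- maximal elements of a finset -/
def maxIn (s : Finset P) : Finset P := s.filter (fun x => ∀ y ∈ s, x ≤ y → y = x)

lemma mem_maxIn {s : Finset P} {x : P} :
    x ∈ maxIn s ↔ x ∈ s ∧ ∀ y ∈ s, x ≤ y → y = x := by simp [maxIn]

lemma maxIn_subset {s : Finset P} : maxIn s ⊆ s := filter_subset _ _

lemma exists_le_maxIn {s : Finset P} {x : P} (hx : x ∈ s) : ∃ m ∈ maxIn s, x ≤ m := by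
  obtain ⟨m, hm, hmax⟩ := (s.filter (fun y => x ≤ y)).exists_maximal ⟨x, by simp [hx]⟩
  simp only [mem_filter] at hm
  refine ⟨m, mem_maxIn.2 ⟨hm.1, fun y hy hle => ?_⟩, hm.2⟩
  by_contra hne
  exact hne (le_antisymm (hmax (by simp [hy, le_trans hm.2 hle]) hle) hle)

/-- chains inside a finset -/
def chainsOf (s : Finset P) : Finset (Finset P) :=
  s.powerset.filter (fun C => IsChain (· ≤ ·) (C : Set P))

lemma mem_chainsOf {s C : Finset P} :
    C ∈ chainsOf s ↔ C ⊆ s ∧ IsChain (· ≤ ·) (C : Set P) := by simp [chainsOf]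

/-- the max over chains in `s` of the sum of `g` -/
def chainSup (s : Finset P) (g : P → ℕ) : ℕ := (chainsOf s).sup (fun C => ∑ x ∈ C, g x)

lemma le_chainSup {s C : Finset P} (g : P → ℕ) (h : C ∈ chainsOf s) :
    ∑ x ∈ C, g x ≤ chainSup s g := Finset.le_sup (f := fun C => ∑ x ∈ C, g x) h

lemma chainSup_le {s : Finset P} {g : P → ℕ} {n : ℕ}
    (h : ∀ C ∈ chainsOf s, ∑ x ∈ C, g x ≤ n) : chainSup s g ≤ n := Finset.sup_le h

lemma chainSup_empty (g : P → ℕ) : chainSup (∅ : Finset P) g = 0 := by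
  apply Nat.le_antisymm _ (Nat.zero_le _)
  apply chainSup_le
  intro C hC
  rcases mem_chainsOf.1 hC with ⟨hsub, -⟩
  simp [Finset.subset_empty.1 hsub]

lemma one_le_chainSup {s : Finset P} {g : P → ℕ} {x : P} (hx : x ∈ s) (hg : 1 ≤ g x) :
    1 ≤ chainSup s g := by
  have h : ({x} : Finset P) ∈ chainsOf s := by
    refine mem_chainsOf.2 ⟨by simpa using hx, ?_⟩
    simp only [coe_singleton]
    exact Set.Subsingleton.isChain (Set.subsingleton_singleton)
  calc 1 ≤ g x := hg
  _ = ∑ y ∈ ({x} : Finset P), g y := by simp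
  _ ≤ chainSup s g := le_chainSup g h

lemma chainSup_update {s : Finset P} {a : P} (ha : a ∉ s) (g : P → ℕ) (k : ℕ) :
    chainSup s (Function.update g a k) = chainSup s g := by
  unfold chainSup
  apply Finset.sup_congr rfl
  intro C hC
  rcases mem_chainsOf.1 hC with ⟨hsub, -⟩
  apply Finset.sum_congr rfl
  intro x hx
  have : x ≠ a := by rintro rfl; exact ha (hsub hx)
  exact Function.update_of_ne this _ _

lemma chain_maxIn_unique {s C : Finset P} (hC : IsChain (· ≤ ·) (C : Set P))
    {a b : P} (ha : a ∈ C) (hb : b ∈ C) (hma : a ∈ maxIn s) (hmb : b ∈ maxIn s) : a = b := by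
  rcases eq_or_ne a b with h | h
  · exact h
  rcases hC ha hb h with h' | h'
  · exact ((mem_maxIn.1 hma).2 b ((mem_maxIn.1 hmb).1) h').symm ▸ rfl
  · exact (mem_maxIn.1 hmb).2 a ((mem_maxIn.1 hma).1) h'


/-- The key one-step recursion for `chainSup`. -/
lemma chainSup_step {s : Finset P} {g : P → ℕ} (hs : s.Nonempty) (hg : ∀ x ∈ s, 1 ≤ g x) :
    chainSup s g =
      chainSup (s \ (maxIn s).filter (fun x => g x = 1))
        (fun x => if x ∈ maxIn s then g x - 1 else g x) + 1 := by
  set S : Finset P := (maxIn s).filter (fun x => g x = 1) with hSdef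
  set g' : P → ℕ := fun x => if x ∈ maxIn s then g x - 1 else g x with hg'def
  obtain ⟨x₀, hx₀⟩ := hs
  have hone : 1 ≤ chainSup s g := one_le_chainSup hx₀ (hg x₀ hx₀)
  apply Nat.le_antisymm
  · -- ≤ : every chain C in s has ∑ g ≤ chainSup (s\S) g' + 1
    apply chainSup_le
    intro C hC
    rcases mem_chainsOf.1 hC with ⟨hCs, hCchain⟩
    by_cases hCS : ∃ m ∈ C, m ∈ S
    · obtain ⟨m, hmC, hmS⟩ := hCS
      have hmmax : m ∈ maxIn s := (mem_filter.1 hmS).1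
      have hgm : g m = 1 := (mem_filter.1 hmS).2
      have hC' : C.erase m ∈ chainsOf (s \ S) := by
        refine mem_chainsOf.2 ⟨?_, hCchain.mono (by simp [Finset.erase_subset])⟩
        intro x hx
        rcases Finset.mem_erase.1 hx with ⟨hxm, hxC⟩
        refine Finset.mem_sdiff.2 ⟨hCs hxC, fun hxS => ?_⟩
        exact hxm (chain_maxIn_unique hCchain hxC hmC (mem_filter.1 hxS).1 hmmax)
      have hsum : ∑ x ∈ C, g x = (∑ x ∈ C.erase m, g x) + 1 := by
        rw [← Finset.sum_erase_add C g hmC, hgm]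
      have hsum2 : ∑ x ∈ C.erase m, g x = ∑ x ∈ C.erase m, g' x := by
        apply Finset.sum_congr rfl
        intro x hx
        rcases Finset.mem_erase.1 hx with ⟨hxm, hxC⟩
        have : x ∉ maxIn s := by
          intro hxmax
          exact hxm (chain_maxIn_unique hCchain hxC hmC hxmax hmmax)
        simp [hg'def, this]
      rw [hsum, hsum2]
      exact Nat.add_le_add_right (le_chainSup g' hC') 1
    · push_neg at hCS
      have hCs' : C ⊆ s \ S := fun x hx => Finset.mem_sdiff.2 ⟨hCs hx, fun hxS => hCS x hx hxS⟩
      have hC' : C ∈ chainsOf (s \ S) := mem_chainsOf.2 ⟨hCs', hCchain⟩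
      by_cases hmax : ∃ m ∈ C, m ∈ maxIn s
      · obtain ⟨m, hmC, hmmax⟩ := hmax
        have hsum : ∑ x ∈ C, g x ≤ (∑ x ∈ C, g' x) + 1 := by
          rw [← Finset.sum_erase_add C g hmC, ← Finset.sum_erase_add C g' hmC]
          have h1 : ∑ x ∈ C.erase m, g x = ∑ x ∈ C.erase m, g' x := by
            apply Finset.sum_congr rfl
            intro x hx
            rcases Finset.mem_erase.1 hx with ⟨hxm, hxC⟩
            have : x ∉ maxIn s := fun hxmax =>
              hxm (chain_maxIn_unique hCchain hxC hmC hxmax hmmax)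
            simp [hg'def, this]
          rw [h1]
          have : g m ≤ g' m + 1 := by
            simp only [hg'def, if_pos hmmax]
            omega
          omega
        exact le_trans hsum (Nat.add_le_add_right (le_chainSup g' hC') 1)
      · push_neg at hmax
        have hsum : ∑ x ∈ C, g x = ∑ x ∈ C, g' x := by
          apply Finset.sum_congr rfl
          intro x hx
          simp [hg'def, hmax x hx]
        rw [hsum]
        exact le_trans (le_chainSup g' hC') (Nat.le_succ _)
  · -- ≥ : chainSup (s\S) g' + 1 ≤ chainSup s g
    rw [Nat.add_one_le_iff]
    have h0 : (⊥ : ℕ) < chainSup s g := hone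
    rw [chainSup, Finset.sup_lt_iff h0]
    intro C hC
    rw [Nat.lt_iff_add_one_le]
    rcases mem_chainsOf.1 hC with ⟨hCs, hCchain⟩
    have hCsub : C ⊆ s := fun x hx => (Finset.mem_sdiff.1 (hCs hx)).1
    by_cases hmax : ∃ m ∈ C, m ∈ maxIn s
    · -- C contains a maximal element m of s, with g m ≥ 2
      obtain ⟨m, hmC, hmmax⟩ := hmax
      have hmS : m ∉ S := (Finset.mem_sdiff.1 (hCs hmC)).2
      have hgm2 : 2 ≤ g m := by
        have h1 : 1 ≤ g m := hg m (hCsub hmC)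
        have : g m ≠ 1 := fun h => hmS (Finset.mem_filter.2 ⟨hmmax, h⟩)
        omega
      have hsum : (∑ x ∈ C, g' x) + 1 = ∑ x ∈ C, g x := by
        rw [← Finset.sum_erase_add C g hmC, ← Finset.sum_erase_add C g' hmC]
        have h1 : ∑ x ∈ C.erase m, g' x = ∑ x ∈ C.erase m, g x := by
          apply Finset.sum_congr rfl
          intro x hx
          rcases Finset.mem_erase.1 hx with ⟨hxm, hxC⟩
          have : x ∉ maxIn s := fun hxmax =>
            hxm (chain_maxIn_unique hCchain hxC hmC hxmax hmmax)
          simp [hg'def, this]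
        rw [h1]
        have : g' m = g m - 1 := by simp [hg'def, hmmax]
        omega
      rw [hsum]
      exact le_chainSup g (mem_chainsOf.2 ⟨hCsub, hCchain⟩)
    · push_neg at hmax
      rcases Finset.eq_empty_or_nonempty C with rfl | hCne
      · simpa using hone
      · -- extend C by a maximal element above its top
        obtain ⟨m₀, hm₀C, hm₀max⟩ := C.exists_maximal hCne
        have hm₀top : ∀ x ∈ C, x ≤ m₀ := by
          intro x hx
          rcases eq_or_ne x m₀ with rfl | hne
          · exact le_refl x
          rcases hCchain hx hm₀C hne with h | h
          · exact h
          · exact hm₀max hx h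
        obtain ⟨m, hmmax, hm₀m⟩ := exists_le_maxIn (hCsub hm₀C)
        have hmC : m ∉ C := fun hmc => hmax m hmc hmmax
        have hchain' : IsChain (· ≤ ·) ((insert m C : Finset P) : Set P) := by
          rw [Finset.coe_insert]
          exact hCchain.insert (fun b hb _ => Or.inr (le_trans (hm₀top b hb) hm₀m))
        have hC'' : insert m C ∈ chainsOf s := by
          refine mem_chainsOf.2 ⟨?_, hchain'⟩
          intro x hx
          rcases Finset.mem_insert.1 hx with rfl | hx
          · exact (mem_maxIn.1 hmmax).1
          · exact hCsub hx
        have hle : (∑ x ∈ C, g' x) + 1 ≤ ∑ x ∈ insert m C, g x := by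
          rw [Finset.sum_insert hmC]
          have h1 : ∑ x ∈ C, g' x ≤ ∑ x ∈ C, g x := by
            apply Finset.sum_le_sum
            intro x hx
            simp only [hg'def]
            split <;> omega
          have h2 : 1 ≤ g m := hg m (mem_maxIn.1 hmmax).1
          omega
        exact le_trans hle (le_chainSup g hC'')


lemma chainSup_univ (g : P → ℕ) :
    chainSup (univ : Finset P) g = (maxChains P).sup (fun C => ∑ x ∈ C, g x) := by
  apply Nat.le_antisymm
  · apply Finset.sup_le
    intro C hC
    rcases mem_chainsOf.1 hC with ⟨-, hchain⟩
    obtain ⟨M, hMmax, hCM⟩ := hchain.exists_maxChain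
    have hMfin : M.Finite := Set.toFinite M
    have hMmem : hMfin.toFinset ∈ maxChains P := by
      simp only [maxChains, Finset.mem_filter, Finset.mem_univ, true_and]
      rwa [Set.Finite.coe_toFinset]
    have hsub : C ⊆ hMfin.toFinset := by
      intro x hx
      rw [Set.Finite.mem_toFinset]
      exact hCM hx
    calc ∑ x ∈ C, g x ≤ ∑ x ∈ hMfin.toFinset, g x :=
          Finset.sum_le_sum_of_subset hsub
    _ ≤ (maxChains P).sup (fun C => ∑ x ∈ C, g x) :=
          Finset.le_sup (f := fun C => ∑ x ∈ C, g x) hMmem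
  · apply Finset.sup_le
    intro C hC
    have hchain : IsChain (· ≤ ·) (C : Set P) := by
      simp only [maxChains, Finset.mem_filter] at hC
      exact hC.2.1
    exact Finset.le_sup (f := fun C => ∑ x ∈ C, g x)
      (mem_chainsOf.2 ⟨Finset.subset_univ _, hchain⟩)


open Ungarian

abbrev jle (P : Type) [Fintype P] [PartialOrder P] : OrderIdeals P → OrderIdeals P → Prop :=
  fun A B => A.1 ⊆ B.1

lemma jle_antisymm {A B : OrderIdeals P} (h1 : jle P A B) (h2 : jle P B A) : A = B :=
  Subtype.ext (Finset.Subset.antisymm h1 h2)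

lemma meetOf_eq {x m : OrderIdeals P} {T : Finset (OrderIdeals P)}
    (hm : IsMeetOf (jle P) (insert x (T : Set (OrderIdeals P))) m) :
    meetOf (jle P) x T = m := by
  rw [meetOf, dif_pos ⟨m, hm⟩]
  have hspec := (⟨m, hm⟩ : ∃ m, IsMeetOf (jle P) (insert x (T : Set (OrderIdeals P))) m).choose_spec
  exact jle_antisymm (hm.2 _ (fun s hs => hspec.1 s hs)) (hspec.2 m (fun s hs => hm.1 s hs))

/-- removing a set of maximal elements from an ideal gives an ideal -/
lemma sdiff_ideal (I : OrderIdeals P) {S : Finset P} (hS : S ⊆ maxIn I.1) :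
    ∀ x ∈ I.1 \ S, ∀ y, y ≤ x → y ∈ I.1 \ S := by
  intro x hx y hy
  rcases Finset.mem_sdiff.1 hx with ⟨hxI, hxS⟩
  refine Finset.mem_sdiff.2 ⟨I.2 x hxI y hy, fun hyS => ?_⟩
  have hymax := mem_maxIn.1 (hS hyS)
  have : x = y := hymax.2 x hxI hy
  exact hxS (this ▸ hyS)

def sdIdeal (I : OrderIdeals P) (S : Finset P) (hS : S ⊆ maxIn I.1) : OrderIdeals P :=
  ⟨I.1 \ S, sdiff_ideal I hS⟩

/-- erase a maximal element -/
lemma erase_ideal (I : OrderIdeals P) {m : P} (hm : m ∈ maxIn I.1) :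
    ∀ x ∈ I.1.erase m, ∀ y, y ≤ x → y ∈ I.1.erase m := by
  intro x hx y hy
  rcases Finset.mem_erase.1 hx with ⟨hxm, hxI⟩
  refine Finset.mem_erase.2 ⟨fun hym => ?_, I.2 x hxI y hy⟩
  subst hym
  exact hxm ((mem_maxIn.1 hm).2 x hxI hy)

def eraseIdeal (I : OrderIdeals P) (m : P) : OrderIdeals P :=
  if h : m ∈ maxIn I.1 then ⟨I.1.erase m, erase_ideal I h⟩ else I

lemma eraseIdeal_val {I : OrderIdeals P} {m : P} (h : m ∈ maxIn I.1) :
    (eraseIdeal I m).1 = I.1.erase m := by simp [eraseIdeal, h]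

/-- characterization of the covering relation in J(P) -/
lemma covRel_iff {I Y : OrderIdeals P} :
    CovRel (jle P) I Y ↔ ∃ m ∈ maxIn I.1, Y.1 = I.1.erase m := by
  constructor
  · rintro ⟨hYI, hne, hmin⟩
    have hne' : (I.1 \ Y.1).Nonempty := by
      rw [Finset.sdiff_nonempty]
      intro h
      exact hne (jle_antisymm hYI h)
    obtain ⟨m, hm, hmax⟩ := (I.1 \ Y.1).exists_maximal hne'
    rcases Finset.mem_sdiff.1 hm with ⟨hmI, hmY⟩
    have hmmax : m ∈ maxIn I.1 := by
      refine mem_maxIn.2 ⟨hmI, fun z hz hle => ?_⟩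
      by_contra hzm
      have hlt : m < z := lt_of_le_of_ne hle (fun h => hzm h.symm)
      have hzY : z ∉ Y.1 := by
        intro hzY
        exact hmY (Y.2 z hzY m hle)
      exact lt_irrefl _ (lt_of_lt_of_le hlt (hmax (Finset.mem_sdiff.2 ⟨hz, hzY⟩) hle))
    refine ⟨m, hmmax, ?_⟩
    set W : OrderIdeals P := ⟨I.1.erase m, erase_ideal I hmmax⟩ with hW
    have hYW : jle P Y W := by
      intro x hx
      exact Finset.mem_erase.2 ⟨fun h => hmY (h ▸ hx), hYI hx⟩
    have hWI : jle P W I := fun x hx => (Finset.mem_erase.1 hx).2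
    rcases hmin W hYW hWI with h | h
    · rw [← h]
    · exfalso
      have : m ∈ W.1 := h ▸ hmI
      exact (Finset.mem_erase.1 this).1 rfl
  · rintro ⟨m, hm, hY⟩
    have hmI : m ∈ I.1 := (mem_maxIn.1 hm).1
    refine ⟨?_, ?_, ?_⟩
    · intro x hx
      rw [hY] at hx
      exact (Finset.mem_erase.1 hx).2
    · intro h
      have : m ∈ Y.1 := h ▸ hmI
      rw [hY] at this
      exact (Finset.mem_erase.1 this).1 rfl
    · intro Z hYZ hZI
      by_cases hmZ : m ∈ Z.1
      · right
        apply jle_antisymm hZI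
        intro x hxI
        rcases eq_or_ne x m with rfl | hxm
        · exact hmZ
        · exact hYZ (hY ▸ Finset.mem_erase.2 ⟨hxm, hxI⟩)
      · left
        apply jle_antisymm
        · intro x hxZ
          rw [hY]
          exact Finset.mem_erase.2 ⟨fun h => hmZ (h ▸ hxZ), hZI hxZ⟩
        · exact hYZ

lemma covFinset_eq (I : OrderIdeals P) :
    covFinset (jle P) I = (maxIn I.1).image (eraseIdeal I) := by
  ext Y
  simp only [covFinset, Finset.mem_filter, Finset.mem_univ, true_and, Finset.mem_image]
  rw [covRel_iff]
  constructor
  · rintro ⟨m, hm, hY⟩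
    exact ⟨m, hm, Subtype.ext (by rw [eraseIdeal_val hm, hY])⟩
  · rintro ⟨m, hm, rfl⟩
    exact ⟨m, hm, eraseIdeal_val hm⟩

lemma eraseIdeal_injOn (I : OrderIdeals P) :
    Set.InjOn (eraseIdeal I) (maxIn I.1 : Set P) := by
  intro a ha b hb hab
  simp only [Finset.mem_coe] at ha hb
  have h1 : I.1.erase a = I.1.erase b := by
    rw [← eraseIdeal_val ha, ← eraseIdeal_val hb, hab]
  exact Finset.erase_injOn I.1 ((mem_maxIn.1 ha).1) ((mem_maxIn.1 hb).1) h1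

lemma meetOf_image {I : OrderIdeals P} {S : Finset P} (hS : S ⊆ maxIn I.1) :
    meetOf (jle P) I (S.image (eraseIdeal I)) = sdIdeal I S hS := by
  apply meetOf_eq
  constructor
  · intro J hJ
    rcases Set.mem_insert_iff.1 hJ with rfl | hJ
    · exact Finset.sdiff_subset
    · rw [Finset.coe_image] at hJ
      obtain ⟨m, hm, rfl⟩ := hJ
      simp only [Finset.mem_coe] at hm
      intro x hx
      rcases Finset.mem_sdiff.1 hx with ⟨hxI, hxS⟩
      rw [eraseIdeal_val (hS hm)]
      exact Finset.mem_erase.2 ⟨fun h => hxS (h ▸ hm), hxI⟩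
  · intro Z hZ
    intro x hxZ
    have hxI : x ∈ I.1 := hZ I (Set.mem_insert _ _) hxZ
    refine Finset.mem_sdiff.2 ⟨hxI, fun hxS => ?_⟩
    have hmem : eraseIdeal I x ∈ (insert I ((S.image (eraseIdeal I)) : Set (OrderIdeals P))) :=
      Set.mem_insert_of_mem _ (by
        rw [Finset.coe_image]
        exact Set.mem_image_of_mem _ (Finset.mem_coe.2 hxS))
    have := hZ _ hmem hxZ
    rw [eraseIdeal_val (hS hxS)] at this
    exact (Finset.mem_erase.1 this).1 rfl

/-- the step probability from an ideal, as a sum over subsets of maximal elements -/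
lemma stepProb_eq (p : ℝ) (I J : OrderIdeals P) :
    stepProb p (jle P) I J =
      ∑ S ∈ (maxIn I.1).powerset,
        if J.1 = I.1 \ S then
          ENNReal.ofReal (p ^ S.card * (1 - p) ^ ((maxIn I.1).card - S.card))
        else 0 := by
  rw [stepProb]
  rw [Finset.sum_bij' (i := fun (S : Finset P) (hS : S ∈ (maxIn I.1).powerset) =>
        S.image (eraseIdeal I))
      (j := fun (T : Finset (OrderIdeals P)) (hT : T ∈ (covFinset (jle P) I).powerset) =>
        (maxIn I.1).filter (fun m => eraseIdeal I m ∈ T))]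
  · -- hi : forward maps into powerset
    intro S hS
    rw [Finset.mem_powerset] at hS ⊢
    rw [covFinset_eq]
    exact Finset.image_subset_image hS
  · -- hj : backward maps into powerset
    intro T hT
    rw [Finset.mem_powerset]
    exact Finset.filter_subset _ _
  · -- left_inv : j (i S) = S
    intro S hS
    rw [Finset.mem_powerset] at hS
    ext m
    simp only [Finset.mem_filter, Finset.mem_image]
    constructor
    · rintro ⟨hmmax, m', hm', heq⟩
      rwa [eraseIdeal_injOn I (Finset.mem_coe.2 (hS hm')) (Finset.mem_coe.2 hmmax) heq] at hm'
    · intro hm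
      exact ⟨hS hm, m, hm, rfl⟩
  · -- right_inv : i (j T) = T
    intro T hT
    rw [Finset.mem_powerset, covFinset_eq] at hT
    ext J'
    simp only [Finset.mem_image, Finset.mem_filter]
    constructor
    · rintro ⟨m, ⟨hmmax, hmT⟩, rfl⟩
      exact hmT
    · intro hJ'
      obtain ⟨m, hmmax, rfl⟩ := Finset.mem_image.1 (hT hJ')
      exact ⟨m, ⟨hmmax, hJ'⟩, rfl⟩
  · -- h : summands agree
    intro S hS
    rw [Finset.mem_powerset] at hS
    have hcard : (S.image (eraseIdeal I)).card = S.card :=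
      Finset.card_image_of_injOn ((eraseIdeal_injOn I).mono (by exact_mod_cast hS))
    have hcov : (covFinset (jle P) I).card = (maxIn I.1).card := by
      rw [covFinset_eq]
      exact Finset.card_image_of_injOn (eraseIdeal_injOn I)
    rw [meetOf_image hS, hcard, hcov]
    congr 1
    · -- the conditions match
      rw [eq_iff_iff]
      constructor
      · intro h
        exact Subtype.ext h.symm
      · intro h
        rw [← h]
        rfl

/-- Chapman–Kolmogorov, conditioning on the first step instead of the last. -/
lemma walk_succ_left {L : Type*} [Fintype L] (p : ℝ) (le : L → L → Prop) (x : L) (t : ℕ) :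
    ∀ y, walk p le x (t + 1) y = ∑ z : L, stepProb p le x z * walk p le z t y := by
  induction t with
  | zero =>
    intro y
    show (∑ z : L, walk p le x 0 z * stepProb p le z y) = _
    have l : ∀ z : L, walk p le x 0 z = if z = x then 1 else 0 := fun _ => rfl
    have r : ∀ z : L, walk p le z 0 y = if y = z then 1 else 0 := fun _ => rfl
    simp only [l, r, ite_mul, mul_ite, one_mul, zero_mul, mul_one, mul_zero,
      Finset.sum_ite_eq' Finset.univ, Finset.sum_ite_eq Finset.univ,
      Finset.mem_univ, if_true]
  | succ t ih =>
    intro y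
    show (∑ z : L, walk p le x (t+1) z * stepProb p le z y) = _
    calc (∑ z : L, walk p le x (t+1) z * stepProb p le z y)
        = ∑ z : L, (∑ w : L, stepProb p le x w * walk p le w t z) * stepProb p le z y := by
          exact Finset.sum_congr rfl (fun z _ => by rw [ih z])
      _ = ∑ z : L, ∑ w : L, stepProb p le x w * walk p le w t z * stepProb p le z y := by
          exact Finset.sum_congr rfl (fun z _ => Finset.sum_mul _ _ _)
      _ = ∑ w : L, ∑ z : L, stepProb p le x w * walk p le w t z * stepProb p le z y :=
          Finset.sum_comm
      _ = ∑ w : L, stepProb p le x w * walk p le w (t+1) y := by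
          refine Finset.sum_congr rfl (fun w _ => ?_)
          show _ = stepProb p le x w * ∑ z : L, walk p le w t z * stepProb p le z y
          rw [Finset.mul_sum]
          exact Finset.sum_congr rfl (fun z _ => by ring)

-- ===== tsum machinery =====
variable {P : Type} [Fintype P]

lemma funsplit_symm_at {a : P} (k : ℕ) (r : {j // j ≠ a} → ℕ) :
    (Equiv.funSplitAt a ℕ).symm (k, r) a = k := by
  simp [Equiv.funSplitAt, Equiv.piSplitAt]

lemma funsplit_symm_update {a : P} (k : ℕ) (r : {j // j ≠ a} → ℕ) :
    (Equiv.funSplitAt a ℕ).symm (k, r) =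
      Function.update ((Equiv.funSplitAt a ℕ).symm (0, r)) a k := by
  funext j
  rcases eq_or_ne j a with rfl | hj
  · rw [Function.update_self, funsplit_symm_at]
  · rw [Function.update_of_ne hj]
    simp [Equiv.funSplitAt, Equiv.piSplitAt, hj]

/-- factor out a single coordinate from a tsum over `P → ℕ` -/
lemma tsum_factor_single {F : (P → ℕ) → ℝ≥0∞} {a : P}
    (hF : ∀ g k, F (Function.update g a k) = F g) (u : ℕ → ℝ≥0∞) :
    ∑' g : P → ℕ, F g * u (g a) =
      (∑' k, u k) * ∑' g : P → ℕ, F g * (if g a = 0 then 1 else 0) := by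
  set e := (Equiv.funSplitAt a ℕ).symm with he
  have key : ∀ (G : (P → ℕ) → ℝ≥0∞), (∑' g : P → ℕ, G g) = ∑' k, ∑' r, G (e (k, r)) := by
    intro G
    rw [← e.tsum_eq G, ENNReal.tsum_prod']
  have hFe : ∀ k r, F (e (k, r)) = F (e (0, r)) := by
    intro k r
    rw [he, funsplit_symm_update, hF]
  rw [key (fun g => F g * u (g a)), key (fun g => F g * (if g a = 0 then 1 else 0))]
  have h1 : ∀ k r, F (e (k,r)) * u ((e (k,r)) a) = F (e (0,r)) * u k := by
    intro k r
    rw [hFe, he, funsplit_symm_at]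
  have h2 : ∀ k r, F (e (k,r)) * (if (e (k,r)) a = 0 then 1 else 0)
      = F (e (0,r)) * (if k = 0 then 1 else 0) := by
    intro k r
    rw [hFe, he, funsplit_symm_at]
  calc (∑' k, ∑' r, F (e (k,r)) * u ((e (k,r)) a))
      = ∑' k, ∑' r, F (e (0,r)) * u k := by
        exact tsum_congr (fun k => tsum_congr (fun r => h1 k r))
    _ = ∑' k, (∑' r, F (e (0,r))) * u k := by
        exact tsum_congr (fun k => ENNReal.tsum_mul_right)
    _ = (∑' r, F (e (0,r))) * ∑' k, u k := by
        rw [← ENNReal.tsum_mul_left]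
    _ = (∑' k, u k) * ∑' r, F (e (0,r)) := mul_comm _ _
    _ = (∑' k, u k) * ∑' k, (if k = 0 then (∑' r, F (e (0,r))) else 0) := by
        rw [tsum_ite_eq]
    _ = (∑' k, u k) * ∑' k, ∑' r, F (e (k,r)) * (if (e (k,r)) a = 0 then 1 else 0) := by
        congr 1
        refine tsum_congr (fun k => ?_)
        have hval : (∑' r, F (e (k,r)) * (if (e (k,r)) a = 0 then 1 else 0))
            = if k = 0 then (∑' r, F (e (0,r))) else 0 := by
          rw [tsum_congr (fun r => h2 k r)]
          rcases eq_or_ne k 0 with rfl | hk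
          · simp
          · simp [hk]
        rw [hval]

/-- factor out the coordinates in a finset `S` from a tsum over `P → ℕ` -/
lemma tsum_factor (S : Finset P) (F : (P → ℕ) → ℝ≥0∞) (u : P → ℕ → ℝ≥0∞)
    (hF : ∀ (g : P → ℕ) (x : P), x ∈ S → ∀ k, F (Function.update g x k) = F g) :
    ∑' g : P → ℕ, F g * ∏ x ∈ S, u x (g x) =
      (∏ x ∈ S, ∑' k, u x k) * ∑' g : P → ℕ, F g * ∏ x ∈ S, (if g x = 0 then 1 else 0) := by
  induction S using Finset.induction_on generalizing F with
  | empty => simp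
  | @insert a S ha ih =>
    have step1 : ∑' g : P → ℕ, F g * ∏ x ∈ insert a S, u x (g x)
        = ∑' g : P → ℕ, (F g * ∏ x ∈ S, u x (g x)) * u a (g a) := by
      refine tsum_congr (fun g => ?_)
      rw [Finset.prod_insert ha]
      ring
    rw [step1]
    have hF' : ∀ (g : P → ℕ) k,
        (fun g => F g * ∏ x ∈ S, u x (g x)) (Function.update g a k)
          = (fun g => F g * ∏ x ∈ S, u x (g x)) g := by
      intro g k
      simp only []
      rw [hF g a (Finset.mem_insert_self a S) k]
      congr 1
      refine Finset.prod_congr rfl (fun x hx => ?_)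
      have hxa : x ≠ a := by rintro rfl; exact ha hx
      rw [Function.update_of_ne hxa _ _]
    rw [tsum_factor_single hF' (u a)]
    have step2 : ∑' g : P → ℕ, (F g * ∏ x ∈ S, u x (g x)) * (if g a = 0 then 1 else 0)
        = ∑' g : P → ℕ, (F g * (if g a = 0 then 1 else 0)) * ∏ x ∈ S, u x (g x) := by
      refine tsum_congr (fun g => ?_)
      ring
    rw [step2]
    have hF'' : ∀ (g : P → ℕ) (x : P), x ∈ S → ∀ k,
        (fun g => F g * (if g a = 0 then 1 else 0)) (Function.update g x k)
          = (fun g => F g * (if g a = 0 then 1 else 0)) g := by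
      intro g x hx k
      simp only []
      rw [hF g x (Finset.mem_insert_of_mem hx) k]
      congr 1
      have hax : a ≠ x := by rintro rfl; exact ha hx
      rw [Function.update_of_ne hax _ _]
    rw [ih (fun g => F g * (if g a = 0 then 1 else 0)) hF'']
    rw [Finset.prod_insert ha]
    have step3 : ∑' g : P → ℕ, (F g * (if g a = 0 then 1 else 0))
          * ∏ x ∈ S, (if g x = 0 then 1 else 0)
        = ∑' g : P → ℕ, F g * ∏ x ∈ insert a S, (if g x = 0 then 1 else 0) := by
      refine tsum_congr (fun g => ?_)
      rw [Finset.prod_insert ha]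
      ring
    rw [step3]
    ring



section geom
variable {p : ℝ}
lemma geomMass_zero : geomMass p 0 = 0 := by simp [geomMass]

lemma geomMass_succ (hp1 : p ≤ 1) (k : ℕ) :
    geomMass p (k + 1) = (ENNReal.ofReal (1 - p)) ^ k * ENNReal.ofReal p := by
  have h1 : (0:ℝ) ≤ 1 - p := by linarith
  rw [geomMass, if_pos (by omega : 1 ≤ k + 1)]
  simp only [Nat.add_sub_cancel]
  rw [ENNReal.ofReal_mul (by positivity), ENNReal.ofReal_pow h1]

lemma geomMass_one : geomMass p 1 = ENNReal.ofReal p := by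
  simp [geomMass]

lemma geomMass_succ_succ (hp1 : p ≤ 1) (k : ℕ) :
    geomMass p (k + 1 + 1) = ENNReal.ofReal (1 - p) * geomMass p (k + 1) := by
  rw [geomMass_succ hp1 (k+1), geomMass_succ hp1 k, pow_succ]
  ring

lemma geomMass_ne_zero_iff {j : ℕ} (hp0 : 0 < p) (hp1 : p ≤ 1) (hj : geomMass p j ≠ 0) :
    1 ≤ j := by
  by_contra h
  have : j = 0 := by omega
  subst this
  exact hj geomMass_zero

lemma tsum_geomMass (hp0 : 0 < p) (hp1 : p ≤ 1) : ∑' k, geomMass p k = 1 := by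
  have h1 : (0:ℝ) ≤ 1 - p := by linarith
  rw [tsum_eq_zero_add' ENNReal.summable, geomMass_zero, zero_add]
  have : ∀ k : ℕ, geomMass p (k + 1) = (ENNReal.ofReal (1 - p)) ^ k * ENNReal.ofReal p :=
    geomMass_succ hp1
  rw [tsum_congr this, ENNReal.tsum_mul_right, ENNReal.tsum_geometric]
  have hsub : (1 : ℝ≥0∞) - ENNReal.ofReal (1 - p) = ENNReal.ofReal p := by
    rw [← ENNReal.ofReal_one, ← ENNReal.ofReal_sub _ h1]
    norm_num
  rw [hsub]
  rw [ENNReal.inv_mul_cancel]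
  · simp [hp0]
  · exact ENNReal.ofReal_ne_top


end geom

lemma tsum_factor_const (S : Finset P) (F : (P → ℕ) → ℝ≥0∞) (u : ℕ → ℝ≥0∞)
    (hF : ∀ (g : P → ℕ) (x : P), x ∈ S → ∀ k, F (Function.update g x k) = F g) :
    ∑' g : P → ℕ, F g * ∏ x ∈ S, u (g x) =
      (∑' k, u k) ^ S.card * ∑' g : P → ℕ, F g * ∏ x ∈ S, (if g x = 0 then 1 else 0) := by
  have h := tsum_factor S F (fun _ => u) hF
  rwa [Finset.prod_const] at h

lemma tsum_delta :
    ∑' g : P → ℕ, (∏ x : P, if g x = 0 then (1:ℝ≥0∞) else 0) = 1 := by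
  have h : ∀ g : P → ℕ, (∏ x : P, if g x = 0 then (1:ℝ≥0∞) else 0)
      = if g = (fun _ => 0) then 1 else 0 := by
    intro g
    rcases eq_or_ne g (fun _ => 0) with heq | hg
    · rw [if_pos heq]
      subst heq
      simp
    · rw [if_neg hg]
      obtain ⟨x, hx⟩ : ∃ x, g x ≠ 0 := by
        by_contra hc
        push_neg at hc
        exact hg (funext hc)
      exact Finset.prod_eq_zero (Finset.mem_univ x) (if_neg hx)
  rw [tsum_congr h, tsum_ite_eq]

lemma tsum_prod_geomMass {p : ℝ} (hp0 : 0 < p) (hp1 : p ≤ 1) :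
    ∑' g : P → ℕ, ∏ x : P, geomMass p (g x) = 1 := by
  have h := tsum_factor (P := P) Finset.univ (fun _ => (1:ℝ≥0∞)) (fun _ k => geomMass p k)
    (fun g x hx k => rfl)
  simp only [one_mul] at h
  rw [h, tsum_delta, mul_one]
  rw [Finset.prod_congr rfl (fun (x : P) _ => tsum_geomMass hp0 hp1)]
  exact Finset.prod_const_one

end Thm7Aux

namespace Thm7Aux
open Finset Ungarian
variable {P : Type} [Fintype P] [PartialOrder P]

lemma perS {p : ℝ} (hp0 : 0 < p) (hp1 : p ≤ 1) (s : Finset P) (t : ℕ)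
    {S : Finset P} (hS : S ⊆ maxIn s) :
    (∑' h : P → ℕ,
      (if S = (maxIn s).filter (fun x => h x = 0) then (1:ℝ≥0∞) else 0)
      * (if t < chainSup (s \ S) h then (1:ℝ≥0∞) else 0)
      * ∏ x : P, (if x ∈ maxIn s then geomMass p (h x + 1) else geomMass p (h x)))
    = ENNReal.ofReal (p ^ S.card * (1 - p) ^ ((maxIn s).card - S.card)) *
      ∑' h : P → ℕ, (if t < chainSup (s \ S) h then (1:ℝ≥0∞) else 0)
        * ∏ x : P, geomMass p (h x) := by
  have hp1' : (0:ℝ) ≤ 1 - p := by linarith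
  set ν : ℕ → ℝ≥0∞ := fun k => if k = 0 then ENNReal.ofReal p else 0 with hν
  set κ : ℕ → ℝ≥0∞ := fun k => if k = 0 then (0:ℝ≥0∞) else geomMass p (k+1) with hκ
  have κ_eq : ∀ k, κ k = ENNReal.ofReal (1 - p) * geomMass p k := by
    intro k
    cases k with
    | zero => simp [hκ, geomMass_zero]
    | succ k =>
      simp only [hκ]
      rw [if_neg (Nat.succ_ne_zero k), geomMass_succ_succ hp1]
  set G : (P → ℕ) → ℝ≥0∞ := fun h => (if t < chainSup (s \ S) h then (1:ℝ≥0∞) else 0)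
      * ((∏ x ∈ maxIn s \ S, κ (h x)) * ∏ x ∈ Finset.univ \ maxIn s, geomMass p (h x))
    with hG
  have hGupd : ∀ (h : P → ℕ) (x : P), x ∈ S → ∀ k, G (Function.update h x k) = G h := by
    intro h x hx k
    have hxs : x ∉ s \ S := fun hmem => (Finset.mem_sdiff.1 hmem).2 hx
    have h1 : x ∉ maxIn s \ S := fun hmem => (Finset.mem_sdiff.1 hmem).2 hx
    have h2 : x ∉ Finset.univ \ maxIn s := fun hmem => (Finset.mem_sdiff.1 hmem).2 (hS hx)
    rw [hG]
    simp only []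
    rw [chainSup_update hxs]
    congr 1
    congr 1
    · refine Finset.prod_congr rfl (fun y hy => ?_)
      have : x ≠ y := by rintro rfl; exact h1 hy
      rw [Function.update_of_ne this.symm]
    · refine Finset.prod_congr rfl (fun y hy => ?_)
      have : x ≠ y := by rintro rfl; exact h2 hy
      rw [Function.update_of_ne this.symm]
  -- pointwise identity on the left
  have claim1 : ∀ h : P → ℕ,
      (if S = (maxIn s).filter (fun x => h x = 0) then (1:ℝ≥0∞) else 0)
      * (if t < chainSup (s \ S) h then (1:ℝ≥0∞) else 0)
      * ∏ x : P, (if x ∈ maxIn s then geomMass p (h x + 1) else geomMass p (h x))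
      = G h * ∏ x ∈ S, ν (h x) := by
    intro h
    by_cases hmatch : S = (maxIn s).filter (fun x => h x = 0)
    · rw [if_pos hmatch, one_mul]
      have hprod : (∏ x : P, (if x ∈ maxIn s then geomMass p (h x + 1) else geomMass p (h x)))
          = ((∏ x ∈ maxIn s \ S, κ (h x)) * ∏ x ∈ Finset.univ \ maxIn s, geomMass p (h x))
            * ∏ x ∈ S, ν (h x) := by
        have hsplit1 : ∏ x ∈ Finset.univ \ maxIn s,
              (if x ∈ maxIn s then geomMass p (h x + 1) else geomMass p (h x))
            = ∏ x ∈ Finset.univ \ maxIn s, geomMass p (h x) := by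
          refine Finset.prod_congr rfl (fun x hx => ?_)
          rw [if_neg (Finset.mem_sdiff.1 hx).2]
        have hsplit2 : ∏ x ∈ maxIn s \ S,
              (if x ∈ maxIn s then geomMass p (h x + 1) else geomMass p (h x))
            = ∏ x ∈ maxIn s \ S, κ (h x) := by
          refine Finset.prod_congr rfl (fun x hx => ?_)
          rcases Finset.mem_sdiff.1 hx with ⟨hxm, hxS⟩
          rw [if_pos hxm]
          have hne : h x ≠ 0 := by
            intro h0
            apply hxS
            rw [hmatch]
            exact Finset.mem_filter.2 ⟨hxm, h0⟩
          simp only [hκ]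
          rw [if_neg hne]
        have hsplit3 : ∏ x ∈ S,
              (if x ∈ maxIn s then geomMass p (h x + 1) else geomMass p (h x))
            = ∏ x ∈ S, ν (h x) := by
          refine Finset.prod_congr rfl (fun x hx => ?_)
          have hxf : x ∈ (maxIn s).filter (fun y => h y = 0) := by
            rw [← hmatch]; exact hx
          have hx0 : h x = 0 := (Finset.mem_filter.1 hxf).2
          rw [if_pos (hS hx), hx0]
          simp [hν, geomMass_one]
        calc (∏ x : P, (if x ∈ maxIn s then geomMass p (h x + 1) else geomMass p (h x)))
            = (∏ x ∈ Finset.univ \ maxIn s,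
                (if x ∈ maxIn s then geomMass p (h x + 1) else geomMass p (h x)))
              * ∏ x ∈ maxIn s,
                (if x ∈ maxIn s then geomMass p (h x + 1) else geomMass p (h x)) :=
              (Finset.prod_sdiff (Finset.subset_univ _)).symm
          _ = (∏ x ∈ Finset.univ \ maxIn s,
                (if x ∈ maxIn s then geomMass p (h x + 1) else geomMass p (h x)))
              * ((∏ x ∈ maxIn s \ S,
                  (if x ∈ maxIn s then geomMass p (h x + 1) else geomMass p (h x)))
                * ∏ x ∈ S,
                  (if x ∈ maxIn s then geomMass p (h x + 1) else geomMass p (h x))) := by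
              rw [Finset.prod_sdiff hS]
          _ = _ := by
              rw [hsplit1, hsplit2, hsplit3]
              ring
      rw [hprod, hG]
      ring
    · rw [if_neg hmatch]
      have : ∃ x, (x ∈ S ∧ x ∉ (maxIn s).filter (fun y => h y = 0))
          ∨ (x ∈ (maxIn s).filter (fun y => h y = 0) ∧ x ∉ S) := by
        by_contra hc
        push_neg at hc
        apply hmatch
        ext x
        have := hc x
        tauto
      obtain ⟨x, hx | hx⟩ := this
      · -- ν (h x) = 0
        have hx0 : h x ≠ 0 := by
          intro h0
          exact hx.2 (Finset.mem_filter.2 ⟨hS hx.1, h0⟩)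
        have hz : ∏ y ∈ S, ν (h y) = 0 :=
          Finset.prod_eq_zero hx.1 (by simp [hν, hx0])
        rw [hz, mul_zero]
        simp
      · -- κ (h x) = 0
        rcases Finset.mem_filter.1 hx.1 with ⟨hxm, hx0⟩
        have hxmem : x ∈ maxIn s \ S := Finset.mem_sdiff.2 ⟨hxm, hx.2⟩
        have hz : ∏ y ∈ maxIn s \ S, κ (h y) = 0 :=
          Finset.prod_eq_zero hxmem (by simp [hκ, hx0])
        have hG0 : G h = 0 := by
          rw [hG]
          simp only []
          rw [hz, zero_mul, mul_zero]
        rw [hG0]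
        simp
  have hν_sum : (∑' k, ν k) = ENNReal.ofReal p := by
    simp only [hν]
    exact tsum_ite_eq 0 (fun _ => ENNReal.ofReal p)
  -- now the right-hand side
  have claim2 : ∀ h : P → ℕ,
      ENNReal.ofReal (p ^ S.card * (1 - p) ^ ((maxIn s).card - S.card)) *
        ((if t < chainSup (s \ S) h then (1:ℝ≥0∞) else 0) * ∏ x : P, geomMass p (h x))
      = (ENNReal.ofReal p) ^ S.card * (G h * ∏ x ∈ S, geomMass p (h x)) := by
    intro h
    have hcard : (maxIn s).card - S.card = (maxIn s \ S).card := (Finset.card_sdiff_of_subset hS).symm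
    have hw : ENNReal.ofReal (p ^ S.card * (1 - p) ^ ((maxIn s).card - S.card))
        = (ENNReal.ofReal p) ^ S.card
          * (ENNReal.ofReal (1 - p)) ^ (maxIn s \ S).card := by
      rw [ENNReal.ofReal_mul (by positivity), ENNReal.ofReal_pow hp0.le,
        ENNReal.ofReal_pow hp1', hcard]
    have hprod : (∏ x : P, geomMass p (h x))
        = (∏ x ∈ Finset.univ \ maxIn s, geomMass p (h x))
          * ((∏ x ∈ maxIn s \ S, geomMass p (h x)) * ∏ x ∈ S, geomMass p (h x)) := by
      rw [← Finset.prod_sdiff (Finset.subset_univ (maxIn s)), Finset.prod_sdiff hS]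
    have hκprod : (ENNReal.ofReal (1 - p)) ^ (maxIn s \ S).card
          * ∏ x ∈ maxIn s \ S, geomMass p (h x)
        = ∏ x ∈ maxIn s \ S, κ (h x) := by
      rw [← Finset.prod_const, ← Finset.prod_mul_distrib]
      exact Finset.prod_congr rfl (fun x _ => (κ_eq (h x)).symm)
    rw [hw, hprod, hG]
    simp only []
    rw [← hκprod]
    ring
  have hR : ENNReal.ofReal (p ^ S.card * (1 - p) ^ ((maxIn s).card - S.card)) *
      (∑' h : P → ℕ, (if t < chainSup (s \ S) h then (1:ℝ≥0∞) else 0)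
        * ∏ x : P, geomMass p (h x))
      = (ENNReal.ofReal p) ^ S.card *
        ∑' h : P → ℕ, G h * ∏ x ∈ S, (if h x = 0 then (1:ℝ≥0∞) else 0) := by
    rw [← ENNReal.tsum_mul_left, tsum_congr claim2, ENNReal.tsum_mul_left,
      tsum_factor_const S G (geomMass p) hGupd, tsum_geomMass hp0 hp1, one_pow, one_mul]
  rw [tsum_congr claim1, tsum_factor_const S G ν hGupd, hν_sum, hR]


lemma gside {p : ℝ} (hp0 : 0 < p) (hp1 : p ≤ 1) (s : Finset P) (t : ℕ) :
    ∑' g : P → ℕ, (if t + 1 < chainSup s g then (1:ℝ≥0∞) else 0) * ∏ x : P, geomMass p (g x)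
      = ∑ S ∈ (maxIn s).powerset,
          ENNReal.ofReal (p ^ S.card * (1 - p) ^ ((maxIn s).card - S.card)) *
          ∑' g : P → ℕ, (if t < chainSup (s \ S) g then (1:ℝ≥0∞) else 0)
            * ∏ x : P, geomMass p (g x) := by
  by_cases hsE : s = ∅
  · subst hsE
    have hmax : maxIn (∅ : Finset P) = ∅ := by simp [maxIn]
    rw [hmax]
    have h1 : ∀ g : P → ℕ, (if t + 1 < chainSup (∅ : Finset P) g then (1:ℝ≥0∞) else 0)
        * ∏ x : P, geomMass p (g x) = 0 := by
      intro g
      rw [chainSup_empty, if_neg (by omega), zero_mul]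
    have h2 : ∀ g : P → ℕ, (if t < chainSup ((∅ : Finset P) \ ∅) g then (1:ℝ≥0∞) else 0)
        * ∏ x : P, geomMass p (g x) = 0 := by
      intro g
      rw [Finset.sdiff_empty, chainSup_empty, if_neg (by omega), zero_mul]
    rw [tsum_congr h1, tsum_zero, Finset.powerset_empty, Finset.sum_singleton,
      tsum_congr h2, tsum_zero, mul_zero]
  · have hsne : s.Nonempty := Finset.nonempty_iff_ne_empty.2 hsE
    set enc : (P → ℕ) → (P → ℕ) :=
      fun h x => if x ∈ maxIn s then h x + 1 else h x with henc
    have henc_inj : Function.Injective enc := by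
      intro h h' heq
      funext x
      have hcf := congrFun heq x
      simp only [henc] at hcf
      by_cases hx : x ∈ maxIn s
      · rw [if_pos hx, if_pos hx] at hcf; omega
      · rwa [if_neg hx, if_neg hx] at hcf
    set F : (P → ℕ) → ℝ≥0∞ :=
      fun g => (if t + 1 < chainSup s g then (1:ℝ≥0∞) else 0) * ∏ x : P, geomMass p (g x)
      with hF
    have hsupp : Function.support F ⊆ Set.range enc := by
      intro g hg
      simp only [Function.mem_support] at hg
      by_contra hgr
      apply hg
      have hex : ∃ x ∈ maxIn s, g x = 0 := by
        by_contra hc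
        push_neg at hc
        apply hgr
        refine ⟨fun x => if x ∈ maxIn s then g x - 1 else g x, ?_⟩
        funext x
        simp only [henc]
        by_cases hx : x ∈ maxIn s
        · rw [if_pos hx, if_pos hx]
          have := hc x hx
          omega
        · rw [if_neg hx, if_neg hx]
      obtain ⟨x, hxm, hx0⟩ := hex
      have hz : geomMass p (g x) = 0 := by rw [hx0]; exact geomMass_zero
      rw [hF]
      simp only []
      rw [Finset.prod_eq_zero (Finset.mem_univ x) hz, mul_zero]
    have hstep1 : (∑' g : P → ℕ, F g) = ∑' h : P → ℕ, F (enc h) :=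
      (henc_inj.tsum_eq hsupp).symm
    have claim0 : ∀ h : P → ℕ, F (enc h)
        = ∑ S ∈ (maxIn s).powerset,
            (if S = (maxIn s).filter (fun x => h x = 0) then (1:ℝ≥0∞) else 0)
            * (if t < chainSup (s \ S) h then (1:ℝ≥0∞) else 0)
            * ∏ x : P, (if x ∈ maxIn s then geomMass p (h x + 1) else geomMass p (h x)) := by
      intro h
      have hS₀ : (maxIn s).filter (fun x => h x = 0) ∈ (maxIn s).powerset :=
        Finset.mem_powerset.2 (Finset.filter_subset _ _)
      rw [Finset.sum_eq_single_of_mem _ hS₀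
        (fun S hS hne => by rw [if_neg hne, zero_mul, zero_mul])]
      rw [if_pos rfl, one_mul]
      have hprod : (∏ x : P, geomMass p (enc h x))
          = ∏ x : P, (if x ∈ maxIn s then geomMass p (h x + 1) else geomMass p (h x)) := by
        refine Finset.prod_congr rfl (fun x _ => ?_)
        simp only [henc]
        by_cases hx : x ∈ maxIn s
        · rw [if_pos hx, if_pos hx]
        · rw [if_neg hx, if_neg hx]
      rw [hF]
      simp only []
      rw [hprod]
      by_cases hz : (∏ x : P, (if x ∈ maxIn s then geomMass p (h x + 1) else geomMass p (h x))) = 0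
      · rw [hz, mul_zero, mul_zero]
      · have hne0 : ∀ x : P,
            (if x ∈ maxIn s then geomMass p (h x + 1) else geomMass p (h x)) ≠ 0 :=
          fun x => Finset.prod_ne_zero_iff.1 hz x (Finset.mem_univ x)
        have henc1 : ∀ x ∈ s, 1 ≤ enc h x := by
          intro x hx
          simp only [henc]
          by_cases hxm : x ∈ maxIn s
          · rw [if_pos hxm]; omega
          · rw [if_neg hxm]
            have hne := hne0 x
            rw [if_neg hxm] at hne
            by_contra hlt
            have hx0 : h x = 0 := by omega
            rw [hx0] at hne
            exact hne geomMass_zero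
        have hkey := chainSup_step hsne henc1
        have hfilt : (maxIn s).filter (fun x => enc h x = 1)
            = (maxIn s).filter (fun x => h x = 0) := by
          refine Finset.filter_congr (fun x hx => ?_)
          simp only [henc, if_pos hx]
          omega
        have hg' : (fun x => if x ∈ maxIn s then enc h x - 1 else enc h x) = h := by
          funext x
          simp only [henc]
          by_cases hx : x ∈ maxIn s
          · simp only [if_pos hx]; omega
          · simp only [if_neg hx]
        rw [hfilt, hg'] at hkey
        rw [hkey]
        have hiff : (t + 1 < chainSup (s \ (maxIn s).filter (fun x => h x = 0)) h + 1)
            ↔ (t < chainSup (s \ (maxIn s).filter (fun x => h x = 0)) h) := by omega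
        rw [if_congr hiff rfl rfl]
    rw [show (∑' g : P → ℕ,
        (if t + 1 < chainSup s g then (1:ℝ≥0∞) else 0) * ∏ x : P, geomMass p (g x))
      = ∑' g : P → ℕ, F g from rfl]
    rw [hstep1, tsum_congr claim0, Summable.tsum_finsetSum (fun _ _ => ENNReal.summable)]
    refine Finset.sum_congr rfl (fun S hS => ?_)
    exact perS hp0 hp1 s t (Finset.mem_powerset.1 hS)


lemma stepProb_bot (p : ℝ) (J : OrderIdeals P) :
    stepProb p (jle P) (botIdeal P) J = if J = botIdeal P then 1 else 0 := by
  rw [stepProb_eq]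
  have hmax : maxIn (botIdeal P).1 = ∅ := by
    rw [show (botIdeal P).1 = (∅ : Finset P) from rfl]
    simp [maxIn]
  rw [hmax, Finset.powerset_empty, Finset.sum_singleton]
  have h1 : (botIdeal P).1 \ (∅ : Finset P) = ∅ := by
    rw [show (botIdeal P).1 = (∅ : Finset P) from rfl]
    simp
  rw [h1]
  have h2 : (J.1 = (∅ : Finset P)) ↔ (J = botIdeal P) := by
    exact ⟨fun h => Subtype.ext h, fun h => by subst h; rfl⟩
  rw [if_congr h2 rfl rfl]
  rcases eq_or_ne J (botIdeal P) with rfl | hne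
  · rw [if_pos rfl, if_pos rfl]
    simp
  · rw [if_neg hne, if_neg hne]

lemma walk_bot (p : ℝ) :
    ∀ (t : ℕ) (J : OrderIdeals P),
      walk p (jle P) (botIdeal P) t J = if J = botIdeal P then 1 else 0 := by
  intro t
  induction t with
  | zero => intro J; rfl
  | succ t ih =>
    intro J
    show (∑ z : OrderIdeals P, walk p (jle P) (botIdeal P) t z * stepProb p (jle P) z J) = _
    rw [Finset.sum_eq_single (botIdeal P) (fun z _ hz => by rw [ih z, if_neg hz, zero_mul])
      (fun hmem => absurd (Finset.mem_univ _) hmem)]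
    rw [ih (botIdeal P), if_pos rfl, one_mul, stepProb_bot]

lemma master {p : ℝ} (hp0 : 0 < p) (hp1 : p ≤ 1) :
    ∀ (t : ℕ) (I : OrderIdeals P),
      (∑ J ∈ Finset.univ.filter (fun J : OrderIdeals P => J ≠ botIdeal P),
          walk p (jle P) I t J)
        = ∑' g : P → ℕ,
            (if t < chainSup I.1 g then (1:ℝ≥0∞) else 0) * ∏ x : P, geomMass p (g x) := by
  intro t
  induction t with
  | zero =>
    intro I
    have hw : ∀ J : OrderIdeals P, walk p (jle P) I 0 J = if J = I then 1 else 0 := fun _ => rfl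
    rw [Finset.sum_congr rfl (fun J _ => hw J), Finset.sum_ite_eq' _ I (fun _ => (1:ℝ≥0∞))]
    by_cases hI : I = botIdeal P
    · subst hI
      rw [if_neg (by simp)]
      have hz : ∀ g : P → ℕ,
          (if 0 < chainSup (botIdeal P).1 g then (1:ℝ≥0∞) else 0) * ∏ x : P, geomMass p (g x)
          = 0 := by
        intro g
        rw [show (botIdeal P).1 = (∅ : Finset P) from rfl, chainSup_empty,
          if_neg (by omega), zero_mul]
      rw [tsum_congr hz, tsum_zero]
    · rw [if_pos (Finset.mem_filter.2 ⟨Finset.mem_univ I, hI⟩)]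
      have hne : I.1.Nonempty := by
        rw [Finset.nonempty_iff_ne_empty]
        intro h
        exact hI (Subtype.ext h)
      obtain ⟨x₀, hx₀⟩ := hne
      have hone : ∀ g : P → ℕ,
          (if 0 < chainSup I.1 g then (1:ℝ≥0∞) else 0) * ∏ x : P, geomMass p (g x)
          = ∏ x : P, geomMass p (g x) := by
        intro g
        by_cases hz : (∏ x : P, geomMass p (g x)) = 0
        · rw [hz, mul_zero]
        · have hg1 : 1 ≤ g x₀ := by
            have hne0 := Finset.prod_ne_zero_iff.1 hz x₀ (Finset.mem_univ x₀)
            by_contra hlt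
            have hx0 : g x₀ = 0 := by omega
            rw [hx0] at hne0
            exact hne0 geomMass_zero
          rw [if_pos (lt_of_lt_of_le Nat.zero_lt_one (one_le_chainSup hx₀ hg1)), one_mul]
      rw [tsum_congr hone, tsum_prod_geomMass hp0 hp1]
  | succ t ih =>
    intro I
    have step1 : (∑ J ∈ Finset.univ.filter (fun J : OrderIdeals P => J ≠ botIdeal P),
        walk p (jle P) I (t+1) J)
        = ∑ Z : OrderIdeals P, stepProb p (jle P) I Z *
            ∑' g : P → ℕ, (if t < chainSup Z.1 g then (1:ℝ≥0∞) else 0)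
              * ∏ x : P, geomMass p (g x) := by
      rw [Finset.sum_congr rfl (fun J _ => walk_succ_left p (jle P) I t J)]
      rw [Finset.sum_comm]
      refine Finset.sum_congr rfl (fun Z _ => ?_)
      rw [← Finset.mul_sum, ih Z]
    rw [step1]
    have step2 : (∑ Z : OrderIdeals P, stepProb p (jle P) I Z *
          ∑' g : P → ℕ, (if t < chainSup Z.1 g then (1:ℝ≥0∞) else 0)
            * ∏ x : P, geomMass p (g x))
        = ∑ S ∈ (maxIn I.1).powerset,
            ENNReal.ofReal (p ^ S.card * (1 - p) ^ ((maxIn I.1).card - S.card)) *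
            ∑' g : P → ℕ, (if t < chainSup (I.1 \ S) g then (1:ℝ≥0∞) else 0)
              * ∏ x : P, geomMass p (g x) := by
      rw [Finset.sum_congr rfl (fun Z _ => by rw [stepProb_eq p I Z, Finset.sum_mul])]
      rw [Finset.sum_comm]
      refine Finset.sum_congr rfl (fun S hS => ?_)
      have hSm : S ⊆ maxIn I.1 := Finset.mem_powerset.1 hS
      have hcond : ∀ Z : OrderIdeals P, (Z.1 = I.1 \ S) ↔ (Z = sdIdeal I S hSm) := by
        intro Z
        exact ⟨fun h => Subtype.ext h, fun h => by subst h; rfl⟩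
      have hsummand : ∀ Z : OrderIdeals P,
          (if Z.1 = I.1 \ S then
              ENNReal.ofReal (p ^ S.card * (1 - p) ^ ((maxIn I.1).card - S.card)) else 0) *
            (∑' g : P → ℕ, (if t < chainSup Z.1 g then (1:ℝ≥0∞) else 0)
              * ∏ x : P, geomMass p (g x))
          = if Z = sdIdeal I S hSm then
              ENNReal.ofReal (p ^ S.card * (1 - p) ^ ((maxIn I.1).card - S.card)) *
              (∑' g : P → ℕ, (if t < chainSup Z.1 g then (1:ℝ≥0∞) else 0)
                * ∏ x : P, geomMass p (g x)) else 0 := by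
        intro Z
        rw [if_congr (hcond Z) rfl rfl, ite_mul, zero_mul]
      rw [Finset.sum_congr rfl (fun Z _ => hsummand Z),
        Finset.sum_ite_eq' Finset.univ (sdIdeal I S hSm), if_pos (Finset.mem_univ _)]
      rfl
    rw [step2, ← gside hp0 hp1 I.1 t]

end Thm7Aux


/-- The hitting time of the empty ideal by the Ungarian Markov chain on `J(P)` started at the
full ideal `P` is equal in distribution to `max_{C ∈ MC(P)} ∑_{x ∈ C} G_x`, where the `G_x`
are i.i.d. geometric random variables with parameter `p`.  Equality in distribution is
expressed by equality of all tail probabilities: for every `t`, the probability that the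
chain has not been absorbed after `t` steps (i.e. `P(T > t)`) equals the probability that
`max_{C ∈ MC(P)} ∑_{x ∈ C} G_x > t`. -/
theorem thm7 (P : Type) [Fintype P] [PartialOrder P] (p : ℝ) (hp0 : 0 < p) (hp1 : p ≤ 1)
    (t : ℕ) :
    Ungarian.probIn p (fun A B : OrderIdeals P => A.1 ⊆ B.1) (topIdeal P) t
        {I : OrderIdeals P | I ≠ botIdeal P} =
      ∑' g : P → ℕ,
        if t < (maxChains P).sup (fun C => ∑ x ∈ C, g x) then ∏ x : P, geomMass p (g x)
        else 0 := by
  have h := Thm7Aux.master (P := P) hp0 hp1 t (topIdeal P)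
  show Ungarian.probIn p (Thm7Aux.jle P) (topIdeal P) t
      {I : OrderIdeals P | I ≠ botIdeal P} = _
  rw [Ungarian.probIn]
  simp only [Set.mem_setOf_eq]
  refine Eq.trans ?_ (h.trans ?_)
  · congr 1
  refine tsum_congr (fun g => ?_)
  have hsup : Thm7Aux.chainSup (topIdeal P).1 g
      = (maxChains P).sup (fun C => ∑ x ∈ C, g x) := by
    rw [show (topIdeal P).1 = (Finset.univ : Finset P) from rfl]
    exact Thm7Aux.chainSup_univ g
  rw [hsup, ite_mul, one_mul, zero_mul]
end
end
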